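/- arXiv:1801.02244 — 4 statements merged into one kernel-verified Lean document; each statement's English description precedes it below -/
import Mathlib

section
/- For all nonnegative integers n, m, k, l the following identity of balanced quantum binomial coefficients holds in ℚ(q): [n+k; m]·[m+l; k] = Σ_{j=0}^{min(m,k)} [l; k−j]·[n; m−j]·[n+l+j; j]. (Equivalently the sum may be taken over all integers j ≥ max(0, m−n); all extra terms vanish by the convention below.) -/
/-!
STATEMENT 0: the q-binomial identity
[n+k; m]·[m+l; k] = Σ_{j=0}^{min(m,k)} [l; k−j]·[n; m−j]·[n+l+j; j]
for balanced quantum binomial coefficients in ℚ(q).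
-/

noncomputable section

open scoped BigOperators

/-- The balanced quantum integer `[n] = (q^n - q^{-n})/(q - q^{-1})` in `ℚ(q)`. -/
def qInt (n : ℕ) : RatFunc ℚ :=
  ((RatFunc.X : RatFunc ℚ) ^ n - (RatFunc.X : RatFunc ℚ)⁻¹ ^ n) /
    ((RatFunc.X : RatFunc ℚ) - (RatFunc.X : RatFunc ℚ)⁻¹)

/-- The balanced quantum factorial `[n]! = ∏_{j=1}^n [j]`. -/
def qFact (n : ℕ) : RatFunc ℚ := ∏ j ∈ Finset.range n, qInt (j + 1)

/-- The balanced quantum binomial coefficient `[a; b]`, equal to `[a]!/([b]!·[a-b]!)`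
when `0 ≤ b ≤ a` and `0` otherwise. -/
def qBinom (a b : ℕ) : RatFunc ℚ :=
  if b ≤ a then qFact a / (qFact b * qFact (a - b)) else 0

namespace QSquareAux

private lemma hX : (RatFunc.X : RatFunc ℚ) ≠ 0 := RatFunc.X_ne_zero

private lemma X_pow_ne_one {s : ℤ} (hs : s ≠ 0) : (RatFunc.X : RatFunc ℚ) ^ s ≠ 1 := by
  have key : ∀ t : ℕ, t ≠ 0 → (RatFunc.X : RatFunc ℚ) ^ (t : ℤ) ≠ 1 := by
    intro t ht h
    rw [zpow_natCast] at h
    have h2 : (Polynomial.X : Polynomial ℚ) ^ t = 1 := by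
      apply RatFunc.algebraMap_injective ℚ
      rw [map_pow, map_one, RatFunc.algebraMap_X]
      exact h
    have := congrArg Polynomial.natDegree h2
    simp [Polynomial.natDegree_X_pow] at this
    exact ht this
  rcases lt_trichotomy s 0 with h | h | h
  · intro hcon
    have : (RatFunc.X : RatFunc ℚ) ^ ((-s).toNat : ℤ) = 1 := by
      rw [Int.toNat_of_nonneg (by omega)]
      rw [zpow_neg]
      rw [hcon]
      simp
    exact key _ (by omega) this
  · omega
  · intro hcon
    have : (RatFunc.X : RatFunc ℚ) ^ ((s).toNat : ℤ) = 1 := by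
      rw [Int.toNat_of_nonneg (by omega)]; exact hcon
    exact key _ (by omega) this

private lemma hd : (RatFunc.X : RatFunc ℚ) - (RatFunc.X : RatFunc ℚ)⁻¹ ≠ 0 := by
  intro h
  have h1 : (RatFunc.X : RatFunc ℚ) = (RatFunc.X : RatFunc ℚ)⁻¹ := sub_eq_zero.mp h
  have h2 : (RatFunc.X : RatFunc ℚ) ^ (2 : ℤ) = 1 := by
    have := congrArg (· * (RatFunc.X : RatFunc ℚ)) h1
    simp only [inv_mul_cancel₀ hX] at this
    rw [show (2:ℤ) = 1+1 by norm_num, zpow_add₀ hX, zpow_one]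
    simpa using this
  exact X_pow_ne_one (by norm_num) h2

/-- Signed balanced quantum integer. -/
def zqInt (t : ℤ) : RatFunc ℚ :=
  ((RatFunc.X : RatFunc ℚ) ^ t - (RatFunc.X : RatFunc ℚ) ^ (-t)) /
    ((RatFunc.X : RatFunc ℚ) - (RatFunc.X : RatFunc ℚ)⁻¹)

lemma zqInt_natCast (t : ℕ) : zqInt (t : ℤ) = qInt t := by
  unfold zqInt qInt
  simp [zpow_neg, zpow_natCast, inv_pow]

lemma zqInt_zero : zqInt 0 = 0 := by simp [zqInt]

lemma zqInt_ne_zero {t : ℤ} (ht : t ≠ 0) : zqInt t ≠ 0 := by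
  unfold zqInt
  rw [div_ne_zero_iff]
  refine ⟨?_, hd⟩
  intro h
  have h1 : (RatFunc.X : RatFunc ℚ) ^ t = (RatFunc.X : RatFunc ℚ) ^ (-t) := sub_eq_zero.mp h
  have h2 : (RatFunc.X : RatFunc ℚ) ^ (t + t) = 1 := by
    rw [zpow_add₀ hX]
    nth_rewrite 2 [h1]
    rw [← zpow_add₀ hX]
    simp
  exact X_pow_ne_one (by omega) h2

lemma qInt_ne_zero {t : ℕ} (ht : t ≠ 0) : qInt t ≠ 0 := by
  rw [← zqInt_natCast]; exact zqInt_ne_zero (by exact_mod_cast ht)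

lemma qFact_ne_zero (t : ℕ) : qFact t ≠ 0 := by
  unfold qFact
  apply Finset.prod_ne_zero_iff.mpr
  intro i _
  exact qInt_ne_zero (Nat.succ_ne_zero i)

lemma qFact_succ (t : ℕ) : qFact (t + 1) = qFact t * qInt (t + 1) :=
  Finset.prod_range_succ _ t

/-- Signed balanced quantum binomial coefficient. -/
def zqBinom (a b : ℤ) : RatFunc ℚ :=
  if 0 ≤ b ∧ b ≤ a then qFact a.toNat / (qFact b.toNat * qFact (a - b).toNat) else 0

lemma zqBinom_natCast (a b : ℕ) : zqBinom (a : ℤ) (b : ℤ) = qBinom a b := by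
  unfold zqBinom qBinom
  by_cases h : b ≤ a
  · rw [if_pos (by omega), if_pos h]
    have e1 : ((a:ℤ)).toNat = a := by omega
    have e2 : ((b:ℤ)).toNat = b := by omega
    have e3 : ((a:ℤ) - (b:ℤ)).toNat = a - b := by omega
    rw [e1, e2, e3]
  · rw [if_neg (by omega), if_neg h]

lemma zqBinom_of_neg {a b : ℤ} (h : b < 0) : zqBinom a b = 0 := by
  unfold zqBinom; rw [if_neg (by omega)]

lemma zqBinom_of_gt {a b : ℤ} (h : a < b) : zqBinom a b = 0 := by
  unfold zqBinom; rw [if_neg (by omega)]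

lemma zqBinom_zero {a : ℤ} (h : 0 ≤ a) : zqBinom a 0 = 1 := by
  unfold zqBinom
  rw [if_pos (by omega)]
  simp only [Int.toNat_zero, sub_zero]
  rw [show qFact 0 = 1 from Finset.prod_range_zero _, one_mul,
    div_self (qFact_ne_zero _)]

lemma zqBinom_self {a : ℤ} : zqBinom a a = if 0 ≤ a then 1 else 0 := by
  unfold zqBinom
  by_cases h : 0 ≤ a
  · rw [if_pos (by omega), if_pos h]
    simp only [sub_self, Int.toNat_zero]
    rw [show qFact 0 = 1 from Finset.prod_range_zero _, mul_one,
      div_self (qFact_ne_zero _)]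
  · rw [if_neg (by omega), if_neg h]

/-- Key absorption: `[b+1]·C(a,b+1) = [a-b]·C(a,b)`. -/
lemma absorb (a b : ℤ) :
    zqInt (b + 1) * zqBinom a (b + 1) = zqInt (a - b) * zqBinom a b := by
  rcases lt_trichotomy b (-1) with hb | hb | hb
  · rw [zqBinom_of_neg (by omega), zqBinom_of_neg (by omega), mul_zero, mul_zero]
  · rw [hb]
    norm_num [zqInt_zero, zqBinom_of_neg (show (-1:ℤ) < 0 by norm_num)]
  · -- b ≥ 0
    rcases lt_trichotomy a b with ha | ha | ha
    · rw [zqBinom_of_gt (by omega), zqBinom_of_gt (by omega), mul_zero, mul_zero]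
    · rw [ha, zqBinom_of_gt (by omega), sub_self, zqInt_zero, mul_zero, zero_mul]
    · -- 0 ≤ b < a : interior case
      set A := a.toNat with hA
      set B := b.toNat with hB
      have haA : a = (A : ℤ) := by omega
      have hbB : b = (B : ℤ) := by omega
      have hBA : B < A := by omega
      have e1 : zqInt (b + 1) = qInt (B + 1) := by
        rw [show b + 1 = ((B + 1 : ℕ) : ℤ) by omega, zqInt_natCast]
      have e2 : zqInt (a - b) = qInt (A - B) := by
        rw [show a - b = ((A - B : ℕ) : ℤ) by omega, zqInt_natCast]
      have e3 : zqBinom a (b + 1) = qFact A / (qFact (B + 1) * qFact (A - B - 1)) := by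
        unfold zqBinom
        rw [if_pos (by omega)]
        rw [show a.toNat = A from rfl, show (b + 1).toNat = B + 1 by omega,
          show (a - (b + 1)).toNat = A - B - 1 by omega]
      have e4 : zqBinom a b = qFact A / (qFact B * qFact (A - B)) := by
        unfold zqBinom
        rw [if_pos (by omega)]
        rw [show a.toNat = A from rfl, show b.toNat = B from rfl,
          show (a - b).toNat = A - B by omega]
      rw [e1, e2, e3, e4, qFact_succ B, show A - B = (A - B - 1) + 1 by omega, qFact_succ]
      have n1 := qFact_ne_zero A
      have n2 := qFact_ne_zero B
      have n3 := qFact_ne_zero (A - B - 1)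
      have n4 : qInt (B + 1) ≠ 0 := qInt_ne_zero (by omega)
      have n5 : qInt (A - B - 1 + 1) ≠ 0 := qInt_ne_zero (by omega)
      field_simp
      ring_nf
      rw [show 1 + (A - B - 1) - 1 = A - B - 1 by omega, mul_inv_cancel₀ n3]

/-- Key absorption 2: `[a+1-b]·C(a+1,b) = [a+1]·C(a,b)`. -/
lemma absorb1 (a b : ℤ) :
    zqInt (a + 1 - b) * zqBinom (a + 1) b = zqInt (a + 1) * zqBinom a b := by
  rcases lt_trichotomy b 0 with hb | hb | hb'
  · rw [zqBinom_of_neg hb, zqBinom_of_neg hb, mul_zero, mul_zero]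
  · -- b = 0
    subst hb
    rcases lt_trichotomy a (-1) with ha | ha | ha
    · rw [zqBinom_of_gt (by omega), zqBinom_of_gt (by omega), mul_zero, mul_zero]
    · rw [ha]; norm_num [zqInt_zero]
    · rw [zqBinom_zero (by omega), zqBinom_zero (by omega), sub_zero]
  · -- b ≥ 1
    by_cases ha : a < b
    · rcases lt_trichotomy (a + 1) b with ha2 | ha2 | ha2
      · rw [zqBinom_of_gt (by omega), zqBinom_of_gt (by omega), mul_zero, mul_zero]
      · rw [show a + 1 - b = 0 by omega, zqInt_zero, zero_mul,
          zqBinom_of_gt (by omega), mul_zero]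
      · omega
    · -- b ≤ a, b ≥ 1 : interior
      set A := a.toNat with hA
      set B := b.toNat with hB
      have e1 : zqInt (a + 1 - b) = qInt (A + 1 - B) := by
        rw [show a + 1 - b = ((A + 1 - B : ℕ) : ℤ) by omega, zqInt_natCast]
      have e2 : zqInt (a + 1) = qInt (A + 1) := by
        rw [show a + 1 = ((A + 1 : ℕ) : ℤ) by omega, zqInt_natCast]
      have e3 : zqBinom (a + 1) b = qFact (A + 1) / (qFact B * qFact (A + 1 - B)) := by
        unfold zqBinom
        rw [if_pos (by omega)]
        rw [show (a + 1).toNat = A + 1 by omega, show b.toNat = B from rfl,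
          show (a + 1 - b).toNat = A + 1 - B by omega]
      have e4 : zqBinom a b = qFact A / (qFact B * qFact (A - B)) := by
        unfold zqBinom
        rw [if_pos (by omega)]
        rw [show a.toNat = A from rfl, show b.toNat = B from rfl,
          show (a - b).toNat = A - B by omega]
      rw [e1, e2, e3, e4, qFact_succ A, show A + 1 - B = (A - B) + 1 by omega, qFact_succ]
      have n1 := qFact_ne_zero A
      have n2 := qFact_ne_zero B
      have n3 := qFact_ne_zero (A - B)
      have n4 : qInt (A + 1) ≠ 0 := qInt_ne_zero (by omega)
      have n5 : qInt (A - B + 1) ≠ 0 := qInt_ne_zero (by omega)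
      field_simp

lemma zqInt_eq (t : ℤ) :
    zqInt t = ((RatFunc.X : RatFunc ℚ) ^ t - ((RatFunc.X : RatFunc ℚ) ^ t)⁻¹) /
      ((RatFunc.X : RatFunc ℚ) - (RatFunc.X : RatFunc ℚ)⁻¹) := by
  rw [zqInt, zpow_neg]

set_option maxHeartbeats 1000000 in
lemma quad_core (a b c d e x : RatFunc ℚ) (ha : a ≠ 0) (hb : b ≠ 0) (hc : c ≠ 0)
    (hd' : d ≠ 0) (he : e ≠ 0) (hx : x ≠ 0) :
    (c*x - (c*x)⁻¹) * (d*e/c - (d*e/c)⁻¹) * (a*x*e/b - (a*x*e/b)⁻¹) * (a*d*x - (a*d*x)⁻¹)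
      + (a*d*e*x/c - (a*d*e*x/c)⁻¹) * (c*x/e - (c*x/e)⁻¹) * (b/e - (b/e)⁻¹) *
        (a*d*e*x - (a*d*e*x)⁻¹)
    = (b*d/c - (b*d/c)⁻¹) * (c*x/e - (c*x/e)⁻¹) * (a*x - (a*x)⁻¹) * (a*d*e*x - (a*d*e*x)⁻¹)
      + (a*d*e/c - (a*d*e/c)⁻¹) * (d*e/c - (d*e/c)⁻¹) * (a*x*e/b - (a*x*e/b)⁻¹) * (e - e⁻¹) := by
  have gsub : ∀ P Q : RatFunc ℚ, P ≠ 0 → Q ≠ 0 → P/Q - (P/Q)⁻¹ = (P*P - Q*Q)/(P*Q) := by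
    intro P Q hP hQ
    rw [inv_div]
    rw [div_sub_div _ _ hQ hP]
    ring_nf
  have gsub1 : ∀ P : RatFunc ℚ, P ≠ 0 → P - P⁻¹ = (P*P - 1*1)/(P*1) := by
    intro P hP
    have := gsub P 1 hP one_ne_zero
    simpa using this
  have n1 : c*x ≠ 0 := mul_ne_zero hc hx
  have n2 : d*e ≠ 0 := mul_ne_zero hd' he
  have n3 : a*x*e ≠ 0 := mul_ne_zero (mul_ne_zero ha hx) he
  have n4 : a*d*x ≠ 0 := mul_ne_zero (mul_ne_zero ha hd') hx
  have n5 : a*d*e*x ≠ 0 := mul_ne_zero (mul_ne_zero (mul_ne_zero ha hd') he) hx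
  have n6 : a*d*e ≠ 0 := mul_ne_zero (mul_ne_zero ha hd') he
  have n7 : b*d ≠ 0 := mul_ne_zero hb hd'
  have n8 : a*x ≠ 0 := mul_ne_zero ha hx
  rw [gsub1 _ n1, gsub _ _ n2 hc, gsub _ _ n3 hb, gsub1 _ n4,
      gsub _ _ n5 hc, gsub _ _ n1 he, gsub _ _ hb he, gsub1 _ n5,
      gsub _ _ n7 hc, gsub1 _ n8, gsub _ _ n6 hc, gsub1 _ he]
  rw [div_mul_div_comm, div_mul_div_comm, div_mul_div_comm,
      div_mul_div_comm, div_mul_div_comm, div_mul_div_comm,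
      div_mul_div_comm, div_mul_div_comm, div_mul_div_comm,
      div_mul_div_comm, div_mul_div_comm, div_mul_div_comm]
  have m1 : (c*x*1) * (d*e*c) * (a*x*e*b) * (a*d*x*1) ≠ 0 := by
    simp only [mul_one]
    exact mul_ne_zero (mul_ne_zero (mul_ne_zero n1 (mul_ne_zero n2 hc)) (mul_ne_zero n3 hb)) n4
  have m2 : (a*d*e*x*c) * (c*x*e) * (b*e) * (a*d*e*x*1) ≠ 0 := by
    simp only [mul_one]
    exact mul_ne_zero (mul_ne_zero (mul_ne_zero (mul_ne_zero n5 hc) (mul_ne_zero n1 he))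
      (mul_ne_zero hb he)) n5
  have m3 : (b*d*c) * (c*x*e) * (a*x*1) * (a*d*e*x*1) ≠ 0 := by
    simp only [mul_one]
    exact mul_ne_zero (mul_ne_zero (mul_ne_zero (mul_ne_zero n7 hc) (mul_ne_zero n1 he)) n8) n5
  have m4 : (a*d*e*c) * (d*e*c) * (a*x*e*b) * (e*1) ≠ 0 := by
    simp only [mul_one]
    exact mul_ne_zero (mul_ne_zero (mul_ne_zero (mul_ne_zero n6 hc) (mul_ne_zero n2 hc))
      (mul_ne_zero n3 hb)) he
  rw [div_add_div _ _ m1 m2, div_add_div _ _ m3 m4, div_eq_div_iff (mul_ne_zero m1 m2) (mul_ne_zero m3 m4)]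
  ring

set_option maxHeartbeats 1000000 in
/-- The four-term quantum integer identity. -/
lemma qint_quad (n m k l j : ℤ) :
    zqInt (k+1) * zqInt (l-k+j) * zqInt (n+1-m+j) * zqInt (n+l+1)
      + zqInt (n+l+j+1-k) * zqInt (k-j+1) * zqInt (m-j) * zqInt (n+l+j+1)
    = zqInt (m+l-k) * zqInt (k-j+1) * zqInt (n+1) * zqInt (n+l+j+1)
      + zqInt (n+l+j-k) * zqInt (l-k+j) * zqInt (n+1-m+j) * zqInt j := by
  set X : RatFunc ℚ := RatFunc.X with hXdef
  set a := X ^ n with hadef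
  set b := X ^ m with hbdef
  set c := X ^ k with hcdef
  set d := X ^ l with hddef
  set e := X ^ j with hedef
  have ha : a ≠ 0 := zpow_ne_zero _ hX
  have hb : b ≠ 0 := zpow_ne_zero _ hX
  have hc : c ≠ 0 := zpow_ne_zero _ hX
  have hd' : d ≠ 0 := zpow_ne_zero _ hX
  have he : e ≠ 0 := zpow_ne_zero _ hX
  have hx : X ≠ 0 := hX
  have E1 : X ^ (k+1) = c * X := by
    rw [zpow_add₀ hx, zpow_one]
  have E2 : X ^ (l-k+j) = d * e / c := by
    rw [zpow_add₀ hx, zpow_sub₀ hx]; ring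
  have E3 : X ^ (n+1-m+j) = a * X * e / b := by
    rw [zpow_add₀ hx, zpow_sub₀ hx, zpow_add₀ hx, zpow_one]; ring
  have E4 : X ^ (n+l+1) = a * d * X := by
    rw [zpow_add₀ hx, zpow_add₀ hx, zpow_one]
  have E5 : X ^ (n+l+j+1-k) = a * d * e * X / c := by
    rw [zpow_sub₀ hx, zpow_add₀ hx, zpow_add₀ hx, zpow_add₀ hx, zpow_one]
  have E6 : X ^ (k-j+1) = c * X / e := by
    rw [zpow_add₀ hx, zpow_sub₀ hx, zpow_one]; ring
  have E7 : X ^ (m-j) = b / e := by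
    rw [zpow_sub₀ hx]
  have E8 : X ^ (n+l+j+1) = a * d * e * X := by
    rw [zpow_add₀ hx, zpow_add₀ hx, zpow_add₀ hx, zpow_one]
  have E9 : X ^ (m+l-k) = b * d / c := by
    rw [zpow_sub₀ hx, zpow_add₀ hx]
  have E10 : X ^ (n+1) = a * X := by
    rw [zpow_add₀ hx, zpow_one]
  have E11 : X ^ (n+l+j-k) = a * d * e / c := by
    rw [zpow_sub₀ hx, zpow_add₀ hx, zpow_add₀ hx]
  have E12 : X ^ (j) = e := rfl
  simp only [zqInt_eq]
  rw [E1, E2, E3, E4, E5, E6, E7, E8, E9, E10, E11, E12]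
  rw [div_mul_div_comm, div_mul_div_comm, div_mul_div_comm,
      div_mul_div_comm, div_mul_div_comm, div_mul_div_comm,
      div_mul_div_comm, div_mul_div_comm, div_mul_div_comm,
      div_mul_div_comm, div_mul_div_comm, div_mul_div_comm,
      ← add_div, ← add_div]
  congr 1
  exact quad_core a b c d e X ha hb hc hd' he hx
/-- The per-term telescoping identity. -/
lemma Estep (n m k l j : ℤ) (hn : 0 ≤ n) (hl : 0 ≤ l) :
    zqInt (k+1) * (zqBinom l (k+1-j) * zqBinom n (m-j) * zqBinom (n+l+j) j)
      + zqInt (n+l+j+1-k) * (zqBinom l (k-j) * zqBinom n (m-j-1) * zqBinom (n+l+j+1) j)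
    = zqInt (m+l-k) * (zqBinom l (k-j) * zqBinom (n+1) (m-j) * zqBinom (n+l+j+1) j)
      + zqInt (n+l+j-k) * (zqBinom l (k+1-j) * zqBinom n (m-j) * zqBinom (n+l+j) (j-1)) := by
  by_cases hj : j = k + 1
  · subst hj
    rw [show k-(k+1) = (-1 : ℤ) by ring]
    rw [zqBinom_of_neg (show (-1:ℤ) < 0 by norm_num)]
    simp only [zero_mul, mul_zero, add_zero, zero_add]
    have habs := absorb (n+l+(k+1)) k
    rw [show n+l+(k+1)-k = n+l+(k+1)-1-k+1 by ring] at habs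
    rw [show n+l+(k+1)-k = n+l+(k+1)-1-k+1 by ring]
    rw [show (k:ℤ)+1-1 = k by ring]
    linear_combination (zqBinom l (k+1-(k+1)) * zqBinom n (m-(k+1))) * habs
  · by_cases hm2 : m - j = n + 1
    · rw [hm2]
      rw [zqBinom_of_gt (show (n:ℤ) < n+1 by omega)]
      simp only [zero_mul, mul_zero, add_zero, zero_add]
      rw [show (n:ℤ)+1-1 = n by ring]
      rw [zqBinom_self, zqBinom_self, if_pos hn, if_pos (show (0:ℤ) ≤ n+1 by omega)]
      rw [show m+l-k = n+l+j+1-k by omega]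
    · have hG1 : zqInt (k+1-j) ≠ 0 := zqInt_ne_zero (by omega)
      have hG2 : zqInt (n+1-m+j) ≠ 0 := zqInt_ne_zero (by omega)
      have hG3 : zqInt (n+l+1) ≠ 0 := zqInt_ne_zero (by omega)
      apply mul_left_cancel₀ (mul_ne_zero (mul_ne_zero hG1 hG2) hG3)
      have A1 := absorb l (k-j)
      rw [show l-(k-j) = l-k+j by ring, show k-j+1 = k+1-j by ring] at A1
      have A2 := absorb1 n (m-j)
      rw [show n+1-(m-j) = n+1-m+j by ring] at A2
      have A3 := absorb1 (n+l+j) j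
      rw [show n+l+j+1-j = n+l+1 by ring] at A3
      have A4 := absorb n (m-j-1)
      rw [show m-j-1+1 = m-j by ring, show n-(m-j-1) = n+1-m+j by ring] at A4
      have A5 := absorb (n+l+j) (j-1)
      rw [show j-1+1 = j by ring, show n+l+j-(j-1) = n+l+1 by ring] at A5
      have Qq := qint_quad n m k l j
      rw [show k-j+1 = k+1-j by ring] at Qq
      linear_combination
        (zqInt (k+1) * zqInt (n+1-m+j) * zqInt (n+l+1) * zqBinom n (m-j) * zqBinom (n+l+j) j
          - zqInt (n+l+j-k) * zqInt (n+1-m+j) * zqInt (n+l+1) * zqBinom n (m-j)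
            * zqBinom (n+l+j) (j-1)) * A1
        + (-(zqInt (m+l-k) * zqInt (k+1-j) * zqInt (n+l+1) * zqBinom l (k-j)
            * zqBinom (n+l+j+1) j)) * A2
        + ((zqInt (n+l+j+1-k) * zqInt (m-j) - zqInt (m+l-k) * zqInt (n+1)) * zqInt (k+1-j)
            * zqBinom l (k-j) * zqBinom n (m-j)) * A3
        + (-(zqInt (n+l+j+1-k) * zqInt (k+1-j) * zqInt (n+l+1) * zqBinom l (k-j)
            * zqBinom (n+l+j+1) j)) * A4
        + (zqInt (n+l+j-k) * zqInt (n+1-m+j) * zqInt (l-k+j) * zqBinom l (k-j)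
            * zqBinom n (m-j)) * A5
        + (zqBinom l (k-j) * zqBinom n (m-j) * zqBinom (n+l+j) j) * Qq

/-- Telescoping auxiliary function. -/
def wfun (n m k l : ℤ) (t : ℕ) : RatFunc ℚ :=
  zqInt (n+l+t-k) * (zqBinom l (k+1-t) * zqBinom n (m-t) * zqBinom (n+l+t) ((t:ℤ)-1))

lemma key (k : ℕ) : ∀ n m l : ℕ,
    zqBinom ((n:ℤ)+k) m * zqBinom ((m:ℤ)+l) k =
      ∑ j ∈ Finset.range (min m k + 1),
        zqBinom l ((k:ℤ)-j) * zqBinom n ((m:ℤ)-j) * zqBinom ((n:ℤ)+l+j) j := by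
  induction k with
  | zero =>
    intro n m l
    simp only [Nat.cast_zero, add_zero, Nat.min_zero, zero_add, Finset.sum_range_one,
      sub_zero]
    rw [zqBinom_zero (by positivity), zqBinom_zero (by positivity),
      zqBinom_zero (by positivity)]
    ring
  | succ k IH =>
    intro n m l
    have hcast : ((k+1 : ℕ) : ℤ) = (k : ℤ) + 1 := by push_cast; ring
    rw [hcast]
    apply mul_left_cancel₀ (zqInt_ne_zero (show ((k:ℤ)+1) ≠ 0 by omega))
    -- LHS
    have HL := absorb ((m:ℤ)+(l:ℤ)) (k:ℤ)
    have IH' := IH (n+1) m l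
    rw [show ((n+1 : ℕ) : ℤ) = (n : ℤ) + 1 by push_cast; ring] at IH'
    -- termwise identity
    have hterm : ∀ j ∈ Finset.range (min m (k+1) + 1),
        zqInt ((k:ℤ)+1) * (zqBinom l ((k:ℤ)+1-j) * zqBinom n ((m:ℤ)-j)
            * zqBinom ((n:ℤ)+l+j) j)
        = zqInt ((m:ℤ)+l-k) * (zqBinom l ((k:ℤ)-j) * zqBinom ((n:ℤ)+1) ((m:ℤ)-j)
            * zqBinom ((n:ℤ)+l+j+1) j)
          + (wfun n m k l j - wfun n m k l (j+1)) := by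
      intro j _
      have hE := Estep (n:ℤ) (m:ℤ) (k:ℤ) (l:ℤ) (j:ℤ) (by positivity) (by positivity)
      have ew : wfun n m k l (j+1)
          = zqInt ((n:ℤ)+l+j+1-k) * (zqBinom l ((k:ℤ)-j) * zqBinom n ((m:ℤ)-j-1)
            * zqBinom ((n:ℤ)+l+j+1) j) := by
        unfold wfun
        push_cast
        rw [show (n:ℤ)+l+((j:ℤ)+1)-k = (n:ℤ)+l+j+1-k by ring,
          show (k:ℤ)+1-((j:ℤ)+1) = (k:ℤ)-j by ring,
          show (m:ℤ)-((j:ℤ)+1) = (m:ℤ)-j-1 by ring,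
          show (n:ℤ)+l+((j:ℤ)+1) = (n:ℤ)+l+j+1 by ring,
          show ((j:ℤ)+1)-1 = (j:ℤ) by ring]
      have ew2 : wfun n m k l j
          = zqInt ((n:ℤ)+l+j-k) * (zqBinom l ((k:ℤ)+1-j) * zqBinom n ((m:ℤ)-j)
            * zqBinom ((n:ℤ)+l+j) ((j:ℤ)-1)) := rfl
      linear_combination hE - ew2 + ew
    rw [Finset.mul_sum, Finset.sum_congr rfl hterm, Finset.sum_add_distrib,
      Finset.sum_range_sub' (fun t => wfun n m k l t)]
    have hw0 : wfun n m k l 0 = 0 := by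
      unfold wfun
      rw [zqBinom_of_neg (show ((0:ℕ):ℤ)-1 < 0 by push_cast <;> omega)]
      ring
    have hwN : wfun n m k l (min m (k+1) + 1) = 0 := by
      rcases le_or_gt m (k+1) with h | h
      · rw [min_eq_left h]
        unfold wfun
        rw [show zqBinom (n:ℤ) ((m:ℤ)-((m+1 : ℕ):ℤ)) = 0 from
          zqBinom_of_neg (by push_cast <;> omega)]
        ring
      · rw [min_eq_right (le_of_lt h)]
        unfold wfun
        rw [show zqBinom (l:ℤ) ((k:ℤ)+1-((k+1+1 : ℕ):ℤ)) = 0 from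
          zqBinom_of_neg (by push_cast <;> omega)]
        ring
    rw [hw0, hwN, sub_zero, add_zero]
    -- assemble LHS
    rw [show zqInt ((k:ℤ)+1) * (zqBinom ((n:ℤ)+((k:ℤ)+1)) m * zqBinom ((m:ℤ)+l) ((k:ℤ)+1))
        = zqBinom ((n:ℤ)+((k:ℤ)+1)) m * (zqInt ((k:ℤ)+1) * zqBinom ((m:ℤ)+l) ((k:ℤ)+1))
        by ring, HL]
    rw [show (n:ℤ)+((k:ℤ)+1) = (n:ℤ)+1+(k:ℤ) by ring]
    rw [show zqBinom ((n:ℤ)+1+k) m * (zqInt ((m:ℤ)+l-k) * zqBinom ((m:ℤ)+l) k)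
        = zqInt ((m:ℤ)+l-k) * (zqBinom ((n:ℤ)+1+k) m * zqBinom ((m:ℤ)+l) k) by ring, IH']
    rw [Finset.mul_sum]
    -- compare the two sums
    have hsum : ∀ N : ℕ, N ≤ min m k + 1 → N ≤ min m (k+1) + 1 →
      True := fun _ _ _ => trivial
    rcases le_or_gt m k with h | h
    · rw [min_eq_left (show m ≤ k + 1 by omega), min_eq_left h]
      apply Finset.sum_congr rfl
      intro j _
      rw [show ((n:ℤ)+1)+l+j = (n:ℤ)+l+j+1 by ring]
    · rw [min_eq_right (show k + 1 ≤ m by omega), min_eq_right (le_of_lt h)]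
      rw [Finset.sum_range_succ (fun j => zqInt ((m:ℤ)+l-k) * (zqBinom l ((k:ℤ)-j)
        * zqBinom ((n:ℤ)+1) ((m:ℤ)-j) * zqBinom ((n:ℤ)+l+j+1) j))]
      rw [show zqBinom (l:ℤ) ((k:ℤ)-((k+1 : ℕ):ℤ)) = 0 from zqBinom_of_neg (by push_cast <;> omega)]
      simp only [zero_mul, mul_zero, add_zero]
      apply Finset.sum_congr rfl
      intro j _
      rw [show ((n:ℤ)+1)+l+j = (n:ℤ)+l+j+1 by ring]

end QSquareAux

theorem qbinom_square_identity (n m k l : ℕ) :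
    qBinom (n + k) m * qBinom (m + l) k =
      ∑ j ∈ Finset.range (min m k + 1),
        qBinom l (k - j) * qBinom n (m - j) * qBinom (n + l + j) j := by
  have h := QSquareAux.key k n m l
  rw [show ((n:ℤ)+k) = ((n+k : ℕ) : ℤ) by push_cast; ring,
      show ((m:ℤ)+l) = ((m+l : ℕ) : ℤ) by push_cast; ring,
      QSquareAux.zqBinom_natCast, QSquareAux.zqBinom_natCast] at h
  rw [h]
  apply Finset.sum_congr rfl
  intro j hj
  have hj' : j ≤ min m k := by
    simpa using Nat.lt_succ_iff.mp (Finset.mem_range.mp hj)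
  have hjk : j ≤ k := le_trans hj' (min_le_right _ _)
  have hjm : j ≤ m := le_trans hj' (min_le_left _ _)
  rw [show ((k:ℤ)-j) = ((k-j : ℕ) : ℤ) by omega,
      show ((m:ℤ)-j) = ((m-j : ℕ) : ℤ) by omega,
      show ((n:ℤ)+l+j) = ((n+l+j : ℕ) : ℤ) by push_cast; ring,
      QSquareAux.zqBinom_natCast, QSquareAux.zqBinom_natCast,
      QSquareAux.zqBinom_natCast]

end
end

section
/- Let λ, μ ∈ T(k, N−1), and let λ^c denote the complementary partition of λ in the k×(N−1) rectangle, i.e. (λ^c)_i = (N−1) − λ_{k+1−i} for 1 ≤ i ≤ k. Then: (i) ε_{N,k}([m̃_λ]·[m̃_{λ^c}]) is the nonzero positive integer equal to the number of pairs (σ,τ) ∈ 𝔖_k × 𝔖_k with λ_{σ(i)} + (λ^c)_{τ(i)} = N−1 for all i, namely k!·∏_{c≥0} m_c(λ)!, where m_c(λ) is the number of indices i ∈ {1,…,k} with λ_i = c; (ii) if |λ| + |μ| ≤ k(N−1) and μ ≠ λ^c, then ε_{N,k}([m̃_λ]·[m̃_μ]) = 0. Here [·] denotes the class in M_{N,k}.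 Consequently the Gram matrix of the pairing (a,b) ↦ ε_{N,k}(ab) in the bases ([m̃_λ])_{λ∈T(k,N−1)} and ([m̃_{μ^c}])_{μ∈T(k,N−1)} is triangular with invertible diagonal entries. -/
/-!
STATEMENT 4: Let `λ, μ ∈ T(k, N−1)` and `λ^c` the complementary partition of `λ` in the
`k×(N−1)` rectangle.  Then (i) `ε_{N,k}([m̃_λ]·[m̃_{λ^c}])` is the positive integer equal to
the number of pairs `(σ,τ) ∈ 𝔖_k × 𝔖_k` with `λ_{σ(i)} + (λ^c)_{τ(i)} = N−1` for all `i`,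
namely `k!·∏_{c≥0} m_c(λ)!`; and (ii) if `|λ| + |μ| ≤ k(N−1)` and `μ ≠ λ^c` then
`ε_{N,k}([m̃_λ]·[m̃_μ]) = 0`.  Here `m̃_λ = Σ_{σ∈𝔖_k} ∏_i x_i^{λ_{σ(i)}}` and
`ε_{N,k}` is given (as a hypothesis) by the `R_N`-basis of classes of monomial symmetric
polynomials, sending the class of `m_{ρ(k,N−1)}` to `1` and the other basis elements to `0`.

Setup: the ambient ring is `ℚ[T_1,…,T_N,x_1,…,x_k]`, realized as
`MvPolynomial (Fin N ⊕ Fin k) ℚ` (`Sum.inl i ↦ T_i`, `Sum.inr j ↦ x_j`).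
`Bsub = R_N[x_1,…,x_k]` is the subalgebra of polynomials symmetric in the `T`-variables,
`Asub = A_k` consists of those symmetric both in the `T`- and the `x`-variables,
`Jid = J_{N,k}` is the ideal of `Bsub` generated by the `∏_{i=1}^N (x_j − T_i)`,
`JA = J_{N,k} ∩ A_k`, and `M_{N,k} = Asub ⧸ JA`, an algebra over
`R_N = ℚ[T_1,…,T_N]^{𝔖_N}`.
-/

open MvPolynomial

set_option synthInstance.maxHeartbeats 1000000
set_option maxHeartbeats 1600000

noncomputable section
namespace SymKR

variable (N k : ℕ)

/-- The ambient polynomial ring `ℚ[T_1,…,T_N,x_1,…,x_k]`. -/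
abbrev Amb := MvPolynomial (Fin N ⊕ Fin k) ℚ

/-- The action of a permutation of `{1,…,N}` on the `T`-variables. -/
def actT (σ : Equiv.Perm (Fin N)) : Amb N k →ₐ[ℚ] Amb N k :=
  rename (Sum.map (⇑σ) id)

/-- The action of a permutation of `{1,…,k}` on the `x`-variables. -/
def actX (τ : Equiv.Perm (Fin k)) : Amb N k →ₐ[ℚ] Amb N k :=
  rename (Sum.map id (⇑τ))

/-- `R_N[x_1,…,x_k]`: polynomials symmetric in the `T`-variables. -/
def Bsub : Subalgebra ℚ (Amb N k) :=
  ⨅ σ : Equiv.Perm (Fin N), AlgHom.equalizer (actT N k σ) (AlgHom.id ℚ _)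

/-- `A_k = R_N[x_1,…,x_k]^{𝔖_k}`. -/
def Asub : Subalgebra ℚ (Amb N k) :=
  Bsub N k ⊓ ⨅ τ : Equiv.Perm (Fin k), AlgHom.equalizer (actX N k τ) (AlgHom.id ℚ _)

lemma mem_Bsub {p : Amb N k} : p ∈ Bsub N k ↔ ∀ σ, actT N k σ p = p := by
  simp [Bsub, Algebra.mem_iInf, AlgHom.mem_equalizer]

lemma mem_Asub {p : Amb N k} :
    p ∈ Asub N k ↔ (∀ σ, actT N k σ p = p) ∧ (∀ τ, actX N k τ p = p) := by
  simp [Asub, Algebra.mem_inf, mem_Bsub, Algebra.mem_iInf, AlgHom.mem_equalizer]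

/-- The generator `∏_{i=1}^N (x_j − T_i)` of `J_{N,k}`. -/
def pgen (j : Fin k) : Amb N k :=
  ∏ i : Fin N, (X (Sum.inr j) - X (Sum.inl i))

/-- The ideal `J_{N,k}` of `R_N[x_1,…,x_k]`. -/
def Jid : Ideal (Bsub N k) :=
  Ideal.span {b : Bsub N k | ∃ j : Fin k, (b : Amb N k) = pgen N k j}

lemma Asub_le_Bsub : Asub N k ≤ Bsub N k := inf_le_left

/-- The ideal `J_{N,k} ∩ A_k` of `A_k`. -/
def JA : Ideal (Asub N k) :=
  (Jid N k).comap (Subalgebra.inclusion (Asub_le_Bsub N k))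

/-- `R_N = ℚ[T_1,…,T_N]^{𝔖_N}`. -/
abbrev R0 := MvPolynomial.symmetricSubalgebra (Fin N) ℚ

lemma inl_mem (r : R0 N) :
    rename (Sum.inl : Fin N → Fin N ⊕ Fin k) (r : MvPolynomial (Fin N) ℚ) ∈ Asub N k := by
  rw [mem_Asub]
  constructor
  · intro σ
    show rename _ (rename _ _) = _
    rw [rename_rename]
    have h1 : (Sum.map (⇑σ) id ∘ Sum.inl : Fin N → Fin N ⊕ Fin k) = Sum.inl ∘ ⇑σ := rfl
    rw [h1, ← rename_rename]
    congr 1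
    exact (MvPolynomial.mem_symmetricSubalgebra _).mp r.2 σ
  · intro τ
    show rename _ (rename _ _) = _
    rw [rename_rename]
    rfl

/-- The structure map `R_N → A_k`. -/
def toA : R0 N →+* Asub N k where
  toFun r := ⟨rename Sum.inl (r : MvPolynomial (Fin N) ℚ), inl_mem N k r⟩
  map_one' := Subtype.ext <| by simp
  map_mul' r s := Subtype.ext <| by simp [MulMemClass.coe_mul]
  map_zero' := Subtype.ext <| by simp
  map_add' r s := Subtype.ext <| by simp [AddMemClass.coe_add]

/-- `M_{N,k}` is an `R_N`-algebra (in particular an `R_N`-module). -/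
instance instAlgR0M : Algebra (R0 N) ((Asub N k) ⧸ JA N k) :=
  @RingHom.toAlgebra _ _ _ (inferInstance : CommRing ((Asub N k) ⧸ JA N k)).toCommSemiring
    ((Ideal.Quotient.mk (JA N k)).comp (toA N k))

/-- The monomial symmetric polynomial `m_lam(x_1,…,x_k)`: the sum over the *distinct*
permutations of the exponent vector `lam`. -/
def msym (lam : Fin k → ℕ) : Amb N k :=
  ∑ v ∈ Finset.image (fun σ : Equiv.Perm (Fin k) => lam ∘ σ) Finset.univ,
    ∏ i, (X (Sum.inr i) : Amb N k) ^ v i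

lemma msym_mem (lam : Fin k → ℕ) : msym N k lam ∈ Asub N k := by
  rw [mem_Asub]
  constructor
  · intro σ
    rw [msym, map_sum]
    refine Finset.sum_congr rfl fun v _ => ?_
    rw [map_prod]
    refine Finset.prod_congr rfl fun i _ => ?_
    rw [map_pow]
    show (rename _ (X (Sum.inr i)) : Amb N k) ^ _ = _
    rw [rename_X]
    rfl
  · intro τ
    rw [msym, map_sum]
    have key : ∀ v : Fin k → ℕ,
        actX N k τ (∏ i, (X (Sum.inr i) : Amb N k) ^ v i)
          = ∏ i, (X (Sum.inr i) : Amb N k) ^ v (τ.symm i) := by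
      intro v
      rw [map_prod]
      refine Fintype.prod_equiv τ _ _ fun i => ?_
      rw [map_pow]
      show (rename _ (X (Sum.inr i)) : Amb N k) ^ _ = _
      rw [rename_X]
      simp
    rw [Finset.sum_congr rfl fun v _ => key v]
    refine Finset.sum_bij' (fun v _ => v ∘ ⇑τ.symm) (fun v _ => v ∘ ⇑τ) ?_ ?_ ?_ ?_ ?_
    · intro v hv
      rw [Finset.mem_image] at hv ⊢
      obtain ⟨σ, -, rfl⟩ := hv
      exact ⟨τ.symm.trans σ, Finset.mem_univ _, rfl⟩
    · intro v hv
      rw [Finset.mem_image] at hv ⊢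
      obtain ⟨σ, -, rfl⟩ := hv
      exact ⟨τ.trans σ, Finset.mem_univ _, rfl⟩
    · intro v _
      funext i
      simp [Function.comp]
    · intro v _
      funext i
      simp [Function.comp]
    · intro v _
      rfl

/-- `T(k, N−1)`: partitions with at most `k` parts, each part at most `N−1`, encoded as
antitone functions `Fin k → ℕ` bounded by `N−1`. -/
def PartIdx := {lam : Fin k → ℕ // Antitone lam ∧ ∀ i, lam i ≤ N - 1}

/-- The class of `m_lam` in `M_{N,k}`. -/
def clsm (lam : Fin k → ℕ) : (Asub N k) ⧸ JA N k :=
  Ideal.Quotient.mk (JA N k) ⟨msym N k lam, msym_mem N k lam⟩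

instance instModR0M : Module (R0 N) ((Asub N k) ⧸ JA N k) := by exact (instAlgR0M N k).toModule

/-- `m̃_lam`: the sum over all `k!` permutations, with multiplicity. -/
def mtil (lam : Fin k → ℕ) : Amb N k :=
  ∑ σ : Equiv.Perm (Fin k), ∏ i, (X (Sum.inr i) : Amb N k) ^ lam (σ i)

lemma mtil_mem (lam : Fin k → ℕ) : mtil N k lam ∈ Asub N k := by
  rw [mem_Asub]
  constructor
  · intro σ
    rw [mtil, map_sum]
    refine Finset.sum_congr rfl fun ρ _ => ?_
    rw [map_prod]
    refine Finset.prod_congr rfl fun i _ => ?_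
    rw [map_pow]
    show (rename _ (X (Sum.inr i)) : Amb N k) ^ _ = _
    rw [rename_X]
    rfl
  · intro τ
    rw [mtil, map_sum]
    have key : ∀ σ : Equiv.Perm (Fin k),
        actX N k τ (∏ i, (X (Sum.inr i) : Amb N k) ^ lam (σ i))
          = ∏ i, (X (Sum.inr i) : Amb N k) ^ lam ((σ * τ.symm) i) := by
      intro σ
      rw [map_prod]
      refine Fintype.prod_equiv τ _ _ fun i => ?_
      rw [map_pow]
      show (rename _ (X (Sum.inr i)) : Amb N k) ^ _ = _
      rw [rename_X]
      simp [Equiv.Perm.mul_apply]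
    rw [Finset.sum_congr rfl fun σ _ => key σ]
    exact Fintype.sum_equiv (Equiv.mulRight τ.symm) _ _ fun σ => rfl

/-- The class of `m̃_lam` in `M_{N,k}`. -/
def clst (lam : Fin k → ℕ) : (Asub N k) ⧸ JA N k :=
  Ideal.Quotient.mk (JA N k) ⟨mtil N k lam, mtil_mem N k lam⟩

/-- The complementary partition `λ^c` of `λ` in the `k × (N−1)` rectangle:
`(λ^c)_i = (N−1) − λ_{k+1−i}`. -/
def lamC (lam : Fin k → ℕ) : Fin k → ℕ := fun i => (N - 1) - lam i.rev

/-- The number of pairs `(σ,τ) ∈ 𝔖_k × 𝔖_k` such that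
`λ_{σ(i)} + (λ^c)_{τ(i)} = N−1` for all `i`. -/
def pairCount (lam : Fin k → ℕ) : ℕ :=
  (Finset.univ.filter fun p : Equiv.Perm (Fin k) × Equiv.Perm (Fin k) =>
      ∀ i, lam (p.1 i) + lamC N k lam (p.2 i) = N - 1).card

/-- `m_c(λ)`: the number of indices `i` with `λ_i = c`. -/
def multCount (lam : Fin k → ℕ) (c : ℕ) : ℕ :=
  (Finset.univ.filter fun i => lam i = c).card

/-! ### Auxiliary combinatorics -/

/-- The number of permutations fixing `f` under precomposition. -/
def stabCount (f : Fin k → ℕ) : ℕ :=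
  (Finset.univ.filter fun g : Equiv.Perm (Fin k) => ∀ i, f (g i) = f i).card

lemma aux_depval {f : Fin k → ℕ} (F : ∀ c : Fin N, {i // f i = (c : ℕ)} → Fin k)
    {c c' : Fin N} (h : c = c') (j : Fin k) (hj : f j = (c : ℕ)) (hj' : f j = (c' : ℕ)) :
    F c ⟨j, hj⟩ = F c' ⟨j, hj'⟩ := by subst h; rfl

/-- The stabilizer of `f` is equivalent to the product of the permutation groups
of the fibers of `f`. -/
def stabEquiv (f : Fin k → ℕ) (hf : ∀ i, f i < N) :
    {g : Equiv.Perm (Fin k) // ∀ i, f (g i) = f i} ≃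
      ∀ c : Fin N, Equiv.Perm {i // f i = (c : ℕ)} where
  toFun g c := Equiv.Perm.subtypePerm g.1 (fun i => by rw [g.2 i])
  invFun F := by
    refine ⟨⟨fun i => (F ⟨f i, hf i⟩ ⟨i, rfl⟩ : {j // f j = f i}).1,
            fun i => ((F ⟨f i, hf i⟩).symm (⟨i, rfl⟩ : {j // f j = f i})).1, ?_, ?_⟩, ?_⟩
    · intro i
      set y := F ⟨f i, hf i⟩ (⟨i, rfl⟩ : {j // f j = f i}) with hy
      have hc : (⟨f y.1, hf y.1⟩ : Fin N) = ⟨f i, hf i⟩ := Fin.ext y.2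
      have := aux_depval (N := N) (k := k) (f := f)
        (fun c z => ((F c).symm z).1) hc y.1 rfl y.2
      refine this.trans ?_
      exact congrArg Subtype.val ((F ⟨f i, hf i⟩).symm_apply_apply ⟨i, rfl⟩)
    · intro i
      set y := (F ⟨f i, hf i⟩).symm (⟨i, rfl⟩ : {j // f j = f i}) with hy
      have hc : (⟨f y.1, hf y.1⟩ : Fin N) = ⟨f i, hf i⟩ := Fin.ext y.2
      have := aux_depval (N := N) (k := k) (f := f)
        (fun c z => ((F c) z).1) hc y.1 rfl y.2
      refine this.trans ?_
      exact congrArg Subtype.val ((F ⟨f i, hf i⟩).apply_symm_apply ⟨i, rfl⟩)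
    · intro i
      exact (F ⟨f i, hf i⟩ (⟨i, rfl⟩ : {j // f j = f i})).2
  left_inv g := by
    apply Subtype.ext
    apply Equiv.ext
    intro i
    rfl
  right_inv F := by
    funext c
    apply Equiv.ext
    intro x
    apply Subtype.ext
    show (F ⟨f x.1, hf x.1⟩ (⟨x.1, rfl⟩ : {j // f j = f x.1})).1 = (F c x).1
    have hc : (⟨f x.1, hf x.1⟩ : Fin N) = c := Fin.ext x.2
    have := aux_depval (N := N) (k := k) (f := f)
      (fun c z => ((F c) z).1) hc x.1 rfl x.2
    rw [this]

lemma stabCount_eq (f : Fin k → ℕ) (hf : ∀ i, f i < N) :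
    stabCount k f = ∏ c ∈ Finset.range N, Nat.factorial (multCount k f c) := by
  have h1 : stabCount k f = Fintype.card {g : Equiv.Perm (Fin k) // ∀ i, f (g i) = f i} :=
    (Fintype.card_subtype _).symm
  rw [h1, Fintype.card_congr (stabEquiv N k f hf), Fintype.card_pi,
    ← Fin.prod_univ_eq_prod_range (fun c => Nat.factorial (multCount k f c)) N]
  refine Finset.prod_congr rfl fun c _ => ?_
  rw [Fintype.card_perm, Fintype.card_subtype]
  rfl

/-! ### Polynomial identities -/

/-- The elementary symmetric polynomial as an element of `R_N`. -/
def rsy (t : ℕ) : R0 N :=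
  ⟨esymm (Fin N) ℚ t, (mem_symmetricSubalgebra _).mpr (esymm_isSymmetric (Fin N) ℚ t)⟩

lemma coe_toA_rsy (t : ℕ) :
    ((toA N k (rsy N t) : Asub N k) : Amb N k) = rename Sum.inl (esymm (Fin N) ℚ t) := rfl

/-- Vieta's formula for the generators. -/
lemma pgen_eq (j : Fin k) :
    pgen N k j = ∑ t ∈ Finset.range (N + 1),
      (-1 : Amb N k) ^ t * rename Sum.inl (esymm (Fin N) ℚ t) * X (Sum.inr j) ^ (N - t) := by
  have hv := Multiset.prod_X_sub_X_eq_sum_esymm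
    (Finset.univ.val.map fun i : Fin N => (X (Sum.inl i) : Amb N k))
  have hcard : Multiset.card
      (Finset.univ.val.map fun i : Fin N => (X (Sum.inl i) : Amb N k)) = N := by
    simp
  rw [hcard] at hv
  have h2 := congrArg (Polynomial.eval (X (Sum.inr j) : Amb N k)) hv
  rw [Polynomial.eval_multiset_prod, Multiset.map_map, Multiset.map_map] at h2
  have hL : (Finset.univ.val.map
      (((Polynomial.eval (X (Sum.inr j) : Amb N k)) ∘ fun t => Polynomial.X - Polynomial.C t)
        ∘ fun i : Fin N => (X (Sum.inl i) : Amb N k))).prod = pgen N k j := by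
    rw [pgen]
    rw [Finset.prod_eq_multiset_prod]
    congr 1
    apply Multiset.map_congr rfl
    intro i _
    simp
  rw [hL] at h2
  rw [h2, Polynomial.eval_finset_sum]
  refine Finset.sum_congr rfl fun t _ => ?_
  have hesy : (Finset.univ.val.map fun i : Fin N => (X (Sum.inl i) : Amb N k)).esymm t
      = rename Sum.inl (esymm (Fin N) ℚ t) := by
    rw [← aeval_esymm_eq_multiset_esymm (σ := Fin N) (R := ℚ) (n := t)
      (f := fun i : Fin N => (X (Sum.inl i) : Amb N k))]
    rw [rename_eq_aeval]
    rfl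
  rw [Polynomial.eval_mul, Polynomial.eval_mul, Polynomial.eval_pow, Polynomial.eval_C,
    Polynomial.eval_pow, Polynomial.eval_X, Polynomial.eval_neg, Polynomial.eval_one, hesy,
    mul_assoc]

/-- Expansion of a product of two `m̃`'s. -/
lemma mtil_mul (lam mu : Fin k → ℕ) :
    mtil N k lam * mtil N k mu
      = ∑ π : Equiv.Perm (Fin k), mtil N k (fun j => lam j + mu (π j)) := by
  calc mtil N k lam * mtil N k mu
      = ∑ σ : Equiv.Perm (Fin k), ∑ τ : Equiv.Perm (Fin k),
          ∏ i, (X (Sum.inr i) : Amb N k) ^ (lam (σ i) + mu (τ i)) := by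
        rw [mtil, mtil, Finset.sum_mul_sum]
        refine Finset.sum_congr rfl fun σ _ => Finset.sum_congr rfl fun τ _ => ?_
        rw [← Finset.prod_mul_distrib]
        exact Finset.prod_congr rfl fun i _ => (pow_add _ _ _).symm
    _ = ∑ σ : Equiv.Perm (Fin k), ∑ π : Equiv.Perm (Fin k),
          ∏ i, (X (Sum.inr i) : Amb N k) ^ (lam (σ i) + mu (π (σ i))) := by
        refine Finset.sum_congr rfl fun σ _ => ?_
        refine (Fintype.sum_equiv (Equiv.mulRight σ) _ _ fun π => ?_).symm
        rfl
    _ = ∑ π : Equiv.Perm (Fin k), mtil N k (fun j => lam j + mu (π j)) := by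
        rw [Finset.sum_comm]
        rfl

/-- `m̃` is invariant under permutation of the exponent vector. -/
lemma mtil_perm (lam : Fin k → ℕ) (g : Equiv.Perm (Fin k)) :
    mtil N k (lam ∘ g) = mtil N k lam := by
  rw [mtil, mtil]
  exact Fintype.sum_equiv (Equiv.mulLeft g) _ _ fun σ => rfl

lemma card_comp_eq_stab (w v : Fin k → ℕ) (σ0 : Equiv.Perm (Fin k)) (h0 : w ∘ σ0 = v) :
    (Finset.univ.filter fun σ : Equiv.Perm (Fin k) => w ∘ σ = v).card = stabCount k w := by
  rw [stabCount]
  refine Finset.card_bij' (fun σ _ => σ * σ0⁻¹) (fun h _ => h * σ0) ?_ ?_ ?_ ?_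
  · intro σ hσ
    rw [Finset.mem_filter] at hσ ⊢
    refine ⟨Finset.mem_univ _, fun i => ?_⟩
    have := congrFun hσ.2 (σ0⁻¹ i)
    have h0' := congrFun h0 (σ0⁻¹ i)
    simp only [Function.comp_apply] at this h0'
    simp only [Equiv.Perm.mul_apply]
    rw [this, ← h0']
    simp
  · intro h hh
    rw [Finset.mem_filter] at hh ⊢
    refine ⟨Finset.mem_univ _, funext fun i => ?_⟩
    have := hh.2 (σ0 i)
    simp only [Function.comp_apply, Equiv.Perm.mul_apply]
    rw [this, ← congrFun h0 i]
    rfl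
  · intro σ _; simp [mul_assoc]
  · intro h _; simp [mul_assoc]

/-- `m̃_w` is `stabCount w` times `m_w`. -/
lemma mtil_eq_nsmul_msym (w : Fin k → ℕ) :
    mtil N k w = stabCount k w • msym N k w := by
  have hs := Finset.sum_comp (s := (Finset.univ : Finset (Equiv.Perm (Fin k))))
    (fun v : Fin k → ℕ => ∏ i, (X (Sum.inr i) : Amb N k) ^ v i) (fun σ => w ∘ σ)
  rw [mtil, msym, Finset.smul_sum]
  refine Eq.trans (b := ∑ v ∈ Finset.univ.image fun σ : Equiv.Perm (Fin k) => w ∘ σ,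
    (Finset.univ.filter fun σ : Equiv.Perm (Fin k) => w ∘ σ = v).card
      • ∏ i, (X (Sum.inr i) : Amb N k) ^ v i) hs ?_
  refine Finset.sum_congr rfl fun v hv => ?_
  obtain ⟨σ0, -, h0⟩ := Finset.mem_image.mp hv
  rw [card_comp_eq_stab k w v σ0 h0]

lemma pgen_mem_Bsub (j : Fin k) : pgen N k j ∈ Bsub N k := by
  rw [mem_Bsub]
  intro σ
  rw [pgen]
  show rename (Sum.map (⇑σ) id) _ = _
  rw [map_prod]
  have : ∀ i : Fin N, rename (Sum.map (⇑σ) id)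
      ((X (Sum.inr j) : Amb N k) - X (Sum.inl i))
        = (X (Sum.inr j) : Amb N k) - X (Sum.inl (σ i)) := by
    intro i
    rw [map_sub, rename_X, rename_X]
    rfl
  rw [Finset.prod_congr rfl fun i _ => this i]
  exact Equiv.prod_comp σ fun i => (X (Sum.inr j) : Amb N k) - X (Sum.inl i)

/-- A polynomial involving only the `x`-variables lies in `Bsub`. -/
lemma xpoly_mem_Bsub (a : ℕ) (i0 : Fin k) (s : Finset (Fin k)) (e : Fin k → ℕ) :
    (X (Sum.inr i0) ^ a * ∏ i ∈ s, (X (Sum.inr i) : Amb N k) ^ e i) ∈ Bsub N k := by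
  rw [mem_Bsub]
  intro σ
  rw [map_mul, map_pow, map_prod]
  show (rename _ (X (Sum.inr i0)) : Amb N k) ^ a * _ = _
  rw [rename_X]
  congr 1
  refine Finset.prod_congr rfl fun i _ => ?_
  rw [map_pow]
  show (rename _ (X (Sum.inr i)) : Amb N k) ^ e i = _
  rw [rename_X]
  rfl

lemma mem_JA_of_sum (p : Asub N k) (c : Equiv.Perm (Fin k) → Amb N k)
    (hc : ∀ σ, c σ ∈ Bsub N k) (jj : Equiv.Perm (Fin k) → Fin k)
    (hp : (p : Amb N k) = ∑ σ : Equiv.Perm (Fin k), c σ * pgen N k (jj σ)) :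
    p ∈ JA N k := by
  rw [JA, Ideal.mem_comap]
  have key : Subalgebra.inclusion (Asub_le_Bsub N k) p
      = ∑ σ : Equiv.Perm (Fin k),
          (⟨c σ, hc σ⟩ : Bsub N k) * ⟨pgen N k (jj σ), pgen_mem_Bsub N k _⟩ := by
    apply Subtype.ext
    rw [Subalgebra.coe_inclusion, hp, AddSubmonoidClass.coe_finset_sum]
    rfl
  rw [key]
  exact Ideal.sum_mem _ fun σ _ =>
    Ideal.mul_mem_left _ _ (Ideal.subset_span ⟨jj σ, rfl⟩)

/-! ### The reduction identity -/

lemma X_pow_N_eq (i0 : Fin k) :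
    (X (Sum.inr i0) : Amb N k) ^ N
      = pgen N k i0 + ∑ t ∈ Finset.range N, (-1 : Amb N k) ^ t
          * rename Sum.inl (esymm (Fin N) ℚ (t + 1)) * X (Sum.inr i0) ^ (N - (t + 1)) := by
  have hpg := pgen_eq N k i0
  rw [Finset.sum_range_succ'] at hpg
  rw [esymm_zero, map_one] at hpg
  simp only [pow_zero, one_mul, mul_one, Nat.sub_zero] at hpg
  have hneg : (∑ t ∈ Finset.range N, (-1 : Amb N k) ^ (t + 1)
        * rename Sum.inl (esymm (Fin N) ℚ (t + 1)) * X (Sum.inr i0) ^ (N - (t + 1)))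
      = -∑ t ∈ Finset.range N, (-1 : Amb N k) ^ t
          * rename Sum.inl (esymm (Fin N) ℚ (t + 1)) * X (Sum.inr i0) ^ (N - (t + 1)) := by
    rw [← Finset.sum_neg_distrib]
    refine Finset.sum_congr rfl fun t _ => ?_
    ring
  rw [hneg] at hpg
  linear_combination -hpg

lemma prod_update_eq (lam : Fin k → ℕ) (j0 : Fin k) (m : ℕ) (σ : Equiv.Perm (Fin k)) :
    (∏ i, (X (Sum.inr i) : Amb N k) ^ (Function.update lam j0 m) (σ i))
      = X (Sum.inr (σ⁻¹ j0)) ^ m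
        * ∏ i ∈ Finset.univ.erase (σ⁻¹ j0), (X (Sum.inr i) : Amb N k) ^ lam (σ i) := by
  rw [← Finset.mul_prod_erase Finset.univ _ (Finset.mem_univ (σ⁻¹ j0))]
  congr 1
  · congr 1
    rw [Function.update_apply, if_pos (show σ (σ⁻¹ j0) = j0 from σ.apply_symm_apply j0)]
  · refine Finset.prod_congr rfl fun i hi => ?_
    congr 1
    rw [Function.update_apply, if_neg]
    intro hij
    exact (Finset.mem_erase.mp hi).1 (by rw [← hij, Equiv.Perm.coe_inv, Equiv.symm_apply_apply])

lemma mtil_reduction (lam : Fin k → ℕ) (j0 : Fin k) (h : N ≤ lam j0) :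
    mtil N k lam
      = (∑ σ : Equiv.Perm (Fin k),
          (X (Sum.inr (σ⁻¹ j0)) ^ (lam j0 - N)
            * ∏ i ∈ Finset.univ.erase (σ⁻¹ j0), (X (Sum.inr i) : Amb N k) ^ lam (σ i))
            * pgen N k (σ⁻¹ j0))
        + ∑ t ∈ Finset.range N, (-1 : Amb N k) ^ t
            * rename Sum.inl (esymm (Fin N) ℚ (t + 1))
            * mtil N k (Function.update lam j0 (lam j0 - (t + 1))) := by
  have hterm : ∀ σ : Equiv.Perm (Fin k),
      (∏ i, (X (Sum.inr i) : Amb N k) ^ lam (σ i))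
        = (X (Sum.inr (σ⁻¹ j0)) ^ (lam j0 - N)
            * ∏ i ∈ Finset.univ.erase (σ⁻¹ j0), (X (Sum.inr i) : Amb N k) ^ lam (σ i))
            * pgen N k (σ⁻¹ j0)
          + ∑ t ∈ Finset.range N, (-1 : Amb N k) ^ t
              * rename Sum.inl (esymm (Fin N) ℚ (t + 1))
              * (∏ i, (X (Sum.inr i) : Amb N k)
                  ^ (Function.update lam j0 (lam j0 - (t + 1))) (σ i)) := by
    intro σ
    have e1 : (∏ i, (X (Sum.inr i) : Amb N k) ^ lam (σ i))
        = X (Sum.inr (σ⁻¹ j0)) ^ lam j0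
          * ∏ i ∈ Finset.univ.erase (σ⁻¹ j0), (X (Sum.inr i) : Amb N k) ^ lam (σ i) := by
      have := prod_update_eq N k lam j0 (lam j0) σ
      rw [Function.update_eq_self] at this
      exact this
    rw [e1]
    have e2 : (X (Sum.inr (σ⁻¹ j0)) : Amb N k) ^ lam j0
        = X (Sum.inr (σ⁻¹ j0)) ^ (lam j0 - N) * X (Sum.inr (σ⁻¹ j0)) ^ N := by
      rw [← pow_add]
      congr 1
      omega
    rw [e2, X_pow_N_eq N k (σ⁻¹ j0), mul_add, add_mul]
    congr 1
    · ring
    · rw [Finset.mul_sum, Finset.sum_mul]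
      refine Finset.sum_congr rfl fun t ht => ?_
      rw [prod_update_eq N k lam j0 (lam j0 - (t + 1)) σ]
      have e3 : (X (Sum.inr (σ⁻¹ j0)) : Amb N k) ^ (lam j0 - N)
            * X (Sum.inr (σ⁻¹ j0)) ^ (N - (t + 1))
          = X (Sum.inr (σ⁻¹ j0)) ^ (lam j0 - (t + 1)) := by
        rw [← pow_add]
        congr 1
        have := Finset.mem_range.mp ht
        omega
      calc (X (Sum.inr (σ⁻¹ j0)) ^ (lam j0 - N)
              * ((-1 : Amb N k) ^ t * rename Sum.inl (esymm (Fin N) ℚ (t + 1))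
                * X (Sum.inr (σ⁻¹ j0)) ^ (N - (t + 1))))
            * ∏ i ∈ Finset.univ.erase (σ⁻¹ j0), (X (Sum.inr i) : Amb N k) ^ lam (σ i)
          = (-1 : Amb N k) ^ t * rename Sum.inl (esymm (Fin N) ℚ (t + 1))
              * ((X (Sum.inr (σ⁻¹ j0)) ^ (lam j0 - N) * X (Sum.inr (σ⁻¹ j0)) ^ (N - (t + 1)))
                * ∏ i ∈ Finset.univ.erase (σ⁻¹ j0),
                    (X (Sum.inr i) : Amb N k) ^ lam (σ i)) := by ring
        _ = _ := by rw [e3]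
  rw [mtil]
  rw [Finset.sum_congr rfl fun σ _ => hterm σ]
  rw [Finset.sum_add_distrib]
  congr 1
  rw [Finset.sum_comm]
  refine Finset.sum_congr rfl fun t _ => ?_
  rw [mtil, Finset.mul_sum]

/-! ### Quotient-level identities -/

lemma clst_reduction (lam : Fin k → ℕ) (j0 : Fin k) (h : N ≤ lam j0) :
    clst N k lam = ∑ t ∈ Finset.range N,
      ((-1 : R0 N) ^ t * rsy N (t + 1)) •
        clst N k (Function.update lam j0 (lam j0 - (t + 1))) := by
  set a : Asub N k := ⟨mtil N k lam, mtil_mem N k lam⟩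
    - ∑ t ∈ Finset.range N, toA N k ((-1 : R0 N) ^ t * rsy N (t + 1))
        * ⟨mtil N k (Function.update lam j0 (lam j0 - (t + 1))), mtil_mem N k _⟩ with ha_def
  have hcoe : (a : Amb N k)
      = ∑ σ : Equiv.Perm (Fin k),
          (X (Sum.inr (σ⁻¹ j0)) ^ (lam j0 - N)
            * ∏ i ∈ Finset.univ.erase (σ⁻¹ j0), (X (Sum.inr i) : Amb N k) ^ lam (σ i))
            * pgen N k (σ⁻¹ j0) := by
    rw [ha_def]
    rw [AddSubgroupClass.coe_sub, AddSubmonoidClass.coe_finset_sum]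
    have hco : ∀ t ∈ Finset.range N,
        ((toA N k ((-1 : R0 N) ^ t * rsy N (t + 1))
            * ⟨mtil N k (Function.update lam j0 (lam j0 - (t + 1))), mtil_mem N k _⟩
          : Asub N k) : Amb N k)
          = (-1 : Amb N k) ^ t * rename Sum.inl (esymm (Fin N) ℚ (t + 1))
              * mtil N k (Function.update lam j0 (lam j0 - (t + 1))) := by
      intro t _
      rw [MulMemClass.coe_mul]
      have hc1 : ((toA N k ((-1 : R0 N) ^ t * rsy N (t + 1)) : Asub N k) : Amb N k)
          = rename Sum.inl
              ((((-1 : R0 N) ^ t * rsy N (t + 1) : R0 N)) : MvPolynomial (Fin N) ℚ) := rfl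
      have hc2 : ((((-1 : R0 N) ^ t * rsy N (t + 1) : R0 N)) : MvPolynomial (Fin N) ℚ)
          = (-1 : MvPolynomial (Fin N) ℚ) ^ t * esymm (Fin N) ℚ (t + 1) := by
        rw [MulMemClass.coe_mul, SubmonoidClass.coe_pow]
        rfl
      rw [hc1, hc2, map_mul, map_pow, map_neg, map_one]
    rw [Finset.sum_congr rfl hco]
    have := mtil_reduction N k lam j0 h
    rw [sub_eq_iff_eq_add]
    exact this
  have hJA : a ∈ JA N k := by
    refine mem_JA_of_sum N k a _ (fun σ => xpoly_mem_Bsub N k _ _ _ _) (fun σ => σ⁻¹ j0) hcoe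
  have h0 : Ideal.Quotient.mk (JA N k) a = 0 := Ideal.Quotient.eq_zero_iff_mem.mpr hJA
  rw [ha_def, map_sub, map_sum, sub_eq_zero] at h0
  rw [clst, h0]
  refine Finset.sum_congr rfl fun t _ => ?_
  rw [map_mul, Algebra.smul_def]
  rfl

lemma clst_mul (lam mu : Fin k → ℕ) :
    clst N k lam * clst N k mu
      = ∑ π : Equiv.Perm (Fin k), clst N k (fun j => lam j + mu (π j)) := by
  rw [clst, clst, ← map_mul]
  have key : (⟨mtil N k lam, mtil_mem N k lam⟩ * ⟨mtil N k mu, mtil_mem N k mu⟩ : Asub N k)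
      = ∑ π : Equiv.Perm (Fin k),
          (⟨mtil N k (fun j => lam j + mu (π j)), mtil_mem N k _⟩ : Asub N k) := by
    apply Subtype.ext
    rw [MulMemClass.coe_mul, AddSubmonoidClass.coe_finset_sum]
    exact mtil_mul N k lam mu
  rw [key, map_sum]
  rfl

lemma clst_perm (lam : Fin k → ℕ) (g : Equiv.Perm (Fin k)) :
    clst N k (lam ∘ g) = clst N k lam := by
  rw [clst, clst]
  congr 1
  exact Subtype.ext (mtil_perm N k lam g)

lemma clst_eq_nsmul_clsm (w : Fin k → ℕ) :
    clst N k w = stabCount k w • clsm N k w := by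
  rw [clst, clsm]
  have key : (⟨mtil N k w, mtil_mem N k w⟩ : Asub N k)
      = stabCount k w • ⟨msym N k w, msym_mem N k w⟩ := by
    apply Subtype.ext
    show mtil N k w = ((stabCount k w • ⟨msym N k w, msym_mem N k w⟩ : Asub N k) : Amb N k)
    rw [AddSubmonoidClass.coe_nsmul]
    exact mtil_eq_nsmul_msym N k w
  rw [key, map_nsmul]

lemma stabCount_const (c : ℕ) : stabCount k (fun _ => c) = Nat.factorial k := by
  rw [stabCount, Finset.filter_true_of_mem (fun g _ => fun i => rfl),
    Finset.card_univ, Fintype.card_perm, Fintype.card_fin]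

/-! ### Sorting -/

lemma exists_sorted (ν : Fin k → ℕ) : ∃ g : Equiv.Perm (Fin k), Antitone (ν ∘ g) := by
  refine ⟨Tuple.sort ν * Fin.revPerm, fun i j hij => ?_⟩
  exact Tuple.monotone_sort ν (Fin.rev_le_rev.mpr hij)

lemma antitone_unique {u : Fin k → ℕ} (hu : Antitone u) (h : Equiv.Perm (Fin k))
    (hu2 : Antitone (u ∘ h)) : u ∘ h = u := by
  have m1 : Monotone (u ∘ ⇑(h * (Fin.revPerm : Equiv.Perm (Fin k)))) :=
    fun i j hij => hu2 (Fin.rev_le_rev.mpr hij)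
  have m2 : Monotone (u ∘ ⇑(Fin.revPerm : Equiv.Perm (Fin k))) :=
    fun i j hij => hu (Fin.rev_le_rev.mpr hij)
  have key := Tuple.unique_monotone m1 m2
  funext i
  have h2 := congrFun key (Fin.rev i)
  simpa [Fin.rev_rev] using h2

lemma sum_const_fin : (∑ _i : Fin k, (N - 1)) = k * (N - 1) := by
  rw [Finset.sum_const, Finset.card_univ, Fintype.card_fin, smul_eq_mul]

/-! ### The value of `ε` on classes of `m̃`'s -/

lemma eps_clst_eq (hN : 1 ≤ N)
    (eps : ((Asub N k) ⧸ JA N k) →ₗ[R0 N] R0 N)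
    (heps_rho : eps (clsm N k (fun _ => N - 1)) = 1)
    (heps_zero : ∀ lam : PartIdx N k, lam.1 ≠ (fun _ => N - 1) → eps (clsm N k lam.1) = 0) :
    ∀ ν : Fin k → ℕ, (∑ i, ν i) ≤ k * (N - 1) →
      eps (clst N k ν) = if ν = (fun _ => N - 1) then ((Nat.factorial k : ℕ) : R0 N) else 0 := by
  suffices H : ∀ n : ℕ, ∀ ν : Fin k → ℕ, (∑ i, ν i) = n → (∑ i, ν i) ≤ k * (N - 1) →
      eps (clst N k ν) = if ν = (fun _ => N - 1) then ((Nat.factorial k : ℕ) : R0 N) else 0 by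
    intro ν hν
    exact H (∑ i, ν i) ν rfl hν
  intro n
  induction n using Nat.strong_induction_on with
  | _ n ih =>
    intro ν hn hle
    by_cases hb : ∀ i, ν i ≤ N - 1
    · -- all entries bounded: sort and use the basis hypotheses
      obtain ⟨g, hg⟩ := exists_sorted k ν
      have hww : ∀ i, (ν ∘ g) i ≤ N - 1 := fun i => hb (g i)
      have hcl : clst N k ν = stabCount k (ν ∘ g) • clsm N k (ν ∘ g) := by
        rw [← clst_perm N k ν g, clst_eq_nsmul_clsm]
      by_cases hw : (ν ∘ g) = (fun _ => N - 1)
      · have hν_const : ν = (fun _ => N - 1) := by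
          funext i
          have := congrFun hw (g⁻¹ i)
          simpa using this
        rw [hcl, map_nsmul, hw, heps_rho, if_pos hν_const]
        rw [stabCount_const, nsmul_eq_mul, mul_one]
      · have hν_ne : ν ≠ (fun _ => N - 1) := by
          intro hc
          exact hw (by funext i; rw [Function.comp_apply, hc])
        rw [hcl, map_nsmul, heps_zero ⟨ν ∘ g, hg, hww⟩ hw, smul_zero, if_neg hν_ne]
    · push_neg at hb
      obtain ⟨j0, hj0⟩ := hb
      have hj0' : N ≤ ν j0 := by omega
      have hν_ne : ν ≠ (fun _ => N - 1) := by
        intro hc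
        have := congrFun hc j0
        omega
      rw [if_neg hν_ne, clst_reduction N k ν j0 hj0', map_sum]
      refine Finset.sum_eq_zero fun t ht => ?_
      rw [map_smul]
      have hsum_upd : (∑ i, Function.update ν j0 (ν j0 - (t + 1)) i)
          = (∑ i, ν i) - (t + 1) := by
        rw [Finset.sum_update_of_mem (Finset.mem_univ j0)]
        have h2 : (∑ i, ν i) = ν j0 + ∑ i ∈ Finset.univ \ {j0}, ν i := by
          conv_lhs => rw [← Function.update_eq_self j0 ν]
          rw [Finset.sum_update_of_mem (Finset.mem_univ j0)]
        have ht' := Finset.mem_range.mp ht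
        omega
      have hlt : (∑ i, Function.update ν j0 (ν j0 - (t + 1)) i) < n := by
        rw [hsum_upd, hn]
        have : 1 ≤ n := by
          have : ν j0 ≤ ∑ i, ν i := Finset.single_le_sum (fun i _ => Nat.zero_le _)
            (Finset.mem_univ j0)
          omega
        omega
      have hle' : (∑ i, Function.update ν j0 (ν j0 - (t + 1)) i) ≤ k * (N - 1) := by
        rw [hsum_upd]; omega
      have hupd_ne : Function.update ν j0 (ν j0 - (t + 1)) ≠ (fun _ => N - 1) := by
        intro hc
        have hsc : (∑ i, Function.update ν j0 (ν j0 - (t + 1)) i) = k * (N - 1) := by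
          rw [hc, sum_const_fin]
        rw [hsum_upd] at hsc
        have : ν j0 ≤ ∑ i, ν i := Finset.single_le_sum (fun i _ => Nat.zero_le _)
          (Finset.mem_univ j0)
        omega
      rw [ih _ hlt _ rfl hle', if_neg hupd_ne, smul_zero]

/-! ### The complementary partition -/

lemma lamC_rev_apply (lam : Fin k → ℕ) (j : Fin k) :
    lamC N k lam (Fin.rev j) = N - 1 - lam j := by
  show N - 1 - lam (Fin.rev j).rev = N - 1 - lam j
  rw [Fin.rev_rev]

lemma lamC_antitone (lam : Fin k → ℕ) (hlam₁ : Antitone lam) :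
    Antitone (lamC N k lam) := fun i j hij =>
  Nat.sub_le_sub_left (hlam₁ (Fin.rev_le_rev.mpr hij)) _

lemma sum_lamC (lam : Fin k → ℕ) (hlam₂ : ∀ i, lam i ≤ N - 1) :
    (∑ i, lam i) + (∑ i, lamC N k lam i) = k * (N - 1) := by
  have h1 : (∑ i, lamC N k lam i) = ∑ j, (N - 1 - lam j) := by
    rw [← Equiv.sum_comp (Fin.revPerm : Equiv.Perm (Fin k)) (lamC N k lam)]
    exact Finset.sum_congr rfl fun j _ => lamC_rev_apply N k lam j
  rw [h1, ← Finset.sum_add_distrib, ← sum_const_fin N k]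
  exact Finset.sum_congr rfl fun j _ => by have := hlam₂ j; omega

lemma revPerm_sq : (Fin.revPerm : Equiv.Perm (Fin k)) * Fin.revPerm = 1 := by
  ext x
  simp [Fin.rev_rev]

theorem pairing_on_mtil_basis (hN : 1 ≤ N) (hk : 1 ≤ k)
    (b : Module.Basis (PartIdx N k) (R0 N) ((Asub N k) ⧸ JA N k))
    (hb : ∀ lam : PartIdx N k, b lam = clsm N k lam.1)
    (eps : ((Asub N k) ⧸ JA N k) →ₗ[R0 N] R0 N)
    (heps_rho : eps (clsm N k (fun _ => N - 1)) = 1)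
    (heps_zero : ∀ lam : PartIdx N k, lam.1 ≠ (fun _ => N - 1) → eps (clsm N k lam.1) = 0)
    (lam : Fin k → ℕ) (hlam₁ : Antitone lam) (hlam₂ : ∀ i, lam i ≤ N - 1) :
    (eps (clst N k lam * clst N k (lamC N k lam)) = (pairCount N k lam : R0 N) ∧
      pairCount N k lam
        = Nat.factorial k * (∏ c ∈ Finset.range N, Nat.factorial (multCount k lam c)) ∧
      0 < pairCount N k lam) ∧
    ∀ mu : Fin k → ℕ, Antitone mu → (∀ i, mu i ≤ N - 1) →
      (∑ i, lam i) + (∑ i, mu i) ≤ k * (N - 1) → mu ≠ lamC N k lam →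
        eps (clst N k lam * clst N k mu) = 0 := by
  have hL2 : ∀ i, lamC N k lam i ≤ N - 1 := fun i => Nat.sub_le _ _
  -- the general evaluation of the pairing
  have heval : ∀ mu : Fin k → ℕ, (∑ i, lam i) + (∑ i, mu i) ≤ k * (N - 1) →
      eps (clst N k lam * clst N k mu)
        = ((Nat.factorial k : ℕ) : R0 N)
            * ((Finset.univ.filter fun π : Equiv.Perm (Fin k) =>
                ∀ j, lam j + mu (π j) = N - 1).card : R0 N) := by
    intro mu hmu
    rw [clst_mul, map_sum]
    have hterm : ∀ π : Equiv.Perm (Fin k),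
        eps (clst N k (fun j => lam j + mu (π j)))
          = if (∀ j, lam j + mu (π j) = N - 1)
              then ((Nat.factorial k : ℕ) : R0 N) else 0 := by
      intro π
      have hsum : (∑ i, (lam i + mu (π i))) ≤ k * (N - 1) := by
        rw [Finset.sum_add_distrib, Equiv.sum_comp π mu]
        exact hmu
      rw [eps_clst_eq N k hN eps heps_rho heps_zero _ hsum]
      exact if_congr funext_iff rfl rfl
    rw [Finset.sum_congr rfl fun π _ => hterm π, ← Finset.sum_filter, Finset.sum_const,
      nsmul_eq_mul]
    exact mul_comm _ _
  -- the filter set for `mu = lamC lam`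
  have hmemS : ∀ π : Equiv.Perm (Fin k),
      (∀ j, lam j + lamC N k lam (π j) = N - 1) ↔ ∀ j, lamC N k lam (π j) = lamC N k lam (Fin.rev j) := by
    intro π
    constructor
    · intro h j
      rw [lamC_rev_apply]
      have := h j
      have := hlam₂ j
      omega
    · intro h j
      have := h j
      rw [lamC_rev_apply] at this
      have := hlam₂ j
      omega
  have hScard : (Finset.univ.filter fun π : Equiv.Perm (Fin k) =>
      ∀ j, lam j + lamC N k lam (π j) = N - 1).card = stabCount k (lamC N k lam) := by
    rw [stabCount]
    refine Finset.card_bij' (fun π _ => π * Fin.revPerm) (fun g _ => g * Fin.revPerm) ?_ ?_ ?_ ?_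
    · intro π hπ
      rw [Finset.mem_filter] at hπ ⊢
      refine ⟨Finset.mem_univ _, fun i => ?_⟩
      have := (hmemS π).mp hπ.2 (Fin.rev i)
      simpa [Fin.rev_rev] using this
    · intro g hg
      rw [Finset.mem_filter] at hg ⊢
      refine ⟨Finset.mem_univ _, (hmemS _).mpr fun j => ?_⟩
      exact hg.2 (Fin.rev j)
    · intro π _
      show π * Fin.revPerm * Fin.revPerm = π
      rw [mul_assoc, revPerm_sq k, mul_one]
    · intro g _
      show g * Fin.revPerm * Fin.revPerm = g
      rw [mul_assoc, revPerm_sq k, mul_one]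
  have hpcN : pairCount N k lam = Nat.factorial k
      * (Finset.univ.filter fun π : Equiv.Perm (Fin k) =>
          ∀ j, lam j + lamC N k lam (π j) = N - 1).card := by
    rw [pairCount]
    have hcards : (Finset.univ : Finset (Equiv.Perm (Fin k) × Equiv.Perm (Fin k)))
        = Finset.univ ×ˢ Finset.univ := rfl
    have : (Finset.univ.filter fun p : Equiv.Perm (Fin k) × Equiv.Perm (Fin k) =>
        ∀ i, lam (p.1 i) + lamC N k lam (p.2 i) = N - 1).card
        = ((Finset.univ : Finset (Equiv.Perm (Fin k))) ×ˢ
            (Finset.univ.filter fun π : Equiv.Perm (Fin k) =>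
              ∀ j, lam j + lamC N k lam (π j) = N - 1)).card := by
      refine Finset.card_bij' (fun p _ => (p.1, p.2 * p.1⁻¹)) (fun q _ => (q.1, q.2 * q.1))
        ?_ ?_ ?_ ?_
      · intro p hp
        rw [Finset.mem_filter] at hp
        rw [Finset.mem_product, Finset.mem_filter]
        refine ⟨Finset.mem_univ _, Finset.mem_univ _, fun j => ?_⟩
        have := hp.2 (p.1⁻¹ j)
        simpa [Equiv.Perm.coe_inv] using this
      · intro q hq
        rw [Finset.mem_product, Finset.mem_filter] at hq
        rw [Finset.mem_filter]
        refine ⟨Finset.mem_univ _, fun i => ?_⟩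
        have := hq.2.2 (q.1 i)
        simpa [Equiv.Perm.coe_inv] using this
      · intro p _
        ext <;> simp
      · intro q _
        ext <;> simp
    rw [this, Finset.card_product, Finset.card_univ, Fintype.card_perm, Fintype.card_fin]
  have hSne : (Finset.univ.filter fun π : Equiv.Perm (Fin k) =>
      ∀ j, lam j + lamC N k lam (π j) = N - 1).Nonempty := by
    refine ⟨Fin.revPerm, Finset.mem_filter.mpr ⟨Finset.mem_univ _, fun j => ?_⟩⟩
    show lam j + lamC N k lam (Fin.rev j) = N - 1
    rw [lamC_rev_apply]
    have := hlam₂ j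
    omega
  have hmult : ∀ c, c < N → multCount k (lamC N k lam) c = multCount k lam (N - 1 - c) := by
    intro c hc
    rw [multCount, multCount]
    refine Finset.card_bij' (fun i _ => Fin.rev i) (fun i _ => Fin.rev i) ?_ ?_ ?_ ?_
    · intro i hi
      rw [Finset.mem_filter] at hi ⊢
      refine ⟨Finset.mem_univ _, ?_⟩
      show lam (Fin.rev i) = N - 1 - c
      have h1 : N - 1 - lam (Fin.rev i) = c := hi.2
      have h2 := hlam₂ (Fin.rev i)
      omega
    · intro i hi
      rw [Finset.mem_filter] at hi ⊢
      refine ⟨Finset.mem_univ _, ?_⟩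
      show N - 1 - lam ((Fin.rev i) : Fin k).rev = c
      rw [Fin.rev_rev]
      have := hi.2
      have := hlam₂ i
      omega
    · intro i _; exact Fin.rev_rev i
    · intro i _; exact Fin.rev_rev i
  have hprod : stabCount k (lamC N k lam)
      = ∏ c ∈ Finset.range N, Nat.factorial (multCount k lam c) := by
    rw [stabCount_eq N k _ (fun i => by have := hL2 i; omega)]
    rw [show (∏ c ∈ Finset.range N, Nat.factorial (multCount k (lamC N k lam) c))
        = ∏ c ∈ Finset.range N, Nat.factorial (multCount k lam (N - 1 - c)) from
      Finset.prod_congr rfl fun c hc => by rw [hmult c (Finset.mem_range.mp hc)]]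
    exact Finset.prod_range_reflect (fun c => Nat.factorial (multCount k lam c)) N
  refine ⟨⟨?_, ?_, ?_⟩, ?_⟩
  · -- value equals pairCount
    rw [heval (lamC N k lam) (le_of_eq (sum_lamC N k lam hlam₂)), hpcN]
    push_cast
    ring
  · rw [hpcN, hScard, hprod]
  · rw [hpcN]
    exact Nat.mul_pos (Nat.factorial_pos k) (Finset.card_pos.mpr hSne)
  · intro mu hmu1 hmu2 hsum hne
    rw [heval mu hsum]
    have hempty : (Finset.univ.filter fun π : Equiv.Perm (Fin k) =>
        ∀ j, lam j + mu (π j) = N - 1) = ∅ := by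
      rw [Finset.filter_eq_empty_iff]
      intro π _
      intro hcond
      apply hne
      have hg : lamC N k lam ∘ ⇑((Fin.revPerm : Equiv.Perm (Fin k)) * π⁻¹) = mu := by
        funext j
        show lamC N k lam (Fin.rev (π⁻¹ j)) = mu j
        rw [lamC_rev_apply]
        have := hcond (π⁻¹ j)
        rw [show π (π⁻¹ j) = j from π.apply_symm_apply j] at this
        have := hlam₂ (π⁻¹ j)
        omega
      have := antitone_unique k (lamC_antitone N k lam hlam₁)
        ((Fin.revPerm : Equiv.Perm (Fin k)) * π⁻¹) (by rw [hg]; exact hmu1)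
      rw [hg] at this
      exact this
    rw [hempty]
    simp

end SymKR
end
end

section
/- Let k̲ = (k_1,…,k_l) be a finite sequence of positive integers summing to k. For any two distinct pairs (i_1, j_1) ≠ (i_2, j_2) with 1 ≤ i_t ≤ l and 1 ≤ j_t ≤ k_{i_t}, the elements D^N(e_{j_1}^{(i_1)}) and D^N(e_{j_2}^{(i_2)}) of A_{k̲} are coprime in A_{k̲}: every common divisor of them in A_{k̲} is a unit (a nonzero rational number). -/
/-!
STATEMENT 7: Let `k̲ = (k_1,…,k_l)` be a finite sequence of positive integers summing to
`k`.  For distinct pairs `(i₁,j₁) ≠ (i₂,j₂)` with `1 ≤ j_t ≤ k_{i_t}`, the elements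
`D^N(e_{j₁}^{(i₁)})` and `D^N(e_{j₂}^{(i₂)})` of `A_{k̲}` are coprime in `A_{k̲}`: every
common divisor of them in `A_{k̲}` is a unit (a nonzero rational number).

The `k` variables are indexed by `ι := Σ i : Fin l, Fin (k_i)`, the ambient ring is
`ℚ[T_1,…,T_N, x_a (a ∈ ι)] = MvPolynomial (Fin N ⊕ ι) ℚ`; `A_{k̲}` is the subalgebra of
polynomials symmetric in the `T`-variables and invariant under the block permutations of
the `x`-variables; `e_j^{(i)}` is the `j`-th elementary symmetric polynomial of the `i`-th
block of variables, and `D^N(P) = Σ_{a∈ι} (∏_{j=1}^N (x_a − T_j)) ∂P/∂x_a`.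
-/

open MvPolynomial

set_option synthInstance.maxHeartbeats 1000000
set_option maxHeartbeats 1600000

noncomputable section

namespace SymAux

variable {σ : Type*}

/-- The map sending a multivariate polynomial to a `Polynomial` grouping monomials by
`w`-weight. -/
def Psi (w : σ → ℕ) : MvPolynomial σ ℚ →ₐ[ℚ] Polynomial (MvPolynomial σ ℚ) :=
  MvPolynomial.aeval fun v => Polynomial.C (MvPolynomial.X v) * Polynomial.X ^ (w v)

lemma eval_one_Psi (w : σ → ℕ) (p : MvPolynomial σ ℚ) :
    Polynomial.eval 1 (Psi w p) = p := by
  induction p using MvPolynomial.induction_on with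
  | C a => simp [Psi, Polynomial.algebraMap_eq]
  | add p q hp hq => simp [map_add, hp, hq]
  | mul_X p v hp =>
      rw [map_mul, Polynomial.eval_mul, hp]
      simp [Psi]

lemma Psi_X (w : σ → ℕ) (v : σ) :
    Psi w (MvPolynomial.X v) = Polynomial.C (MvPolynomial.X v) * Polynomial.X ^ (w v) :=
  MvPolynomial.aeval_X _ v

lemma Psi_injective (w : σ → ℕ) : Function.Injective (Psi w) := by
  intro p q h
  have := congrArg (Polynomial.eval 1) h
  simpa [eval_one_Psi] using this

lemma Psi_eq_zero_iff (w : σ → ℕ) (p : MvPolynomial σ ℚ) : Psi w p = 0 ↔ p = 0 := by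
  exact ⟨fun h => Psi_injective w (by rw [h, map_zero]), fun h => by rw [h, map_zero]⟩

lemma Psi_monomial (w : σ → ℕ) (d : σ →₀ ℕ) (c : ℚ) :
    Psi w (monomial d c) = Polynomial.C (monomial d c) * Polynomial.X ^ (Finsupp.weight w d) := by
  classical
  rw [Psi, MvPolynomial.aeval_monomial]
  have h1 : (d.prod fun i k => (Polynomial.C (MvPolynomial.X (R := ℚ) i) * Polynomial.X ^ (w i)) ^ k)
      = (∏ i ∈ d.support, Polynomial.C ((MvPolynomial.X (R := ℚ) i) ^ (d i)))
        * ∏ i ∈ d.support, Polynomial.X ^ (w i * d i) := by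
    rw [Finsupp.prod, ← Finset.prod_mul_distrib]
    refine Finset.prod_congr rfl fun i _ => ?_
    rw [mul_pow, ← Polynomial.C_pow, ← pow_mul]
  rw [h1]
  rw [← map_prod, MvPolynomial.prod_X_pow_eq_monomial]
  have h2 : (∏ i ∈ d.support, Polynomial.X ^ (w i * d i) : Polynomial (MvPolynomial σ ℚ))
      = Polynomial.X ^ (∑ i ∈ d.support, w i * d i) := by
    rw [Finset.prod_pow_eq_pow_sum]
  rw [h2]
  have h3 : (Finsupp.weight w d : ℕ) = ∑ i ∈ d.support, w i * d i := by
    rw [Finsupp.weight_apply, Finsupp.sum]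
    refine Finset.sum_congr rfl fun i _ => ?_
    simp [mul_comm]
  rw [h3]
  have halg : (algebraMap ℚ (Polynomial (MvPolynomial σ ℚ))) c = Polynomial.C (MvPolynomial.C c) := by
    simp [Polynomial.algebraMap_eq, MvPolynomial.algebraMap_eq]
  rw [halg]
  rw [show (monomial d c) = MvPolynomial.C c * monomial d 1 by
    rw [MvPolynomial.C_mul_monomial, mul_one]]
  rw [map_mul]
  ring

lemma coeff_coeff_Psi (w : σ → ℕ) (p : MvPolynomial σ ℚ) (d : σ →₀ ℕ) (n : ℕ) :
    MvPolynomial.coeff d ((Psi w p).coeff n)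
      = if (Finsupp.weight w d : ℕ) = n then MvPolynomial.coeff d p else 0 := by
  classical
  conv_lhs => rw [MvPolynomial.as_sum p]
  rw [map_sum, Polynomial.finset_sum_coeff]
  rw [show (∑ v ∈ p.support, ((Psi w) ((monomial v) (coeff v p))).coeff n)
      = ∑ v ∈ p.support, (if n = (Finsupp.weight w v : ℕ) then (monomial v (coeff v p)) else 0) by
    refine Finset.sum_congr rfl fun v _ => ?_
    rw [Psi_monomial, Polynomial.coeff_C_mul, Polynomial.coeff_X_pow]
    split <;> simp]
  rw [MvPolynomial.coeff_sum]
  rw [show (∑ v ∈ p.support, coeff d (if n = (Finsupp.weight w v : ℕ) then (monomial v (coeff v p)) else 0))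
      = ∑ v ∈ p.support, (if v = d then (if (Finsupp.weight w d : ℕ) = n then coeff d p else 0) else 0) by
    refine Finset.sum_congr rfl fun v _ => ?_
    by_cases hv : v = d
    · subst hv
      by_cases hn : (Finsupp.weight w v : ℕ) = n
      · simp [hn, coeff_monomial]
      · have : ¬ (n = (Finsupp.weight w v : ℕ)) := fun h => hn h.symm
        simp [this, hn]
    · split <;> simp [coeff_monomial, hv]]
  rw [Finset.sum_ite_eq' p.support d]
  by_cases hd : d ∈ p.support
  · simp [hd]
  · have : coeff d p = 0 := by rwa [MvPolynomial.notMem_support_iff] at hd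
    simp [hd, this]

lemma Psi_of_isWeightedHomogeneous {w : σ → ℕ} {p : MvPolynomial σ ℚ} {n : ℕ}
    (h : IsWeightedHomogeneous w p n) :
    Psi w p = Polynomial.C p * Polynomial.X ^ n := by
  classical
  conv_lhs => rw [MvPolynomial.as_sum p]
  rw [map_sum]
  conv_rhs => rw [MvPolynomial.as_sum p]
  rw [map_sum, Finset.sum_mul]
  refine Finset.sum_congr rfl fun v hv => ?_
  rw [Psi_monomial]
  congr 1
  have : (Finsupp.weight w v : ℕ) = n := h (by rwa [MvPolynomial.mem_support_iff] at hv)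
  rw [this]

lemma isWeightedHomogeneous_of_Psi {w : σ → ℕ} {p : MvPolynomial σ ℚ} {n : ℕ}
    (h : Psi w p = Polynomial.C p * Polynomial.X ^ n) :
    IsWeightedHomogeneous w p n := by
  intro d hd
  by_contra hne
  have := coeff_coeff_Psi w p d (Finsupp.weight w d)
  simp only [if_pos rfl] at this
  rw [h, Polynomial.coeff_C_mul, Polynomial.coeff_X_pow, if_neg hne] at this
  simp at this
  exact hd this.symm

/-- A polynomial `f` over a domain with `natDegree = natTrailingDegree = e` is `C a * X^e`. -/
lemma poly_eq_C_mul_X_pow {A : Type*} [CommRing A] (f : Polynomial A) (e : ℕ)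
    (h1 : f.natDegree = e) (h2 : f.natTrailingDegree = e) :
    f = Polynomial.C (f.coeff e) * Polynomial.X ^ e := by
  ext k
  rw [Polynomial.coeff_C_mul, Polynomial.coeff_X_pow]
  by_cases hk : k = e
  · subst hk; simp
  · rw [if_neg hk, mul_zero]
    rcases lt_or_gt_of_ne hk with hlt | hgt
    · exact Polynomial.coeff_eq_zero_of_lt_natTrailingDegree (by omega)
    · exact Polynomial.coeff_eq_zero_of_natDegree_lt (by omega)

/-- Divisors of weighted-homogeneous polynomials are weighted homogeneous. -/
lemma divisor_isWeightedHomogeneous {w : σ → ℕ} {A q r : MvPolynomial σ ℚ} {n : ℕ}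
    (hA : A ≠ 0) (h : IsWeightedHomogeneous w A n) (hqr : A = q * r) :
    ∃ dq dr, dq + dr = n ∧ IsWeightedHomogeneous w q dq ∧ IsWeightedHomogeneous w r dr := by
  have hq0 : q ≠ 0 := by rintro rfl; simp at hqr; exact hA hqr
  have hr0 : r ≠ 0 := by rintro rfl; simp at hqr; exact hA hqr
  have hPq : Psi w q ≠ 0 := by rw [Ne, Psi_eq_zero_iff]; exact hq0
  have hPr : Psi w r ≠ 0 := by rw [Ne, Psi_eq_zero_iff]; exact hr0
  have hmul : Psi w q * Psi w r = Polynomial.C A * Polynomial.X ^ n := by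
    rw [← map_mul, ← hqr, Psi_of_isWeightedHomogeneous h]
  have hCX0 : (Polynomial.C A * Polynomial.X ^ n : Polynomial (MvPolynomial σ ℚ)) ≠ 0 := by
    rw [← hmul]; exact mul_ne_zero hPq hPr
  have hnd : (Psi w q).natDegree + (Psi w r).natDegree = n := by
    rw [← Polynomial.natDegree_mul hPq hPr, hmul, Polynomial.natDegree_C_mul_X_pow _ _ hA]
  have hnt : (Psi w q).natTrailingDegree + (Psi w r).natTrailingDegree = n := by
    rw [← Polynomial.natTrailingDegree_mul hPq hPr, hmul, Polynomial.C_mul_X_pow_eq_monomial,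
      Polynomial.natTrailingDegree_monomial hA]
  have hq' : (Psi w q).natTrailingDegree = (Psi w q).natDegree := by
    have := Polynomial.natTrailingDegree_le_natDegree (Psi w q)
    have := Polynomial.natTrailingDegree_le_natDegree (Psi w r)
    omega
  refine ⟨(Psi w q).natDegree, (Psi w r).natDegree, hnd, ?_, ?_⟩
  · apply isWeightedHomogeneous_of_Psi
    have := poly_eq_C_mul_X_pow (Psi w q) (Psi w q).natDegree rfl hq'
    have ha : (Psi w q).coeff (Psi w q).natDegree = q := by
      conv_rhs => rw [← eval_one_Psi w q]
      conv_rhs => rw [this]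
      simp
    rwa [ha] at this
  · apply isWeightedHomogeneous_of_Psi
    have hr' : (Psi w r).natTrailingDegree = (Psi w r).natDegree := by
      have := Polynomial.natTrailingDegree_le_natDegree (Psi w q)
      have := Polynomial.natTrailingDegree_le_natDegree (Psi w r)
      omega
    have := poly_eq_C_mul_X_pow (Psi w r) (Psi w r).natDegree rfl hr'
    have ha : (Psi w r).coeff (Psi w r).natDegree = r := by
      conv_rhs => rw [← eval_one_Psi w r]
      conv_rhs => rw [this]
      simp
    rwa [ha] at this

/-- A unit is weighted homogeneous only of degree 0. -/
lemma isUnit_isWeightedHomogeneous_deg_zero {w : σ → ℕ} {p : MvPolynomial σ ℚ} {m : ℕ}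
    (hu : IsUnit p) (h : IsWeightedHomogeneous w p m) : m = 0 := by
  obtain ⟨u, rfl⟩ := hu
  have h1 : ((u : MvPolynomial σ ℚ) * (↑u⁻¹ : MvPolynomial σ ℚ)) = 1 := u.mul_inv
  obtain ⟨dq, dr, hsum, hq, -⟩ :=
    divisor_isWeightedHomogeneous (w := w) (one_ne_zero) (isWeightedHomogeneous_one ℚ w) h1.symm
  have : (u : MvPolynomial σ ℚ) ≠ 0 := u.ne_zero
  have := IsWeightedHomogeneous.inj_right this h hq
  omega

lemma eq_C_of_two_weights {w w' : σ → ℕ} {p : MvPolynomial σ ℚ}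
    (cov : ∀ v, w v ≠ 0 ∨ w' v ≠ 0)
    (h : IsWeightedHomogeneous w p 0) (h' : IsWeightedHomogeneous w' p 0) :
    p = MvPolynomial.C (MvPolynomial.coeff 0 p) := by
  classical
  apply MvPolynomial.ext
  intro d
  rw [MvPolynomial.coeff_C]
  by_cases hd : (0 : σ →₀ ℕ) = d
  · rw [if_pos hd, ← hd]
  · rw [if_neg hd]
    by_contra hc
    have h1 : (Finsupp.weight w d : ℕ) = 0 := h hc
    have h2 : (Finsupp.weight w' d : ℕ) = 0 := h' hc
    apply hd
    ext v
    simp only [Finsupp.coe_zero, Pi.zero_apply]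
    by_contra hv
    have hvmem : v ∈ d.support := Finsupp.mem_support_iff.mpr (fun hh => hv hh.symm)
    rw [Finsupp.weight_apply, Finsupp.sum] at h1 h2
    have hz1 := (Finset.sum_eq_zero_iff.mp h1) v hvmem
    have hz2 := (Finset.sum_eq_zero_iff.mp h2) v hvmem
    simp only [smul_eq_mul, Nat.mul_eq_zero] at hz1 hz2
    rcases cov v with hw | hw
    · rcases hz1 with h | h
      · exact hv h.symm
      · exact hw h
    · rcases hz2 with h | h
      · exact hv h.symm
      · exact hw h

lemma eq_C_of_isWeightedHomogeneous_one_zero {p : MvPolynomial σ ℚ}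
    (h : IsWeightedHomogeneous (fun _ : σ => (1:ℕ)) p 0) :
    p = MvPolynomial.C (MvPolynomial.coeff 0 p) :=
  eq_C_of_two_weights (fun _ => Or.inl one_ne_zero) h h

lemma isWH_pow {w : σ → ℕ} {q : MvPolynomial σ ℚ} {m : ℕ}
    (h : IsWeightedHomogeneous w q m) (k : ℕ) : IsWeightedHomogeneous w (q ^ k) (k * m) := by
  induction k with
  | zero => simpa using isWeightedHomogeneous_one ℚ w
  | succ k ih =>
      rw [pow_succ]
      have := ih.mul h
      convert this using 1
      ring

/-- Transport of weighted homogeneity along `aeval`. -/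
lemma aeval_isWeightedHomogeneous {τ : Type*} (g : σ → MvPolynomial τ ℚ)
    (w : σ → ℕ) (w' : τ → ℕ) (hg : ∀ v, IsWeightedHomogeneous w' (g v) (w v))
    {p : MvPolynomial σ ℚ} {n : ℕ} (hp : IsWeightedHomogeneous w p n) :
    IsWeightedHomogeneous w' (MvPolynomial.aeval g p) n := by
  classical
  conv_lhs =>
    rw [MvPolynomial.as_sum p]
  rw [map_sum]
  apply IsWeightedHomogeneous.sum
  intro d hd
  rw [MvPolynomial.aeval_monomial]
  have h1 : IsWeightedHomogeneous w' ((algebraMap ℚ (MvPolynomial τ ℚ)) (coeff d p)) 0 := by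
    rw [MvPolynomial.algebraMap_eq]; exact isWeightedHomogeneous_C w' _
  have h2 : IsWeightedHomogeneous w' (d.prod fun i k => g i ^ k) (Finsupp.weight w d) := by
    rw [Finsupp.prod]
    have := IsWeightedHomogeneous.prod (R := ℚ) d.support (fun i => g i ^ (d i))
      (fun i => (d i) * w i) (w := w') (fun i _ => isWH_pow (hg i) (d i))
    convert this using 1
    rw [Finsupp.weight_apply, Finsupp.sum]; simp only [smul_eq_mul]
  have h3 := h1.mul h2
  rw [zero_add] at h3
  have hw : (Finsupp.weight w d : ℕ) = n := hp (by rwa [MvPolynomial.mem_support_iff] at hd)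
  rwa [hw] at h3


/-! ### Part B: symmetric-polynomial gadgets in `Fin n` variables -/

open Finset

abbrev MvQ (n : ℕ) := MvPolynomial (Fin n) ℚ

/-- power sum -/
def pS (n r : ℕ) : MvQ n := ∑ a : Fin n, X a ^ r

/-- elementary symmetric polynomial in the variables other than `a` -/
def eHat (n : ℕ) (a : Fin n) (r : ℕ) : MvQ n :=
  ∑ S ∈ Finset.powersetCard r (Finset.univ.erase a), ∏ v ∈ S, X v

/-- product of all the variables -/
def En (n : ℕ) : MvQ n := ∏ v : Fin n, X v

/-- `Gp n N r = ∑ a, x_a^N e_r(x other than a)` -/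
def Gp (n N r : ℕ) : MvQ n := ∑ a : Fin n, X a ^ N * eHat n a r

lemma isWH_X_pow {n : ℕ} (a : Fin n) (r : ℕ) :
    IsWeightedHomogeneous (fun _ => 1) ((X a : MvQ n) ^ r) r := by
  have := isWH_pow (isWeightedHomogeneous_X ℚ (fun _ : Fin n => (1:ℕ)) a) r
  simpa using this

lemma isWH_prodX {n : ℕ} (S : Finset (Fin n)) :
    IsWeightedHomogeneous (fun _ => 1) (∏ v ∈ S, (X v : MvQ n)) S.card := by
  have := IsWeightedHomogeneous.prod (R := ℚ) S (fun v => (X v : MvQ n)) (fun _ => 1)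
    (w := fun _ => 1) (fun v _ => isWeightedHomogeneous_X ℚ _ v)
  simpa using this

lemma isWH_eHat {n : ℕ} (a : Fin n) (r : ℕ) :
    IsWeightedHomogeneous (fun _ => 1) (eHat n a r) r := by
  apply IsWeightedHomogeneous.sum
  intro S hS
  have hcard : S.card = r := (Finset.mem_powersetCard.mp hS).2
  have := isWH_prodX S
  rwa [hcard] at this

lemma isWH_pS (n r : ℕ) : IsWeightedHomogeneous (fun _ => 1) (pS n r) r :=
  IsWeightedHomogeneous.sum _ _ _ fun a _ => isWH_X_pow a r

lemma isWH_Gp (n N r : ℕ) : IsWeightedHomogeneous (fun _ => 1) (Gp n N r) (N + r) :=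
  IsWeightedHomogeneous.sum _ _ _ fun a _ => (isWH_X_pow a N).mul (isWH_eHat a r)

/-! evaluations -/

lemma dvd_eval_zero {n : ℕ} {A B : MvQ n} (h : A ∣ B) (v : Fin n → ℚ)
    (hA : MvPolynomial.eval v A = 0) : MvPolynomial.eval v B = 0 := by
  obtain ⟨c, rfl⟩ := h
  rw [map_mul, hA, zero_mul]

lemma eval_prodX {n : ℕ} (v : Fin n → ℚ) (S : Finset (Fin n)) :
    MvPolynomial.eval v (∏ x ∈ S, (X x : MvQ n)) = ∏ x ∈ S, v x := by
  rw [map_prod]; simp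

lemma eval_ones_eHat {n : ℕ} (a : Fin n) (r : ℕ) :
    MvPolynomial.eval (fun _ => (1:ℚ)) (eHat n a r) = ((n-1).choose r : ℚ) := by
  rw [eHat, map_sum]
  have : ∀ S ∈ Finset.powersetCard r (Finset.univ.erase a),
      MvPolynomial.eval (fun _ => (1:ℚ)) (∏ v ∈ S, (X v : MvQ n)) = 1 := by
    intro S _; rw [eval_prodX]; simp
  rw [Finset.sum_congr rfl this, Finset.sum_const, Finset.card_powersetCard,
    Finset.card_erase_of_mem (Finset.mem_univ a)]
  simp [Finset.card_univ]

lemma eval_ones_pS (n r : ℕ) :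
    MvPolynomial.eval (fun _ => (1:ℚ)) (pS n r) = (n : ℚ) := by
  rw [pS, map_sum]
  simp [Finset.card_univ]

lemma eval_ones_Gp (n N r : ℕ) :
    MvPolynomial.eval (fun _ => (1:ℚ)) (Gp n N r) = (n : ℚ) * ((n-1).choose r : ℚ) := by
  rw [Gp, map_sum]
  have : ∀ a ∈ (Finset.univ : Finset (Fin n)),
      MvPolynomial.eval (fun _ => (1:ℚ)) (X a ^ N * eHat n a r) = ((n-1).choose r : ℚ) := by
    intro a _
    rw [map_mul, map_pow, MvPolynomial.eval_X, one_pow, one_mul, eval_ones_eHat]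
  rw [Finset.sum_congr rfl this, Finset.sum_const]
  simp [Finset.card_univ, mul_comm]

lemma pS_ne_zero {n : ℕ} (hn : 1 ≤ n) (r : ℕ) : pS n r ≠ 0 := by
  intro h
  have := eval_ones_pS n r
  rw [h, map_zero] at this
  have h2 : (n:ℚ) = 0 := this.symm
  exact (Nat.cast_ne_zero.mpr (by omega : n ≠ 0)) h2

lemma Gp_ne_zero {n N r : ℕ} (hn : 1 ≤ n) (hr : r ≤ n - 1) : Gp n N r ≠ 0 := by
  intro h
  have := eval_ones_Gp n N r
  rw [h, map_zero] at this
  have hc : ((n : ℚ) * ((n-1).choose r : ℚ)) ≠ 0 := by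
    apply mul_ne_zero
    · exact Nat.cast_ne_zero.mpr (by omega : n ≠ 0)
    · exact Nat.cast_ne_zero.mpr (Nat.choose_pos hr).ne'
  exact hc this.symm

/-- the point which is `0` at `a` and `1` elsewhere -/
def uPt (n : ℕ) (a : Fin n) : Fin n → ℚ := fun v => if v = a then 0 else 1

lemma eval_uPt_prodX {n : ℕ} (a : Fin n) (S : Finset (Fin n)) :
    MvPolynomial.eval (uPt n a) (∏ x ∈ S, (X x : MvQ n)) = if a ∈ S then 0 else 1 := by
  rw [eval_prodX]
  by_cases ha : a ∈ S
  · rw [if_pos ha]; exact Finset.prod_eq_zero ha (by simp [uPt])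
  · rw [if_neg ha]
    apply Finset.prod_eq_one
    intro x hx
    have : x ≠ a := fun h => ha (h ▸ hx)
    simp [uPt, this]

lemma eval_uPt_eHat {n : ℕ} (a b : Fin n) (hab : a ≠ b) (r : ℕ) :
    MvPolynomial.eval (uPt n a) (eHat n b r) = ((n-2).choose r : ℚ) := by
  classical
  rw [eHat, map_sum]
  have h1 : ∀ S ∈ Finset.powersetCard r (Finset.univ.erase b),
      MvPolynomial.eval (uPt n a) (∏ v ∈ S, (X v : MvQ n)) = if a ∉ S then 1 else 0 := by
    intro S _
    rw [eval_uPt_prodX]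
    by_cases h : a ∈ S <;> simp [h]
  rw [Finset.sum_congr rfl h1, Finset.sum_boole]
  have h2 : Finset.filter (fun S => a ∉ S) (Finset.powersetCard r (Finset.univ.erase b))
      = Finset.powersetCard r ((Finset.univ.erase b).erase a) := by
    ext S
    simp only [Finset.mem_filter, Finset.mem_powersetCard]
    constructor
    · rintro ⟨⟨hsub, hcard⟩, hna⟩
      exact ⟨Finset.subset_erase.mpr ⟨hsub, hna⟩, hcard⟩
    · rintro ⟨hsub, hcard⟩
      have := Finset.subset_erase.mp hsub
      exact ⟨⟨this.1, hcard⟩, this.2⟩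
  rw [h2, Finset.card_powersetCard]
  congr 2
  rw [Finset.card_erase_of_mem, Finset.card_erase_of_mem (Finset.mem_univ b)]
  · rw [Finset.card_univ, Fintype.card_fin]; omega
  · exact Finset.mem_erase.mpr ⟨hab, Finset.mem_univ a⟩

lemma eval_uPt_pS {n r : ℕ} (a : Fin n) (hr : 1 ≤ r) :
    MvPolynomial.eval (uPt n a) (pS n r) = (n : ℚ) - 1 := by
  classical
  rw [pS, map_sum]
  have h1 : ∀ v ∈ (Finset.univ : Finset (Fin n)),
      MvPolynomial.eval (uPt n a) ((X v : MvQ n) ^ r) = if v = a then 0 else 1 := by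
    intro v _
    rw [map_pow, MvPolynomial.eval_X]
    by_cases h : v = a <;> simp [uPt, h, zero_pow (by omega : r ≠ 0)]
  rw [Finset.sum_congr rfl h1]
  have h2 : ∀ v ∈ (Finset.univ : Finset (Fin n)),
      (if v = a then (0:ℚ) else 1) = 1 - (if v = a then 1 else 0) := by
    intro v _; by_cases h : v = a <;> simp [h]
  rw [Finset.sum_congr rfl h2, Finset.sum_sub_distrib, Finset.sum_const, Finset.sum_ite_eq']
  simp [Finset.card_univ]

lemma eval_uPt_Gp {n N r : ℕ} (a : Fin n) (hN : 1 ≤ N) :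
    MvPolynomial.eval (uPt n a) (Gp n N r) = ((n : ℚ) - 1) * ((n-2).choose r : ℚ) := by
  classical
  rw [Gp, map_sum]
  have h1 : ∀ b ∈ (Finset.univ : Finset (Fin n)),
      MvPolynomial.eval (uPt n a) (X b ^ N * eHat n b r)
        = if b = a then 0 else ((n-2).choose r : ℚ) := by
    intro b _
    rw [map_mul, map_pow, MvPolynomial.eval_X]
    by_cases h : b = a
    · simp [uPt, h, zero_pow (by omega : N ≠ 0)]
    · have : a ≠ b := fun hh => h hh.symm
      rw [eval_uPt_eHat a b this]
      simp [uPt, h]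
  rw [Finset.sum_congr rfl h1]
  have h2 : ∀ b ∈ (Finset.univ : Finset (Fin n)),
      (if b = a then (0:ℚ) else ((n-2).choose r : ℚ))
        = ((n-2).choose r : ℚ) - (if b = a then ((n-2).choose r : ℚ) else 0) := by
    intro b _; by_cases h : b = a <;> simp [h]
  rw [Finset.sum_congr rfl h2, Finset.sum_sub_distrib, Finset.sum_const, Finset.sum_ite_eq']
  simp [Finset.card_univ]
  ring

/-! ### sums over `powersetCard (card - 1)` -/

lemma sum_powersetCard_pred {V : Type*} [DecidableEq V] {β : Type*} [AddCommMonoid β]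
    (t : Finset V) {m : ℕ} (ht : t.card = m + 1) (f : Finset V → β) :
    ∑ S ∈ Finset.powersetCard m t, f S = ∑ b ∈ t, f (t.erase b) := by
  refine (Finset.sum_bij (fun b _ => t.erase b) ?_ ?_ ?_ ?_).symm
  · intro b hb
    rw [Finset.mem_powersetCard]
    exact ⟨Finset.erase_subset _ _, by rw [Finset.card_erase_of_mem hb, ht]; omega⟩
  · intro b₁ hb₁ b₂ hb₂ heq
    by_contra hne
    have hmem : b₂ ∈ t.erase b₁ := Finset.mem_erase.mpr ⟨fun h => hne h.symm, hb₂⟩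
    rw [heq] at hmem
    exact (Finset.mem_erase.mp hmem).1 rfl
  · intro S hS
    rw [Finset.mem_powersetCard] at hS
    have hcard : (t \ S).card = 1 := by
      rw [Finset.card_sdiff_of_subset hS.1, ht, hS.2]; omega
    obtain ⟨b, hb⟩ := Finset.card_eq_one.mp hcard
    have hbt : b ∈ t := by
      have : b ∈ t \ S := hb ▸ Finset.mem_singleton_self b
      exact (Finset.mem_sdiff.mp this).1
    have hbS : b ∉ S := by
      have : b ∈ t \ S := hb ▸ Finset.mem_singleton_self b
      exact (Finset.mem_sdiff.mp this).2
    refine ⟨b, hbt, ?_⟩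
    apply (Finset.eq_of_subset_of_card_le (Finset.subset_erase.mpr ⟨hS.1, hbS⟩) ?_).symm
    rw [Finset.card_erase_of_mem hbt, ht, hS.2]; omega
  · intro b hb; rfl

lemma swap_erase_sum {n : ℕ} {β : Type*} [AddCommGroup β] (F : Fin n → Fin n → β) :
    ∑ b : Fin n, ∑ a ∈ Finset.univ.erase b, F a b
      = ∑ a : Fin n, ∑ b ∈ Finset.univ.erase a, F a b := by
  have h1 : ∀ b : Fin n, ∑ a ∈ Finset.univ.erase b, F a b = (∑ a : Fin n, F a b) - F b b :=
    fun b => Finset.sum_erase_eq_sub (Finset.mem_univ b)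
  have h2 : ∀ a : Fin n, ∑ b ∈ Finset.univ.erase a, F a b = (∑ b : Fin n, F a b) - F a a :=
    fun a => Finset.sum_erase_eq_sub (Finset.mem_univ a)
  rw [Finset.sum_congr rfl (fun b _ => h1 b), Finset.sum_congr rfl (fun a _ => h2 a),
    Finset.sum_sub_distrib, Finset.sum_sub_distrib, Finset.sum_comm]

/-! ### the substitution sending the last variable to 0 -/

def lower (n : ℕ) : MvQ (n+1) →ₐ[ℚ] MvQ n :=
  MvPolynomial.aeval (Fin.snoc (fun i => X i) 0)

lemma lower_X_castSucc {n : ℕ} (i : Fin n) : lower n (X i.castSucc) = X i := by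
  rw [lower, MvPolynomial.aeval_X, Fin.snoc_castSucc]

lemma lower_X_last {n : ℕ} : lower n (X (Fin.last n)) = 0 := by
  rw [lower, MvPolynomial.aeval_X, Fin.snoc_last]

lemma lower_pS {n r : ℕ} (hr : 1 ≤ r) : lower n (pS (n+1) r) = pS n r := by
  rw [pS, map_sum, Fin.sum_univ_castSucc]
  have hlast : lower n (X (Fin.last n) ^ r) = 0 := by
    rw [map_pow, lower_X_last, zero_pow (by omega : r ≠ 0)]
  rw [hlast, add_zero, pS]
  refine Finset.sum_congr rfl fun i _ => ?_
  rw [map_pow, lower_X_castSucc]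

lemma lower_eHat {n : ℕ} (a : Fin n) (r : ℕ) :
    lower n (eHat (n+1) a.castSucc r) = eHat n a r := by
  classical
  rw [eHat, map_sum]
  rw [← Finset.sum_filter_add_sum_filter_not
    (Finset.powersetCard r (Finset.univ.erase a.castSucc)) (fun S => Fin.last n ∈ S)]
  have hzero : ∑ S ∈ Finset.filter (fun S => Fin.last n ∈ S)
      (Finset.powersetCard r (Finset.univ.erase a.castSucc)),
      lower n (∏ v ∈ S, (X v : MvQ (n+1))) = 0 := by
    apply Finset.sum_eq_zero
    intro S hS
    rw [map_prod]
    exact Finset.prod_eq_zero (Finset.mem_filter.mp hS).2 lower_X_last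
  rw [hzero, zero_add]
  have hset : Finset.filter (fun S => ¬ Fin.last n ∈ S)
      (Finset.powersetCard r (Finset.univ.erase a.castSucc))
      = Finset.map ⟨fun T => T.map Fin.castSuccEmb, Finset.map_injective _⟩
          (Finset.powersetCard r (Finset.univ.erase a)) := by
    ext S
    simp only [Finset.mem_filter, Finset.mem_powersetCard, Finset.mem_map,
      Function.Embedding.coeFn_mk]
    constructor
    · rintro ⟨⟨hsub, hcard⟩, hlast⟩
      have hSsub : S ⊆ Finset.map Fin.castSuccEmb Finset.univ := by
        intro x hx
        rw [Finset.mem_map]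
        have hxne : x ≠ Fin.last n := fun h => hlast (h ▸ hx)
        obtain ⟨y, hy⟩ := Fin.exists_castSucc_eq.mpr hxne
        exact ⟨y, Finset.mem_univ y, hy⟩
      obtain ⟨u, -, rfl⟩ := Finset.subset_map_iff.mp hSsub
      refine ⟨u, ⟨?_, by simpa using hcard⟩, rfl⟩
      intro v hv
      have hvS : v.castSucc ∈ Finset.map Fin.castSuccEmb u := by
        rw [Finset.mem_map]; exact ⟨v, hv, rfl⟩
      have := hsub hvS
      rw [Finset.mem_erase] at this
      refine Finset.mem_erase.mpr ⟨?_, Finset.mem_univ v⟩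
      intro h; exact this.1 (by rw [h])
    · rintro ⟨T, ⟨hsub, hcard⟩, rfl⟩
      refine ⟨⟨?_, by simpa using hcard⟩, ?_⟩
      · intro x hx
        rw [Finset.mem_map] at hx
        obtain ⟨v, hv, rfl⟩ := hx
        have := Finset.mem_erase.mp (hsub hv)
        refine Finset.mem_erase.mpr ⟨?_, Finset.mem_univ _⟩
        intro h
        exact this.1 (Fin.castSucc_injective n h)
      · intro h
        rw [Finset.mem_map] at h
        obtain ⟨v, -, hv⟩ := h
        exact (Fin.castSucc_lt_last v).ne hv
  rw [hset, Finset.sum_map, eHat]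
  refine Finset.sum_congr rfl fun T _ => ?_
  simp only [Function.Embedding.coeFn_mk]
  rw [Finset.prod_map, map_prod]
  refine Finset.prod_congr rfl fun v _ => ?_
  exact lower_X_castSucc v

lemma lower_Gp {n N r : ℕ} (hN : 1 ≤ N) : lower n (Gp (n+1) N r) = Gp n N r := by
  rw [Gp, map_sum, Fin.sum_univ_castSucc]
  have hlast : lower n (X (Fin.last n) ^ N * eHat (n+1) (Fin.last n) r) = 0 := by
    rw [map_mul, map_pow, lower_X_last, zero_pow (by omega : N ≠ 0), zero_mul]
  rw [hlast, add_zero, Gp]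
  refine Finset.sum_congr rfl fun i _ => ?_
  rw [map_mul, map_pow, lower_X_castSucc, lower_eHat]

/-! ### identities -/

lemma eHat_top {n : ℕ} (a : Fin n) :
    eHat n a (n-1) = ∏ v ∈ Finset.univ.erase a, X v := by
  have hcard : (Finset.univ.erase a).card = n - 1 := by
    rw [Finset.card_erase_of_mem (Finset.mem_univ a), Finset.card_univ, Fintype.card_fin]
  rw [eHat, ← hcard, Finset.powersetCard_self, Finset.sum_singleton]

lemma F2 (n M : ℕ) : Gp n (M+1) (n-1) = En n * pS n M := by
  rw [Gp, En, pS, Finset.mul_sum]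
  refine Finset.sum_congr rfl fun a _ => ?_
  rw [eHat_top]
  have h := Finset.mul_prod_erase Finset.univ (fun v => (X v : MvQ n)) (Finset.mem_univ a)
  calc (X a : MvQ n) ^ (M+1) * ∏ v ∈ Finset.univ.erase a, X v
      = X a ^ M * (X a * ∏ v ∈ Finset.univ.erase a, X v) := by ring
    _ = (∏ v : Fin n, X v) * X a ^ M := by rw [h]; ring

lemma F3 (n M : ℕ) :
    (∑ b : Fin (n+2), ∏ v ∈ Finset.univ.erase b, (X v : MvQ (n+2))) * pS (n+2) (M+1)
      = Gp (n+2) (M+2) n + En (n+2) * pS (n+2) M := by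
  classical
  rw [pS, Finset.sum_mul]
  have hexp : ∀ b : Fin (n+2),
      (∏ v ∈ Finset.univ.erase b, (X v : MvQ (n+2))) * (∑ a : Fin (n+2), X a ^ (M+1))
        = (∑ a ∈ Finset.univ.erase b,
              (X a ^ (M+2) * ∏ v ∈ (Finset.univ.erase b).erase a, X v))
          + (X b ^ M * En (n+2)) := by
    intro b
    rw [Finset.mul_sum, ← Finset.sum_erase_add _ _ (Finset.mem_univ b)]
    congr 1
    · refine Finset.sum_congr rfl fun a ha => ?_
      rw [← Finset.mul_prod_erase _ X ha]
      ring
    · rw [En, ← Finset.mul_prod_erase Finset.univ X (Finset.mem_univ b)]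
      ring
  rw [Finset.sum_congr rfl (fun b _ => hexp b), Finset.sum_add_distrib]
  congr 1
  · rw [swap_erase_sum (fun a b => X a ^ (M+2) * ∏ v ∈ (Finset.univ.erase b).erase a, X v), Gp]
    refine Finset.sum_congr rfl fun a _ => ?_
    have hcard : (Finset.univ.erase a).card = n + 1 := by
      rw [Finset.card_erase_of_mem (Finset.mem_univ a), Finset.card_univ, Fintype.card_fin]; omega
    rw [eHat, sum_powersetCard_pred _ hcard, Finset.mul_sum]
    refine Finset.sum_congr rfl fun b hb => ?_
    rw [Finset.erase_right_comm]
  · rw [En, pS, Finset.mul_sum]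
    refine Finset.sum_congr rfl fun b _ => ?_
    ring


/-! ### Part C: coprimality -/

lemma isUnit_C_of_ne {σ : Type*} {c : ℚ} (hc : c ≠ 0) : IsUnit (MvPolynomial.C (σ := σ) c) :=
  IsUnit.of_mul_eq_one (MvPolynomial.C c⁻¹)
    (by rw [← map_mul, mul_inv_cancel₀ hc, map_one])

lemma irred_not_isWH_zero {n : ℕ} {q : MvQ n} (hirr : Irreducible q)
    (hq : IsWeightedHomogeneous (fun _ => 1) q 0) : False := by
  have hCq := eq_C_of_isWeightedHomogeneous_one_zero hq
  have hc : MvPolynomial.coeff 0 q ≠ 0 := by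
    intro h; rw [h, map_zero] at hCq; exact hirr.ne_zero hCq
  exact hirr.not_isUnit (hCq ▸ isUnit_C_of_ne hc)

lemma assoc_of_irred_dvd_deg_one {n : ℕ} {q A : MvQ n} (hirr : Irreducible q)
    (hA : A ≠ 0) (hAw : IsWeightedHomogeneous (fun _ => 1) A 1) (hdvd : q ∣ A) :
    ∃ c : ℚ, c ≠ 0 ∧ A = MvPolynomial.C c * q := by
  obtain ⟨r, hr⟩ := hdvd
  obtain ⟨dq, dr, hsum, hq, hrw⟩ := divisor_isWeightedHomogeneous hA hAw hr
  have hr0 : r ≠ 0 := by rintro rfl; rw [mul_zero] at hr; exact hA hr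
  rcases (by omega : dq = 0 ∨ (dq = 1 ∧ dr = 0)) with h | ⟨h1, h2⟩
  · exact absurd (irred_not_isWH_zero hirr (h ▸ hq)) (fun h => h)
  · subst h2
    have hCr := eq_C_of_isWeightedHomogeneous_one_zero hrw
    have hc : MvPolynomial.coeff 0 r ≠ 0 := by
      intro h; rw [h, map_zero] at hCr; exact hr0 hCr
    refine ⟨MvPolynomial.coeff 0 r, hc, ?_⟩
    rw [hr]
    conv_lhs => rw [hCr]
    ring

lemma dvd_of_C_mul {n : ℕ} {c : ℚ} (hc : c ≠ 0) {q B : MvQ n} (h : q ∣ B) :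
    (MvPolynomial.C c * q) ∣ B := by
  obtain ⟨t, rfl⟩ := h
  refine ⟨MvPolynomial.C c⁻¹ * t, ?_⟩
  rw [show (MvPolynomial.C c * q) * (MvPolynomial.C c⁻¹ * t)
      = (MvPolynomial.C c * MvPolynomial.C c⁻¹) * (q * t) by ring,
    ← map_mul, mul_inv_cancel₀ hc, map_one, one_mul]

lemma no_unit_lower {n : ℕ} {q : MvQ (n+1)} {d : ℕ} (hirr : Irreducible q)
    (hq : IsWeightedHomogeneous (fun _ => 1) q d) (hu : IsUnit (lower n q)) : False := by
  have hl0 : lower n q ≠ 0 := hu.ne_zero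
  have hld : IsWeightedHomogeneous (fun _ => 1) (lower n q) d := by
    apply aeval_isWeightedHomogeneous _ (fun _ => 1) (fun _ => 1) ?_ hq
    intro v
    refine Fin.lastCases ?_ ?_ v
    · rw [Fin.snoc_last]
      intro d hd; simp at hd
    · intro i; rw [Fin.snoc_castSucc]
      exact isWeightedHomogeneous_X ℚ _ i
  have hd0 : d = 0 := isUnit_isWeightedHomogeneous_deg_zero hu hld
  exact irred_not_isWH_zero hirr (hd0 ▸ hq)

lemma Plemma : ∀ n, 2 ≤ n → ∀ r, 1 ≤ r → ∀ q : MvQ n, Irreducible q →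
    q ∣ pS n r → q ∣ pS n (r+1) → False := by
  intro n hn
  induction n, hn using Nat.le_induction with
  | base =>
    intro r hr q hirr h1 h2
    have hprime : Prime q := (UniqueFactorizationMonoid.irreducible_iff_prime).mp hirr
    have hid : (X 1 : MvQ 2) * pS 2 r - pS 2 (r+1) = X 0 ^ r * (X 1 - X 0) := by
      rw [pS, pS, Fin.sum_univ_two, Fin.sum_univ_two]; ring
    have hdvd : q ∣ (X 0 : MvQ 2) ^ r * (X 1 - X 0) := by
      rw [← hid]; exact dvd_sub (h1.mul_left _) h2
    rcases hprime.dvd_mul.mp hdvd with h | h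
    · have hX : q ∣ (X 0 : MvQ 2) := hprime.dvd_of_dvd_pow h
      obtain ⟨c, hc, hA⟩ := assoc_of_irred_dvd_deg_one hirr (MvPolynomial.X_ne_zero 0)
        (by simpa using isWeightedHomogeneous_X ℚ (fun _ : Fin 2 => (1:ℕ)) 0) hX
      have hXdvd : (X 0 : MvQ 2) ∣ pS 2 r := hA ▸ dvd_of_C_mul hc h1
      have heval := dvd_eval_zero hXdvd ![0, 1] (by simp)
      rw [pS, Fin.sum_univ_two] at heval
      simp [zero_pow (by omega : r ≠ 0)] at heval
    · have hsub : IsWeightedHomogeneous (fun _ : Fin 2 => (1:ℕ)) ((X 1 : MvQ 2) - X 0) 1 := by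
        rw [← mem_weightedHomogeneousSubmodule ℚ]
        apply Submodule.sub_mem
        · rw [mem_weightedHomogeneousSubmodule ℚ]
          simpa using isWeightedHomogeneous_X ℚ (fun _ : Fin 2 => (1:ℕ)) 1
        · rw [mem_weightedHomogeneousSubmodule ℚ]
          simpa using isWeightedHomogeneous_X ℚ (fun _ : Fin 2 => (1:ℕ)) 0
      have hne : (X 1 : MvQ 2) - X 0 ≠ 0 := by
        intro hzz
        have := congrArg (MvPolynomial.eval ![0, 1]) hzz
        simp at this
      obtain ⟨c, hc, hA⟩ := assoc_of_irred_dvd_deg_one hirr hne hsub h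
      have hXdvd : ((X 1 : MvQ 2) - X 0) ∣ pS 2 r := hA ▸ dvd_of_C_mul hc h1
      have heval := dvd_eval_zero hXdvd ![1, 1] (by simp)
      rw [pS, Fin.sum_univ_two] at heval
      simp at heval
  | succ n hn ih =>
    intro r hr q hirr h1 h2
    obtain ⟨e, he⟩ := id h1
    obtain ⟨d, dr, -, hq, -⟩ := divisor_isWeightedHomogeneous
      (pS_ne_zero (by omega) r) (isWH_pS _ r) he
    have hb1 : lower n q ∣ pS n r := by
      have := map_dvd (lower n) h1
      rwa [lower_pS (by omega)] at this
    have hb2 : lower n q ∣ pS n (r+1) := by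
      have := map_dvd (lower n) h2
      rwa [lower_pS (by omega)] at this
    by_cases hz : lower n q = 0
    · exact pS_ne_zero (by omega) r (zero_dvd_iff.mp (hz ▸ hb1))
    by_cases hu : IsUnit (lower n q)
    · exact no_unit_lower hirr hq hu
    obtain ⟨q', hirr', hdvd'⟩ := WfDvdMonoid.exists_irreducible_factor hu hz
    exact ih r hr q' hirr' (hdvd'.trans hb1) (hdvd'.trans hb2)

lemma pS_zero_dvd_contra {n : ℕ} (hn : 1 ≤ n) {q : MvQ n} (hirr : Irreducible q)
    (h : q ∣ pS n 0) : False := by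
  obtain ⟨e, he⟩ := h
  obtain ⟨dq, dr, hsum, hq, -⟩ := divisor_isWeightedHomogeneous
    (pS_ne_zero hn 0) (isWH_pS n 0) he
  have : dq = 0 := by omega
  exact irred_not_isWH_zero hirr (this ▸ hq)

lemma Dlemma : ∀ n r M : ℕ, r + 2 ≤ n → ∀ q : MvQ n, Irreducible q →
    q ∣ Gp n (M+2) r → q ∣ pS n (M+1) → False := by
  intro n r M hrn
  induction n, hrn using Nat.le_induction with
  | base =>
    intro q hirr hG hp
    have hprime : Prime q := (UniqueFactorizationMonoid.irreducible_iff_prime).mp hirr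
    have hdvd : q ∣ En (r+2) * pS (r+2) M := by
      have h1 : q ∣ (∑ b : Fin (r+2), ∏ v ∈ Finset.univ.erase b, (X v : MvQ (r+2)))
          * pS (r+2) (M+1) := hp.mul_left _
      rw [F3 r M] at h1
      exact (dvd_add_right hG).mp h1
    rcases hprime.dvd_mul.mp hdvd with hE | hpM
    · rw [En] at hE
      obtain ⟨v, -, hv⟩ := hprime.exists_mem_finset_dvd hE
      obtain ⟨c, hc, hA⟩ := assoc_of_irred_dvd_deg_one hirr (MvPolynomial.X_ne_zero v)
        (by simpa using isWeightedHomogeneous_X ℚ (fun _ : Fin (r+2) => (1:ℕ)) v) hv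
      have hXdvd : (X v : MvQ (r+2)) ∣ pS (r+2) (M+1) := hA ▸ dvd_of_C_mul hc hp
      have heval := dvd_eval_zero hXdvd (uPt _ v) (by simp [uPt])
      rw [eval_uPt_pS v (by omega)] at heval
      have hcast : ((r:ℚ) + 2) - 1 ≠ 0 := by
        have : (0:ℚ) ≤ (r:ℚ) := Nat.cast_nonneg r
        intro hh; linarith
      rw [show ((r+2 : ℕ) : ℚ) = (r:ℚ) + 2 by push_cast; ring] at heval
      exact hcast heval
    · rcases Nat.eq_zero_or_pos M with hM | hM
      · subst hM
        exact pS_zero_dvd_contra (by omega) hirr hpM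
      · obtain ⟨M', rfl⟩ : ∃ M', M = M' + 1 := ⟨M - 1, by omega⟩
        exact Plemma (r+2) (by omega) (M'+1) (by omega) q hirr hpM hp
  | succ n hn ih =>
    intro q hirr hG hp
    obtain ⟨e, he⟩ := id hG
    obtain ⟨d, dr, -, hq, -⟩ := divisor_isWeightedHomogeneous
      (Gp_ne_zero (by omega) (by omega)) (isWH_Gp _ _ _) he
    have hb1 : lower n q ∣ Gp n (M+2) r := by
      have := map_dvd (lower n) hG
      rwa [lower_Gp (by omega)] at this
    have hb2 : lower n q ∣ pS n (M+1) := by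
      have := map_dvd (lower n) hp
      rwa [lower_pS (by omega)] at this
    by_cases hz : lower n q = 0
    · exact Gp_ne_zero (by omega) (by omega : r ≤ n - 1) (zero_dvd_iff.mp (hz ▸ hb1))
    by_cases hu : IsUnit (lower n q)
    · exact no_unit_lower hirr hq hu
    obtain ⟨q', hirr', hdvd'⟩ := WfDvdMonoid.exists_irreducible_factor hu hz
    exact ih q' hirr' (hdvd'.trans hb1) (hdvd'.trans hb2)

lemma Klemma : ∀ n r1 r2 M : ℕ, r1 < r2 → r2 + 1 ≤ n → ∀ q : MvQ n, Irreducible q →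
    q ∣ Gp n (M+1) r1 → q ∣ Gp n (M+1) r2 → False := by
  intro n r1 r2 M h12 hr2n
  induction n, hr2n using Nat.le_induction with
  | base =>
    intro q hirr h1 h2
    have hprime : Prime q := (UniqueFactorizationMonoid.irreducible_iff_prime).mp hirr
    have hF2 : Gp (r2+1) (M+1) r2 = En (r2+1) * pS (r2+1) M := by
      have := F2 (r2+1) M
      rw [show r2+1-1 = r2 by omega] at this
      exact this
    rw [hF2] at h2
    rcases hprime.dvd_mul.mp h2 with hE | hpM
    · rw [En] at hE
      obtain ⟨v, -, hv⟩ := hprime.exists_mem_finset_dvd hE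
      obtain ⟨c, hc, hA⟩ := assoc_of_irred_dvd_deg_one hirr (MvPolynomial.X_ne_zero v)
        (by simpa using isWeightedHomogeneous_X ℚ (fun _ : Fin (r2+1) => (1:ℕ)) v) hv
      have hXdvd : (X v : MvQ (r2+1)) ∣ Gp (r2+1) (M+1) r1 := hA ▸ dvd_of_C_mul hc h1
      have heval := dvd_eval_zero hXdvd (uPt _ v) (by simp [uPt])
      rw [eval_uPt_Gp v (by omega)] at heval
      rcases mul_eq_zero.mp heval with hh | hh
      · rw [show ((r2+1 : ℕ) : ℚ) = (r2:ℚ) + 1 by push_cast; ring] at hh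
        have : (0:ℚ) ≤ (r2:ℚ) := Nat.cast_nonneg r2
        have hr2pos : (1:ℚ) ≤ (r2:ℚ) := by exact_mod_cast (by omega : 1 ≤ r2)
        linarith
      · have : (r2+1-2).choose r1 ≠ 0 := (Nat.choose_pos (by omega : r1 ≤ r2+1-2)).ne'
        exact (Nat.cast_ne_zero.mpr this) hh
    · rcases Nat.eq_zero_or_pos M with hM | hM
      · subst hM
        exact pS_zero_dvd_contra (by omega) hirr hpM
      · obtain ⟨M', rfl⟩ : ∃ M', M = M' + 1 := ⟨M - 1, by omega⟩
        exact Dlemma (r2+1) r1 M' (by omega) q hirr h1 hpM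
  | succ n hn ih =>
    intro q hirr h1 h2
    obtain ⟨e, he⟩ := id h1
    obtain ⟨d, dr, -, hq, -⟩ := divisor_isWeightedHomogeneous
      (Gp_ne_zero (by omega) (by omega : r1 ≤ n + 1 - 1)) (isWH_Gp _ _ _) he
    have hb1 : lower n q ∣ Gp n (M+1) r1 := by
      have := map_dvd (lower n) h1
      rwa [lower_Gp (by omega)] at this
    have hb2 : lower n q ∣ Gp n (M+1) r2 := by
      have := map_dvd (lower n) h2
      rwa [lower_Gp (by omega)] at this
    by_cases hz : lower n q = 0
    · exact Gp_ne_zero (by omega) (by omega : r1 ≤ n - 1) (zero_dvd_iff.mp (hz ▸ hb1))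
    by_cases hu : IsUnit (lower n q)
    · exact no_unit_lower hirr hq hu
    obtain ⟨q', hirr', hdvd'⟩ := WfDvdMonoid.exists_irreducible_factor hu hz
    exact ih q' hirr' (hdvd'.trans hb1) (hdvd'.trans hb2)

lemma Kfinal {n r1 r2 M : ℕ} (h12 : r1 < r2) (hr2 : r2 + 1 ≤ n)
    (h : MvQ n) (hd1 : h ∣ Gp n (M+1) r1) (hd2 : h ∣ Gp n (M+1) r2) : IsUnit h := by
  by_contra hu
  have h0 : h ≠ 0 := by
    rintro rfl
    exact Gp_ne_zero (by omega) (by omega : r1 ≤ n - 1) (zero_dvd_iff.mp hd1)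
  obtain ⟨q, hirr, hdvd⟩ := WfDvdMonoid.exists_irreducible_factor hu h0
  exact Klemma n r1 r2 M h12 hr2 q hirr (hdvd.trans hd1) (hdvd.trans hd2)


/-! ### pderiv of esymm -/

lemma sum_single_apply {κ : ℕ} (T : Finset (Fin κ)) (x : Fin κ) :
    (∑ v ∈ T, Finsupp.single v (1:ℕ)) x = if x ∈ T then 1 else 0 := by
  classical
  rw [Finset.sum_apply']
  rw [show (∑ v ∈ T, Finsupp.single v (1:ℕ) x) = ∑ v ∈ T, if v = x then 1 else 0 from
    Finset.sum_congr rfl fun v _ => Finsupp.single_apply]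
  rw [Finset.sum_ite_eq' T x (fun _ => 1)]

lemma prodX_eq_monomial {κ : ℕ} (T : Finset (Fin κ)) :
    (∏ v ∈ T, (X v : MvQ κ)) = monomial (∑ v ∈ T, Finsupp.single v 1) 1 := by
  classical
  have hs : (∑ v ∈ T, Finsupp.single v (1:ℕ)).support = T := by
    ext x
    rw [Finsupp.mem_support_iff, sum_single_apply]
    split <;> simp_all
  have h := MvPolynomial.prod_X_pow_eq_monomial (R := ℚ) (s := ∑ v ∈ T, Finsupp.single v 1)
  rw [hs] at h
  rw [← h]
  refine Finset.prod_congr rfl fun v hv => ?_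
  rw [sum_single_apply, if_pos hv, pow_one]

lemma pderiv_esymm {κ : ℕ} (a : Fin κ) (r : ℕ) :
    pderiv a (esymm (Fin κ) ℚ (r+1)) = eHat κ a r := by
  classical
  rw [esymm_eq_sum_monomial, map_sum]
  have hterm : ∀ S ∈ Finset.powersetCard (r+1) (Finset.univ : Finset (Fin κ)),
      pderiv a (monomial (∑ i ∈ S, Finsupp.single i 1) (1:ℚ))
        = if a ∈ S then monomial (∑ i ∈ S.erase a, Finsupp.single i 1) (1:ℚ) else 0 := by
    intro S _
    rw [MvPolynomial.pderiv_monomial]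
    by_cases ha : a ∈ S
    · rw [if_pos ha]
      have hA : ((∑ i ∈ S, Finsupp.single i (1:ℕ)) a) = 1 := by
        rw [sum_single_apply, if_pos ha]
      have hsub : (∑ i ∈ S, Finsupp.single i (1:ℕ)) - Finsupp.single a 1
          = ∑ i ∈ S.erase a, Finsupp.single i 1 := by
        rw [← Finset.add_sum_erase S (fun i => Finsupp.single i (1:ℕ)) ha, add_tsub_cancel_left]
      rw [hsub, hA]
      norm_num
    · rw [if_neg ha, sum_single_apply, if_neg ha]
      simp
  rw [Finset.sum_congr rfl hterm, Finset.sum_ite, Finset.sum_const_zero, add_zero]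
  have heHat : eHat κ a r
      = ∑ T ∈ Finset.powersetCard r (Finset.univ.erase a),
          monomial (∑ v ∈ T, Finsupp.single v 1) (1:ℚ) := by
    rw [eHat]; exact Finset.sum_congr rfl fun T _ => prodX_eq_monomial T
  rw [heHat]
  refine Finset.sum_bij (fun S _ => S.erase a) ?_ ?_ ?_ ?_
  · intro S hS
    rw [Finset.mem_filter, Finset.mem_powersetCard] at hS
    rw [Finset.mem_powersetCard]
    refine ⟨?_, ?_⟩
    · intro x hx
      rw [Finset.mem_erase] at hx ⊢
      exact ⟨hx.1, Finset.mem_univ x⟩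
    · rw [Finset.card_erase_of_mem hS.2, hS.1.2]; omega
  · intro S₁ hS₁ S₂ hS₂ heq
    rw [Finset.mem_filter] at hS₁ hS₂
    rw [← Finset.insert_erase hS₁.2, heq, Finset.insert_erase hS₂.2]
  · intro T hT
    rw [Finset.mem_powersetCard] at hT
    have haT : a ∉ T := fun h => ((Finset.mem_erase.mp (hT.1 h)).1 rfl)
    refine ⟨insert a T, ?_, ?_⟩
    · rw [Finset.mem_filter, Finset.mem_powersetCard]
      exact ⟨⟨Finset.subset_univ _, by rw [Finset.card_insert_of_notMem haT, hT.2]⟩,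
        Finset.mem_insert_self a T⟩
    · rw [Finset.erase_insert haT]
  · intro S hS; rfl

/-- Transport of weighted homogeneity along `rename`. -/
lemma rename_isWH {σ σ' : Type*} (f : σ → σ') (w' : σ' → ℕ)
    {p : MvPolynomial σ ℚ} {m : ℕ}
    (hp : IsWeightedHomogeneous (fun v => w' (f v)) p m) :
    IsWeightedHomogeneous w' (rename f p) m := by
  have heq : (rename f) p = MvPolynomial.aeval (fun v => (X (f v) : MvPolynomial σ' ℚ)) p := by
    rw [rename_eq_aeval]; rfl
  rw [heq]
  exact aeval_isWeightedHomogeneous _ _ _ (fun v => isWeightedHomogeneous_X ℚ w' (f v)) hp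

lemma isWH_zero_weight {σ : Type*} (p : MvPolynomial σ ℚ) :
    IsWeightedHomogeneous (fun _ => (0:ℕ)) p 0 := by
  intro d _
  rw [Finsupp.weight_apply, Finsupp.sum]
  simp

/-- degree bound helper -/
lemma deg_mul_lt_helper {A : Type*} [CommRing A] {f g : Polynomial A} {N r : ℕ}
    (hf : f.degree < (N : WithBot ℕ)) (hg : g.degree ≤ (r : WithBot ℕ)) :
    (f * g).degree < ((N + r : ℕ) : WithBot ℕ) := by
  by_cases hfg : f * g = 0
  · rw [hfg, Polynomial.degree_zero]; exact WithBot.bot_lt_coe _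
  have hf0 : f ≠ 0 := fun h => hfg (by rw [h, zero_mul])
  have hg0 : g ≠ 0 := fun h => hfg (by rw [h, mul_zero])
  rw [← Polynomial.natDegree_lt_iff_degree_lt hfg]
  have h1 : f.natDegree < N := (Polynomial.natDegree_lt_iff_degree_lt hf0).mpr hf
  have h2 : g.natDegree ≤ r := Polynomial.natDegree_le_iff_degree_le.mpr hg
  have h3 := Polynomial.natDegree_mul_le (p := f) (q := g)
  omega


end SymAux

namespace SymKRBlocks
open SymAux

variable (N l : ℕ) (ks : Fin l → ℕ)

/-- The index type of the `x`-variables: `l` blocks of sizes `k_1,…,k_l`. -/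
abbrev Blk := (i : Fin l) × Fin (ks i)

/-- The ambient ring `ℚ[T_1,…,T_N, x_a (a ∈ ι)]`. -/
abbrev Amb := MvPolynomial (Fin N ⊕ Blk l ks) ℚ

/-- The action of a permutation of `{1,…,N}` on the `T`-variables. -/
def actT (σ : Equiv.Perm (Fin N)) : Amb N l ks →ₐ[ℚ] Amb N l ks :=
  rename (Sum.map (⇑σ) id)

/-- The action of a block permutation on the `x`-variables. -/
def actX (τ : (i : Fin l) → Equiv.Perm (Fin (ks i))) : Amb N l ks →ₐ[ℚ] Amb N l ks :=
  rename (Sum.map id (⇑(Equiv.sigmaCongrRight τ)))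

/-- `A_{k̲} = R_N[x]^{𝔖_{k̲}}`. -/
def Ablk : Subalgebra ℚ (Amb N l ks) :=
  (⨅ σ : Equiv.Perm (Fin N), AlgHom.equalizer (actT N l ks σ) (AlgHom.id ℚ _)) ⊓
    ⨅ τ : (i : Fin l) → Equiv.Perm (Fin (ks i)),
      AlgHom.equalizer (actX N l ks τ) (AlgHom.id ℚ _)

/-- `e_j^{(i)}`: the `j`-th elementary symmetric polynomial in the `i`-th block of
`x`-variables. -/
def eB (i : Fin l) (j : ℕ) : Amb N l ks :=
  rename (fun a : Fin (ks i) => (Sum.inr ⟨i, a⟩ : Fin N ⊕ Blk l ks))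
    (esymm (Fin (ks i)) ℚ j)

/-- The derivation `D^N(P) = Σ_{a∈ι} (∏_{j=1}^N (x_a − T_j)) · ∂P/∂x_a`. -/
def DN (p : Amb N l ks) : Amb N l ks :=
  ∑ a : Blk l ks,
    (∏ j : Fin N, (X (Sum.inr a) - X (Sum.inl j))) * pderiv (Sum.inr a) p

/-! auxiliary definitions -/

def phi (i : Fin l) : Fin (ks i) → (Fin N ⊕ Blk l ks) := fun a => Sum.inr ⟨i, a⟩

lemma phi_inj (i : Fin l) : Function.Injective (phi N l ks i) := by
  intro a b h
  have h2 : (⟨i, a⟩ : Blk l ks) = ⟨i, b⟩ := Sum.inr_injective h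
  simpa using h2

def w0 : (Fin N ⊕ Blk l ks) → ℕ := Sum.elim (fun _ => 0) (fun _ => 1)

def wT : (Fin N ⊕ Blk l ks) → ℕ := Sum.elim (fun _ => 1) (fun _ => 0)

def wOut (i : Fin l) : (Fin N ⊕ Blk l ks) → ℕ :=
  Sum.elim (fun _ => 1) (fun b => if b.1 = i then 0 else 1)

def fB (b : Blk l ks) : Amb N l ks := ∏ t : Fin N, (X (Sum.inr b) - X (Sum.inl t))

def GB (i : Fin l) (r : ℕ) : Amb N l ks := rename (phi N l ks i) (SymAux.Gp (ks i) N r)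

lemma DN_eB (i : Fin l) (r : ℕ) :
    DN N l ks (eB N l ks i (r+1))
      = ∑ a : Fin (ks i), fB N l ks ⟨i, a⟩ * rename (phi N l ks i) (SymAux.eHat (ks i) a r) := by
  rw [DN, ← Finset.univ_sigma_univ, Finset.sum_sigma]
  rw [Finset.sum_eq_single_of_mem i (Finset.mem_univ i) ?_]
  · refine Finset.sum_congr rfl fun a _ => ?_
    congr 1
    rw [eB, ← SymAux.pderiv_esymm (κ := ks i) a r]
    exact MvPolynomial.pderiv_rename (phi_inj N l ks i) a (esymm (Fin (ks i)) ℚ (r+1))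
  · intro b _ hbne
    apply Finset.sum_eq_zero
    intro x _
    have hz : pderiv (Sum.inr ⟨b, x⟩ : Fin N ⊕ Blk l ks) (eB N l ks i (r+1)) = 0 := by
      apply MvPolynomial.pderiv_eq_zero_of_notMem_vars
      intro hmem
      rw [eB] at hmem
      have hmem2 := MvPolynomial.vars_rename _ _ hmem
      rw [Finset.mem_image] at hmem2
      obtain ⟨y, -, hy⟩ := hmem2
      have : (⟨i, y⟩ : Blk l ks) = ⟨b, x⟩ := Sum.inr_injective hy
      exact hbne (congrArg Sigma.fst this).symm
    rw [hz, mul_zero]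

lemma GB_sum (i : Fin l) (r : ℕ) :
    GB N l ks i r = ∑ a : Fin (ks i),
      (X (Sum.inr ⟨i, a⟩ : Fin N ⊕ Blk l ks) : Amb N l ks) ^ N
        * rename (phi N l ks i) (SymAux.eHat (ks i) a r) := by
  rw [GB, SymAux.Gp, map_sum]
  refine Finset.sum_congr rfl fun a _ => ?_
  rw [map_mul, map_pow, rename_X]
  rfl

lemma isWH_GB_wOut (i : Fin l) (r : ℕ) :
    IsWeightedHomogeneous (wOut N l ks i) (GB N l ks i r) 0 := by
  rw [GB]
  apply SymAux.rename_isWH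
  have h : (fun v : Fin (ks i) => wOut N l ks i (phi N l ks i v)) = fun _ => 0 := by
    funext v; simp [wOut, phi]
  rw [h]
  exact SymAux.isWH_zero_weight _

lemma isWH_GB_wT (i : Fin l) (r : ℕ) :
    IsWeightedHomogeneous (wT N l ks) (GB N l ks i r) 0 := by
  rw [GB]
  apply SymAux.rename_isWH
  have h : (fun v : Fin (ks i) => wT N l ks (phi N l ks i v)) = fun _ => 0 := by
    funext v; simp [wT, phi]
  rw [h]
  exact SymAux.isWH_zero_weight _

lemma isWH_rename_eHat (i : Fin l) (a : Fin (ks i)) (r : ℕ) :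
    IsWeightedHomogeneous (w0 N l ks) (rename (phi N l ks i) (SymAux.eHat (ks i) a r)) r := by
  apply SymAux.rename_isWH
  have h : (fun v : Fin (ks i) => w0 N l ks (phi N l ks i v)) = fun _ => 1 := by
    funext v; simp [w0, phi]
  rw [h]
  exact SymAux.isWH_eHat a r

lemma GB_ne_zero (i : Fin l) {r : ℕ} (hk : 1 ≤ ks i) (hr : r ≤ ks i - 1) :
    GB N l ks i r ≠ 0 := by
  intro h
  apply SymAux.Gp_ne_zero (n := ks i) (N := N) (r := r) hk hr
  apply rename_injective _ (phi_inj N l ks i)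
  rw [map_zero]
  exact h

lemma Psi_fB_eq (b : Blk l ks) :
    SymAux.Psi (w0 N l ks) (fB N l ks b)
      = ∏ t : Fin N, (Polynomial.C (X (Sum.inr b) : Amb N l ks) * Polynomial.X
          - Polynomial.C (X (Sum.inl t))) := by
  rw [fB, map_prod]
  refine Finset.prod_congr rfl fun t _ => ?_
  rw [map_sub, SymAux.Psi_X, SymAux.Psi_X]
  simp only [w0, Sum.elim_inl, Sum.elim_inr, pow_one, pow_zero, mul_one]

lemma lin_facts (b : Blk l ks) (t : Fin N) :
    (Polynomial.C (X (Sum.inr b) : Amb N l ks) * Polynomial.X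
        - Polynomial.C (X (Sum.inl t))).natDegree = 1
    ∧ (Polynomial.C (X (Sum.inr b) : Amb N l ks) * Polynomial.X
        - Polynomial.C (X (Sum.inl t))).leadingCoeff = X (Sum.inr b)
    ∧ (Polynomial.C (X (Sum.inr b) : Amb N l ks) * Polynomial.X
        - Polynomial.C (X (Sum.inl t))) ≠ 0 := by
  have h1 : (Polynomial.C (X (Sum.inr b) : Amb N l ks) * Polynomial.X
      - Polynomial.C (X (Sum.inl t))).natDegree = 1 := by
    rw [show Polynomial.C (X (Sum.inr b) : Amb N l ks) * Polynomial.X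
        - Polynomial.C (X (Sum.inl t))
        = Polynomial.C (X (Sum.inr b)) * Polynomial.X + Polynomial.C (-(X (Sum.inl t))) by
      rw [map_neg]; ring]
    exact Polynomial.natDegree_linear (MvPolynomial.X_ne_zero _)
  have h2 : (Polynomial.C (X (Sum.inr b) : Amb N l ks) * Polynomial.X
      - Polynomial.C (X (Sum.inl t))).coeff 1 = X (Sum.inr b) := by
    simp
  refine ⟨h1, ?_, ?_⟩
  · rw [Polynomial.leadingCoeff, h1, h2]
  · intro h
    rw [h, Polynomial.coeff_zero] at h2
    exact MvPolynomial.X_ne_zero (Sum.inr b) h2.symm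

lemma Psi_fB_facts (b : Blk l ks) :
    (SymAux.Psi (w0 N l ks) (fB N l ks b)).natDegree = N
    ∧ (SymAux.Psi (w0 N l ks) (fB N l ks b)).leadingCoeff
        = (X (Sum.inr b) : Amb N l ks) ^ N
    ∧ SymAux.Psi (w0 N l ks) (fB N l ks b) ≠ 0 := by
  rw [Psi_fB_eq]
  have hne : ∀ t ∈ (Finset.univ : Finset (Fin N)),
      (Polynomial.C (X (Sum.inr b) : Amb N l ks) * Polynomial.X
        - Polynomial.C (X (Sum.inl t))) ≠ 0 := fun t _ => (lin_facts N l ks b t).2.2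
  have hlc : (∏ t : Fin N, (Polynomial.C (X (Sum.inr b) : Amb N l ks) * Polynomial.X
      - Polynomial.C (X (Sum.inl t)))).leadingCoeff = (X (Sum.inr b) : Amb N l ks) ^ N := by
    rw [Polynomial.leadingCoeff_prod]
    rw [Finset.prod_congr rfl (fun t _ => (lin_facts N l ks b t).2.1)]
    simp [Finset.card_univ]
  refine ⟨?_, hlc, ?_⟩
  · rw [Polynomial.natDegree_prod _ _ hne]
    rw [Finset.sum_congr rfl (fun t _ => (lin_facts N l ks b t).1)]
    simp [Finset.card_univ]
  · rw [← Polynomial.leadingCoeff_ne_zero, hlc]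
    exact pow_ne_zero _ (MvPolynomial.X_ne_zero _)

lemma Psi_fB_split (b : Blk l ks) :
    (SymAux.Psi (w0 N l ks) (fB N l ks b)
      - Polynomial.C ((X (Sum.inr b) : Amb N l ks) ^ N) * Polynomial.X ^ N).degree
      < (N : WithBot ℕ) := by
  obtain ⟨h1, h2, h3⟩ := Psi_fB_facts N l ks b
  have hXn : ((X (Sum.inr b) : Amb N l ks) ^ N) ≠ 0 :=
    pow_ne_zero _ (MvPolynomial.X_ne_zero _)
  have hdeg1 : (SymAux.Psi (w0 N l ks) (fB N l ks b)).degree = (N : WithBot ℕ) := by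
    rw [Polynomial.degree_eq_natDegree h3, h1]
  have hlt := Polynomial.degree_sub_lt
    (p := SymAux.Psi (w0 N l ks) (fB N l ks b))
    (q := Polynomial.C ((X (Sum.inr b) : Amb N l ks) ^ N) * Polynomial.X ^ N)
    (by rw [hdeg1, Polynomial.degree_C_mul_X_pow _ hXn]) h3
    (by rw [h2, Polynomial.C_mul_X_pow_eq_monomial, Polynomial.leadingCoeff_monomial])
  rwa [hdeg1] at hlt

lemma Psi_DN_eB (i : Fin l) (r : ℕ) :
    ∃ R : Polynomial (Amb N l ks),
      SymAux.Psi (w0 N l ks) (DN N l ks (eB N l ks i (r+1)))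
        = Polynomial.C (GB N l ks i r) * Polynomial.X ^ (N + r) + R
      ∧ R.degree < ((N + r : ℕ) : WithBot ℕ) := by
  rw [DN_eB, map_sum]
  have hterm : ∀ a : Fin (ks i),
      SymAux.Psi (w0 N l ks) (fB N l ks ⟨i,a⟩ * rename (phi N l ks i) (SymAux.eHat (ks i) a r))
        = Polynomial.C ((X (Sum.inr ⟨i,a⟩) : Amb N l ks) ^ N
            * rename (phi N l ks i) (SymAux.eHat (ks i) a r)) * Polynomial.X ^ (N + r)
          + (SymAux.Psi (w0 N l ks) (fB N l ks ⟨i,a⟩)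
              - Polynomial.C ((X (Sum.inr ⟨i,a⟩) : Amb N l ks) ^ N) * Polynomial.X ^ N)
            * (Polynomial.C (rename (phi N l ks i) (SymAux.eHat (ks i) a r))
                * Polynomial.X ^ r) := by
    intro a
    rw [map_mul, SymAux.Psi_of_isWeightedHomogeneous (isWH_rename_eHat N l ks i a r),
      Polynomial.C_mul]
    ring
  rw [Finset.sum_congr rfl (fun a _ => hterm a), Finset.sum_add_distrib]
  refine ⟨∑ a : Fin (ks i),
      (SymAux.Psi (w0 N l ks) (fB N l ks ⟨i,a⟩)
        - Polynomial.C ((X (Sum.inr ⟨i,a⟩) : Amb N l ks) ^ N) * Polynomial.X ^ N)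
        * (Polynomial.C (rename (phi N l ks i) (SymAux.eHat (ks i) a r))
            * Polynomial.X ^ r), ?_, ?_⟩
  · congr 1
    rw [← Finset.sum_mul, ← map_sum, GB_sum]
  · apply lt_of_le_of_lt (Polynomial.degree_sum_le _ _)
    rw [Finset.sup_lt_iff (WithBot.bot_lt_coe _)]
    intro a _
    apply SymAux.deg_mul_lt_helper (Psi_fB_split N l ks ⟨i, a⟩)
    by_cases hE0 : rename (phi N l ks i) (SymAux.eHat (ks i) a r) = 0
    · rw [hE0]; simp
    · rw [Polynomial.degree_C_mul_X_pow _ hE0]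

lemma Psi_DN_coeff (i : Fin l) (r : ℕ) :
    (SymAux.Psi (w0 N l ks) (DN N l ks (eB N l ks i (r+1)))).coeff (N + r)
      = GB N l ks i r := by
  obtain ⟨R, hRe, hRd⟩ := Psi_DN_eB N l ks i r
  rw [hRe, Polynomial.coeff_add, Polynomial.coeff_C_mul, Polynomial.coeff_X_pow, if_pos rfl,
    mul_one, Polynomial.coeff_eq_zero_of_degree_lt hRd, add_zero]

lemma DN_eB_ne_zero (i : Fin l) (r : ℕ) (hk : 1 ≤ ks i) (hr : r ≤ ks i - 1) :
    DN N l ks (eB N l ks i (r+1)) ≠ 0 := by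
  intro h
  have hc := Psi_DN_coeff N l ks i r
  rw [h, map_zero, Polynomial.coeff_zero] at hc
  exact GB_ne_zero N l ks i hk hr hc.symm

lemma Psi_DN_leadingCoeff (i : Fin l) (r : ℕ) (hGB : GB N l ks i r ≠ 0) :
    (SymAux.Psi (w0 N l ks) (DN N l ks (eB N l ks i (r+1)))).leadingCoeff
      = GB N l ks i r := by
  obtain ⟨R, hRe, hRd⟩ := Psi_DN_eB N l ks i r
  rw [hRe, add_comm, Polynomial.leadingCoeff_add_of_degree_lt
    (by rw [Polynomial.degree_C_mul_X_pow _ hGB]; exact hRd),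
    Polynomial.C_mul_X_pow_eq_monomial, Polynomial.leadingCoeff_monomial]

lemma exists_rename_of_wOut (i : Fin l) {h : Amb N l ks}
    (hh : IsWeightedHomogeneous (wOut N l ks i) h 0) :
    ∃ h₀ : MvPolynomial (Fin (ks i)) ℚ, h = rename (phi N l ks i) h₀ := by
  classical
  have hvars : ↑h.vars ⊆ Set.range (phi N l ks i) := by
    intro v hv
    rw [Finset.mem_coe, MvPolynomial.mem_vars] at hv
    obtain ⟨d, hd, hvd⟩ := hv
    have hw := hh (MvPolynomial.mem_support_iff.mp hd)
    rw [Finsupp.weight_apply, Finsupp.sum] at hw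
    have hz := (Finset.sum_eq_zero_iff.mp hw) v hvd
    simp only [smul_eq_mul, Nat.mul_eq_zero] at hz
    have hdv : d v ≠ 0 := Finsupp.mem_support_iff.mp hvd
    have hwv : wOut N l ks i v = 0 := by
      rcases hz with h' | h'
      · exact absurd h' hdv
      · exact h'
    rcases v with t | b
    · simp [wOut] at hwv
    · obtain ⟨bi, ba⟩ := b
      have hbi : bi = i := by
        by_contra hne
        simp [wOut, hne] at hwv
      subst hbi
      exact ⟨ba, rfl⟩
  have hsup : h ∈ MvPolynomial.supported ℚ (Set.range (phi N l ks i)) :=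
    MvPolynomial.mem_supported.mpr hvars
  rw [MvPolynomial.supported_eq_range_rename, AlgHom.mem_range] at hsup
  obtain ⟨h₁, hh₁⟩ := hsup
  refine ⟨rename (Equiv.ofInjective (phi N l ks i) (phi_inj N l ks i)).symm h₁, ?_⟩
  rw [rename_rename]
  have hcomp : (phi N l ks i) ∘ (Equiv.ofInjective (phi N l ks i) (phi_inj N l ks i)).symm
      = Subtype.val := by
    funext x
    have hx : (Equiv.ofInjective (phi N l ks i) (phi_inj N l ks i))
        ((Equiv.ofInjective (phi N l ks i) (phi_inj N l ks i)).symm x) = x :=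
      Equiv.apply_symm_apply _ x
    rw [Equiv.ofInjective_apply] at hx
    exact congrArg Subtype.val hx
  rw [hcomp, hh₁]

theorem DN_eB_coprime (hN : 1 ≤ N) (hpos : ∀ i, 0 < ks i)
    (i₁ i₂ : Fin l) (j₁ j₂ : ℕ)
    (hj₁ : 1 ≤ j₁) (hj₁' : j₁ ≤ ks i₁) (hj₂ : 1 ≤ j₂) (hj₂' : j₂ ≤ ks i₂)
    (hne : (i₁, j₁) ≠ (i₂, j₂))
    (P : Amb N l ks) (hP : P ∈ Ablk N l ks)
    (hdvd₁ : ∃ Q ∈ Ablk N l ks, DN N l ks (eB N l ks i₁ j₁) = P * Q)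
    (hdvd₂ : ∃ Q ∈ Ablk N l ks, DN N l ks (eB N l ks i₂ j₂) = P * Q) :
    ∃ c : ℚ, c ≠ 0 ∧ P = C c := by
  classical
  obtain ⟨r₁, rfl⟩ : ∃ r, j₁ = r + 1 := ⟨j₁ - 1, by omega⟩
  obtain ⟨r₂, rfl⟩ : ∃ r, j₂ = r + 1 := ⟨j₂ - 1, by omega⟩
  obtain ⟨Q₁, -, hQ₁⟩ := hdvd₁
  obtain ⟨Q₂, -, hQ₂⟩ := hdvd₂
  have hk₁ : 1 ≤ ks i₁ := hpos i₁
  have hk₂ : 1 ≤ ks i₂ := hpos i₂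
  have hr₁ : r₁ ≤ ks i₁ - 1 := by omega
  have hr₂ : r₂ ≤ ks i₂ - 1 := by omega
  have hGB₁ : GB N l ks i₁ r₁ ≠ 0 := GB_ne_zero N l ks i₁ hk₁ hr₁
  have hGB₂ : GB N l ks i₂ r₂ ≠ 0 := GB_ne_zero N l ks i₂ hk₂ hr₂
  have hF₁ : DN N l ks (eB N l ks i₁ (r₁+1)) ≠ 0 := DN_eB_ne_zero N l ks i₁ r₁ hk₁ hr₁
  have hP0 : P ≠ 0 := by rintro rfl; rw [zero_mul] at hQ₁; exact hF₁ hQ₁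
  have hPsiP0 : SymAux.Psi (w0 N l ks) P ≠ 0 := by
    rw [Ne, SymAux.Psi_eq_zero_iff]; exact hP0
  have hLP0 : (SymAux.Psi (w0 N l ks) P).leadingCoeff ≠ 0 :=
    Polynomial.leadingCoeff_ne_zero.mpr hPsiP0
  have hLPdvd : ∀ (i : Fin l) (r : ℕ), GB N l ks i r ≠ 0 →
      ∀ Q, DN N l ks (eB N l ks i (r+1)) = P * Q →
      (SymAux.Psi (w0 N l ks) P).leadingCoeff ∣ GB N l ks i r := by
    intro i r hGB Q hQ
    refine ⟨(SymAux.Psi (w0 N l ks) Q).leadingCoeff, ?_⟩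
    rw [← Polynomial.leadingCoeff_mul, ← map_mul, ← hQ, Psi_DN_leadingCoeff N l ks i r hGB]
  have hd₁ := hLPdvd i₁ r₁ hGB₁ Q₁ hQ₁
  have hd₂ := hLPdvd i₂ r₂ hGB₂ Q₂ hQ₂
  have hWOut : ∀ (i : Fin l) (r : ℕ), GB N l ks i r ≠ 0 →
      (SymAux.Psi (w0 N l ks) P).leadingCoeff ∣ GB N l ks i r →
      IsWeightedHomogeneous (wOut N l ks i) (SymAux.Psi (w0 N l ks) P).leadingCoeff 0 := by
    intro i r hGB hdvd
    obtain ⟨c, hc⟩ := hdvd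
    obtain ⟨dq, dr, hsum, hq, -⟩ :=
      SymAux.divisor_isWeightedHomogeneous hGB (isWH_GB_wOut N l ks i r) hc
    rwa [show dq = 0 by omega] at hq
  have hLPunit : IsUnit (SymAux.Psi (w0 N l ks) P).leadingCoeff := by
    by_cases hii : i₁ = i₂
    · subst hii
      have hj : r₁ ≠ r₂ := fun h => hne (by rw [h])
      obtain ⟨h₀, hh₀⟩ := exists_rename_of_wOut N l ks i₁ (hWOut i₁ r₁ hGB₁ hd₁)
      have hdvd₀ : ∀ r, GB N l ks i₁ r ≠ 0 →
          (SymAux.Psi (w0 N l ks) P).leadingCoeff ∣ GB N l ks i₁ r →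
          h₀ ∣ SymAux.Gp (ks i₁) N r := by
        intro r hGB hLPd
        obtain ⟨c, hc⟩ := hLPd
        obtain ⟨dq, dr, hsum, -, hcw⟩ :=
          SymAux.divisor_isWeightedHomogeneous hGB (isWH_GB_wOut N l ks i₁ r) hc
        obtain ⟨c₀, hc₀⟩ := exists_rename_of_wOut N l ks i₁
          (by rwa [show dr = 0 by omega] at hcw)
        refine ⟨c₀, ?_⟩
        apply rename_injective _ (phi_inj N l ks i₁)
        rw [map_mul, ← hh₀, ← hc₀, ← hc, GB]
      obtain ⟨M, hM⟩ : ∃ M, N = M + 1 := ⟨N - 1, by omega⟩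
      have ha := hdvd₀ r₁ hGB₁ hd₁
      have hb := hdvd₀ r₂ hGB₂ hd₂
      rw [hM] at ha hb
      have hu₀ : IsUnit h₀ := by
        rcases Nat.lt_or_ge r₁ r₂ with hlt | hge
        · exact SymAux.Kfinal hlt (by omega : r₂ + 1 ≤ ks i₁) h₀ ha hb
        · have hgt : r₂ < r₁ := by omega
          exact SymAux.Kfinal hgt (by omega : r₁ + 1 ≤ ks i₁) h₀ hb ha
      rw [hh₀]
      exact hu₀.map _
    · have h1 := hWOut i₁ r₁ hGB₁ hd₁
      have h2 := hWOut i₂ r₂ hGB₂ hd₂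
      have hcov : ∀ v, wOut N l ks i₁ v ≠ 0 ∨ wOut N l ks i₂ v ≠ 0 := by
        intro v
        rcases v with t | b
        · left; simp [wOut]
        · by_cases hb : b.1 = i₁
          · right; simp [wOut, hb, hii]
          · left; simp [wOut, hb]
      have hc := SymAux.eq_C_of_two_weights hcov h1 h2
      have hc0 : MvPolynomial.coeff 0 (SymAux.Psi (w0 N l ks) P).leadingCoeff ≠ 0 := by
        intro h; exact hLP0 (by rw [hc, h, map_zero])
      rw [hc]
      exact SymAux.isUnit_C_of_ne hc0
  -- conclude: leading coefficient is a nonzero constant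
  obtain ⟨u, hu⟩ := hLPunit
  have h1mul : (1 : Amb N l ks) = (SymAux.Psi (w0 N l ks) P).leadingCoeff * ↑u⁻¹ := by
    rw [← hu, Units.mul_inv]
  obtain ⟨dq, dr, hsum, hq, -⟩ := SymAux.divisor_isWeightedHomogeneous
    (one_ne_zero) (isWeightedHomogeneous_one ℚ (fun _ => (1:ℕ))) h1mul
  have hLPC := SymAux.eq_C_of_isWeightedHomogeneous_one_zero
    (by rwa [show dq = 0 by omega] at hq)
  have hc₀0 : MvPolynomial.coeff 0 (SymAux.Psi (w0 N l ks) P).leadingCoeff ≠ 0 := by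
    intro h; exact hLP0 (by rw [hLPC, h, map_zero])
  -- natDegree of Psi P is 0
  have hD0 : (SymAux.Psi (w0 N l ks) P).natDegree = 0 := by
    by_contra hDne
    have hcc := SymAux.coeff_coeff_Psi (w0 N l ks) P 0 (SymAux.Psi (w0 N l ks) P).natDegree
    rw [if_neg (by rw [map_zero]; exact fun h => hDne h.symm)] at hcc
    apply hc₀0
    rw [show (SymAux.Psi (w0 N l ks) P).leadingCoeff
        = (SymAux.Psi (w0 N l ks) P).coeff (SymAux.Psi (w0 N l ks) P).natDegree from rfl]
    exact hcc
  have hPsiPC : SymAux.Psi (w0 N l ks) P = Polynomial.C P * Polynomial.X ^ 0 := by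
    have heq := Polynomial.eq_C_of_natDegree_le_zero (le_of_eq hD0)
    rw [pow_zero, mul_one, heq]
    congr 1
    conv_rhs => rw [← SymAux.eval_one_Psi (w0 N l ks) P, heq]
    simp
  have hPw0 : IsWeightedHomogeneous (w0 N l ks) P 0 :=
    SymAux.isWeightedHomogeneous_of_Psi hPsiPC
  have hPd : P ∣ GB N l ks i₁ r₁ := by
    refine ⟨(SymAux.Psi (w0 N l ks) Q₁).coeff (N + r₁), ?_⟩
    rw [← Psi_DN_coeff N l ks i₁ r₁, hQ₁, map_mul, hPsiPC, pow_zero, mul_one,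
      Polynomial.coeff_C_mul]
  obtain ⟨cQ, hcQ⟩ := hPd
  obtain ⟨dq₂, dr₂, hsum₂, hq₂, -⟩ :=
    SymAux.divisor_isWeightedHomogeneous hGB₁ (isWH_GB_wT N l ks i₁ r₁) hcQ
  have hPwT : IsWeightedHomogeneous (wT N l ks) P 0 := by
    rwa [show dq₂ = 0 by omega] at hq₂
  have hcov2 : ∀ v, w0 N l ks v ≠ 0 ∨ wT N l ks v ≠ 0 := by
    intro v
    rcases v with t | b
    · right; simp [wT]
    · left; simp [w0]
  have hPC := SymAux.eq_C_of_two_weights hcov2 hPw0 hPwT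
  refine ⟨MvPolynomial.coeff 0 P, ?_, hPC⟩
  intro h
  exact hP0 (by rw [hPC, h, map_zero])

end SymKRBlocks
end
end

section
/- The sequence 0 → A¹¹ →^α A¹¹ ⊗_{A²} A¹¹ →^μ A¹¹ → 0 is exact, where α(a) = a·(x_k − x_{k−1}) ⊗ 1 − a ⊗ (x_k − x_{k−1}) and μ(a ⊗ b) = ab; both maps are left A¹¹-linear and both are right A²-linear, μ is surjective, α is injective, and the image of α equals the kernel of μ. -/
/-!
STATEMENT 12: The sequence `0 → A¹¹ →^α A¹¹ ⊗_{A²} A¹¹ →^μ A¹¹ → 0` is exact, where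
`α(a) = a(x_k − x_{k−1}) ⊗ 1 − a ⊗ (x_k − x_{k−1})` and `μ(a ⊗ b) = ab`; both maps are
left `A¹¹`-linear and right `A²`-linear, `μ` is surjective, `α` is injective, and
`im α = ker μ`.

Setup: `k̲¹¹ = (k_1,…,k_{l−2},1,1)`; the `x`-variables are indexed by
`(Σ i : Fin m, Fin (ks i)) ⊕ Fin 2` (`m = l−2` blocks and the two final singleton
strands `x_{k−1} = inr 0`, `x_k = inr 1`); the ambient ring is
`ℚ[T_1,…,T_N, x's]`.  `A¹¹` is the subalgebra of polynomials symmetric in the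
`T`-variables and invariant under block permutations; `A² ⊆ A¹¹` consists of those
additionally symmetric in `x_{k−1}, x_k`.
-/

open MvPolynomial TensorProduct

set_option synthInstance.maxHeartbeats 1000000
set_option maxHeartbeats 1600000

noncomputable section
namespace Stab

variable (N m : ℕ) (ks : Fin m → ℕ)

/-- The index type of the `x`-variables. -/
abbrev XIdx := ((i : Fin m) × Fin (ks i)) ⊕ Fin 2

/-- The ambient ring `ℚ[T_1,…,T_N, x's]`. -/
abbrev Amb := MvPolynomial (Fin N ⊕ XIdx m ks) ℚ

/-- The action of a permutation of `{1,…,N}` on the `T`-variables. -/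
def actT (σ : Equiv.Perm (Fin N)) : Amb N m ks →ₐ[ℚ] Amb N m ks :=
  rename (Sum.map (⇑σ) id)

/-- The action of a block permutation on the first `l−2` blocks of `x`-variables. -/
def actB (τ : (i : Fin m) → Equiv.Perm (Fin (ks i))) : Amb N m ks →ₐ[ℚ] Amb N m ks :=
  rename (Sum.map id (Sum.map (⇑(Equiv.sigmaCongrRight τ)) id))

/-- The action of a permutation of the two last strands `x_{k−1}, x_k`. -/
def actS (ρ : Equiv.Perm (Fin 2)) : Amb N m ks →ₐ[ℚ] Amb N m ks :=
  rename (Sum.map id (Sum.map id (⇑ρ)))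

/-- `A¹¹ = R_N[x]^{𝔖_{k̲¹¹}}`. -/
def A11 : Subalgebra ℚ (Amb N m ks) :=
  (⨅ σ : Equiv.Perm (Fin N), AlgHom.equalizer (actT N m ks σ) (AlgHom.id ℚ _)) ⊓
    ⨅ τ : (i : Fin m) → Equiv.Perm (Fin (ks i)),
      AlgHom.equalizer (actB N m ks τ) (AlgHom.id ℚ _)

/-- `A² = R_N[x]^{𝔖_{k̲²}}`, where the two last strands are merged. -/
def A2 : Subalgebra ℚ (Amb N m ks) :=
  A11 N m ks ⊓ ⨅ ρ : Equiv.Perm (Fin 2), AlgHom.equalizer (actS N m ks ρ) (AlgHom.id ℚ _)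

lemma A2_le_A11 : A2 N m ks ≤ A11 N m ks := inf_le_left

instance : Algebra (A2 N m ks) (A11 N m ks) :=
  (Subalgebra.inclusion (A2_le_A11 N m ks)).toRingHom.toAlgebra

/-- The element `x_k − x_{k−1}` of `A¹¹`. -/
def wel : A11 N m ks :=
  ⟨X (Sum.inr (Sum.inr 1)) - X (Sum.inr (Sum.inr 0)), by
    rw [A11, Algebra.mem_inf]
    constructor
    · rw [Algebra.mem_iInf]
      intro σ
      rw [AlgHom.mem_equalizer]
      show (rename _ : Amb N m ks →ₐ[ℚ] _) _ = _
      rw [map_sub, rename_X, rename_X]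
      rfl
    · rw [Algebra.mem_iInf]
      intro τ
      rw [AlgHom.mem_equalizer]
      show (rename _ : Amb N m ks →ₐ[ℚ] _) _ = _
      rw [map_sub, rename_X, rename_X]
      rfl⟩

/-- The map `α : a ↦ a(x_k − x_{k−1}) ⊗ 1 − a ⊗ (x_k − x_{k−1})`. -/
def alphaMap : A11 N m ks →ₗ[A2 N m ks] (A11 N m ks ⊗[A2 N m ks] A11 N m ks) where
  toFun a := (a * wel N m ks) ⊗ₜ[A2 N m ks] (1 : A11 N m ks) -
    a ⊗ₜ[A2 N m ks] wel N m ks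
  map_add' a b := by
    simp only [add_mul, TensorProduct.add_tmul]
    abel
  map_smul' r a := by
    simp only [smul_mul_assoc, TensorProduct.smul_tmul', RingHom.id_apply, smul_sub]

/-- The multiplication map `μ : A¹¹ ⊗_{A²} A¹¹ → A¹¹`. -/
def muMap : (A11 N m ks ⊗[A2 N m ks] A11 N m ks) →ₗ[A2 N m ks] A11 N m ks :=
  LinearMap.mul' (A2 N m ks) (A11 N m ks)


/-! ### Auxiliary development -/

/-- distinguished indices -/
def idx0 : Fin N ⊕ XIdx m ks := Sum.inr (Sum.inr 0)
def idx1 : Fin N ⊕ XIdx m ks := Sum.inr (Sum.inr 1)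

/-- `x_k - x_{k-1}` in the ambient ring. -/
def wv : Amb N m ks := X (idx1 N m ks) - X (idx0 N m ks)

lemma wel_val : (wel N m ks : Amb N m ks) = wv N m ks := rfl

/-- the swap of the two last variables -/
def sw : Amb N m ks →ₐ[ℚ] Amb N m ks := actS N m ks (Equiv.swap 0 1)

variable {N m ks}

lemma mem_A11_iff {x : Amb N m ks} :
    x ∈ A11 N m ks ↔ (∀ σ, actT N m ks σ x = x) ∧ (∀ τ, actB N m ks τ x = x) := by
  simp [A11, Algebra.mem_inf, Algebra.mem_iInf, AlgHom.mem_equalizer]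

lemma actS_one (x : Amb N m ks) : actS N m ks 1 x = x := by
  rw [actS]
  have : (Sum.map id (Sum.map id ⇑(1 : Equiv.Perm (Fin 2))) :
      Fin N ⊕ XIdx m ks → Fin N ⊕ XIdx m ks) = id := by
    funext i; rcases i with i | j | r <;> rfl
  rw [this, rename_id, AlgHom.id_apply]

lemma perm_two (ρ : Equiv.Perm (Fin 2)) : ρ = 1 ∨ ρ = Equiv.swap 0 1 := by
  revert ρ; decide

lemma mem_A2_iff {x : Amb N m ks} :
    x ∈ A2 N m ks ↔ x ∈ A11 N m ks ∧ sw N m ks x = x := by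
  rw [A2, Algebra.mem_inf, Algebra.mem_iInf]
  simp only [AlgHom.mem_equalizer, AlgHom.id_apply]
  constructor
  · exact fun h => ⟨h.1, h.2 (Equiv.swap 0 1)⟩
  · rintro ⟨h1, h2⟩
    refine ⟨h1, fun ρ => ?_⟩
    rcases perm_two ρ with rfl | rfl
    · exact actS_one x
    · exact h2

lemma actT_sw (σ : Equiv.Perm (Fin N)) (x : Amb N m ks) :
    actT N m ks σ (sw N m ks x) = sw N m ks (actT N m ks σ x) := by
  show (rename _) ((rename _) x) = (rename _) ((rename _) x)
  rw [rename_rename, rename_rename]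
  have : ∀ f g : (Fin N ⊕ XIdx m ks) → (Fin N ⊕ XIdx m ks), f = g →
      rename f x = rename g x := fun f g h => by rw [h]
  apply this
  funext i; rcases i with i | j | r <;> rfl

lemma actB_sw (τ : (i : Fin m) → Equiv.Perm (Fin (ks i))) (x : Amb N m ks) :
    actB N m ks τ (sw N m ks x) = sw N m ks (actB N m ks τ x) := by
  show (rename _) ((rename _) x) = (rename _) ((rename _) x)
  rw [rename_rename, rename_rename]
  have : ∀ f g : (Fin N ⊕ XIdx m ks) → (Fin N ⊕ XIdx m ks), f = g →
      rename f x = rename g x := fun f g h => by rw [h]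
  apply this
  funext i; rcases i with i | j | r <;> rfl

lemma sw_sw (x : Amb N m ks) : sw N m ks (sw N m ks x) = x := by
  show (rename _) ((rename _) x) = x
  rw [rename_rename]
  have : ((Sum.map id (Sum.map id ⇑(Equiv.swap (0 : Fin 2) 1))) ∘
      (Sum.map id (Sum.map id ⇑(Equiv.swap (0 : Fin 2) 1))) :
      Fin N ⊕ XIdx m ks → Fin N ⊕ XIdx m ks) = id := by
    funext i; rcases i with i | j | r
    · rfl
    · rfl
    · simp [Equiv.swap_apply_self]
  rw [this, rename_id, AlgHom.id_apply]

lemma sw_mem_A11 {x : Amb N m ks} (hx : x ∈ A11 N m ks) : sw N m ks x ∈ A11 N m ks := by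
  rw [mem_A11_iff] at hx ⊢
  exact ⟨fun σ => by rw [actT_sw, hx.1], fun τ => by rw [actB_sw, hx.2]⟩

lemma actT_wv (σ : Equiv.Perm (Fin N)) : actT N m ks σ (wv N m ks) = wv N m ks := by
  rw [wv, actT, map_sub, rename_X, rename_X]; rfl

lemma actB_wv (τ : (i : Fin m) → Equiv.Perm (Fin (ks i))) :
    actB N m ks τ (wv N m ks) = wv N m ks := by
  rw [wv, actB, map_sub, rename_X, rename_X]; rfl

lemma sw_wv : sw N m ks (wv N m ks) = - wv N m ks := by
  rw [wv, sw, actS, map_sub, rename_X, rename_X, idx0, idx1]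
  simp only [Sum.map_inr, Sum.map_inl, id_eq]
  rw [show (Equiv.swap (0 : Fin 2) 1) 1 = 0 from Equiv.swap_apply_right 0 1,
    show (Equiv.swap (0 : Fin 2) 1) 0 = 1 from Equiv.swap_apply_left 0 1]
  ring

lemma wv_ne_zero : wv N m ks ≠ 0 := by
  rw [wv, sub_ne_zero]
  intro h
  have := MvPolynomial.X_injective h
  simp [idx1, idx0] at this

/-- an antisymmetric polynomial is divisible by `wv` -/
lemma antisym_dvd (g : Amb N m ks) (hg : sw N m ks g = -g) :
    ∃ b : Amb N m ks, g = b * wv N m ks := by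
  classical
  set i0 : Fin N ⊕ XIdx m ks := idx0 N m ks with hi0
  set i1 : Fin N ⊕ XIdx m ks := idx1 N m ks with hi1
  set φ : Amb N m ks →ₐ[ℚ] Amb N m ks :=
    aeval (fun j => if j = i1 then X i0 else X j) with hφ
  have hφsw : φ.comp (sw N m ks) = φ := by
    apply MvPolynomial.algHom_ext
    intro j
    rw [AlgHom.comp_apply, sw, actS, rename_X, hφ, aeval_X, aeval_X]
    rcases j with j | j | r
    · rfl
    · rfl
    · fin_cases r <;>
        simp [hi0, hi1, idx0, idx1, Equiv.swap_apply_left, Equiv.swap_apply_right]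
  have hφg : φ g = 0 := by
    have h1 : φ g = - φ g := by
      conv_lhs => rw [← AlgHom.congr_fun hφsw g]
      rw [AlgHom.comp_apply, hg, map_neg]
    have h2 : (2 : ℚ) • φ g = 0 := by
      rw [two_smul]; nth_rewrite 1 [h1]; exact neg_add_cancel _
    rcases smul_eq_zero.mp h2 with h | h
    · norm_num at h
    · exact h
  set e : Amb N m ks →ₐ[ℚ] Polynomial (Amb N m ks) :=
    aeval (fun j => if j = i1 then Polynomial.X else Polynomial.C (X j)) with he
  have heval : (Polynomial.evalRingHom (X i0 : Amb N m ks)).comp e.toRingHom = φ.toRingHom := by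
    apply MvPolynomial.ringHom_ext
    · intro q
      simp [he, hφ]
    · intro j
      simp only [RingHom.coe_comp, Function.comp_apply, AlgHom.toRingHom_eq_coe,
        AlgHom.coe_toRingHom, he, hφ, aeval_X, Polynomial.coe_evalRingHom]
      split <;> simp
  have hroot : (Polynomial.X - Polynomial.C (X i0)) ∣ e g := by
    rw [Polynomial.dvd_iff_isRoot, Polynomial.IsRoot]
    have := RingHom.congr_fun heval g
    simpa using this.trans hφg
  obtain ⟨h', hh⟩ := hroot
  have hid : (Polynomial.evalRingHom (X i1 : Amb N m ks)).comp e.toRingHom =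
      RingHom.id (Amb N m ks) := by
    apply MvPolynomial.ringHom_ext
    · intro q
      simp [he]
    · intro j
      simp only [RingHom.coe_comp, Function.comp_apply, AlgHom.toRingHom_eq_coe,
        AlgHom.coe_toRingHom, he, aeval_X, Polynomial.coe_evalRingHom, RingHom.id_apply]
      split
      · rename_i hj; rw [hj, Polynomial.eval_X]
      · rw [Polynomial.eval_C]
  refine ⟨Polynomial.eval (X i1) h', ?_⟩
  have hgid : g = Polynomial.eval (X i1) (e g) := by
    have := RingHom.congr_fun hid g
    simpa using this.symm
  rw [hgid, hh, Polynomial.eval_mul, Polynomial.eval_sub, Polynomial.eval_X, Polynomial.eval_C,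
    wv, hi0, hi1]
  ring

/-- decomposition of an element of `A11` -/
lemma exists_decomp {a : Amb N m ks} (ha : a ∈ A11 N m ks) :
    ∃ p q : Amb N m ks, p ∈ A2 N m ks ∧ q ∈ A2 N m ks ∧ a = p + q * wv N m ks := by
  obtain ⟨haT, haB⟩ := mem_A11_iff.mp ha
  set p : Amb N m ks := (1/2 : ℚ) • (a + sw N m ks a) with hp
  set g : Amb N m ks := (1/2 : ℚ) • (a - sw N m ks a) with hgdef
  have hag : a = p + g := by
    rw [hp, hgdef, ← smul_add,
      show (a + sw N m ks a) + (a - sw N m ks a) = (2 : ℚ) • a by rw [two_smul]; abel,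
      smul_smul]
    norm_num
  -- invariance facts
  have hTsa : ∀ σ, actT N m ks σ (sw N m ks a) = sw N m ks a :=
    fun σ => by rw [actT_sw, haT]
  have hBsa : ∀ τ, actB N m ks τ (sw N m ks a) = sw N m ks a :=
    fun τ => by rw [actB_sw, haB]
  have hTg : ∀ σ, actT N m ks σ g = g := fun σ => by
    rw [hgdef, map_smul, map_sub, haT, hTsa]
  have hBg : ∀ τ, actB N m ks τ g = g := fun τ => by
    rw [hgdef, map_smul, map_sub, haB, hBsa]
  have hswg : sw N m ks g = -g := by
    rw [hgdef, map_smul, map_sub, sw_sw, ← smul_neg, neg_sub]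
  obtain ⟨b, hb⟩ := antisym_dvd g hswg
  have cancel : ∀ x y : Amb N m ks, x * wv N m ks = y * wv N m ks → x = y := by
    intro x y h
    exact mul_right_cancel₀ wv_ne_zero h
  have hTb : ∀ σ, actT N m ks σ b = b := fun σ => by
    apply cancel
    have := hTg σ
    rw [hb, map_mul, actT_wv] at this
    exact this
  have hBb : ∀ τ, actB N m ks τ b = b := fun τ => by
    apply cancel
    have := hBg τ
    rw [hb, map_mul, actB_wv] at this
    exact this
  have hswb : sw N m ks b = b := by
    apply cancel
    have := hswg
    rw [hb, map_mul, sw_wv, mul_neg, neg_inj] at this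
    exact this
  have hswp : sw N m ks p = p := by
    rw [hp, map_smul, map_add, sw_sw, add_comm]
  have hpA11 : p ∈ A11 N m ks := mem_A11_iff.mpr
    ⟨fun σ => by rw [hp, map_smul, map_add, haT, hTsa],
     fun τ => by rw [hp, map_smul, map_add, haB, hBsa]⟩
  refine ⟨p, b, mem_A2_iff.mpr ⟨hpA11, hswp⟩,
    mem_A2_iff.mpr ⟨mem_A11_iff.mpr ⟨hTb, hBb⟩, hswb⟩, ?_⟩
  rw [← hb, hag]

lemma decomp_unique {p q : Amb N m ks} (hp : p ∈ A2 N m ks) (hq : q ∈ A2 N m ks)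
    (h : p + q * wv N m ks = 0) : p = 0 ∧ q = 0 := by
  obtain ⟨-, hswp⟩ := mem_A2_iff.mp hp
  obtain ⟨-, hswq⟩ := mem_A2_iff.mp hq
  have h2 : p - q * wv N m ks = 0 := by
    have := congrArg (sw N m ks) h
    rw [map_add, map_mul, hswp, hswq, sw_wv, map_zero, mul_neg, ← sub_eq_add_neg] at this
    exact this
  have hp0 : p = 0 := by
    have hpp : p + p = 0 := by linear_combination h + h2
    exact add_self_eq_zero.mp hpp
  refine ⟨hp0, ?_⟩
  rw [hp0, zero_add] at h
  rcases mul_eq_zero.mp h with h | h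
  · exact h
  · exact absurd h wv_ne_zero

variable (N m ks)

lemma smul_val (r : A2 N m ks) (x : A11 N m ks) :
    ((r • x : A11 N m ks) : Amb N m ks) = (r : Amb N m ks) * (x : Amb N m ks) := rfl

variable {N m ks}

lemma exists_pq (a : A11 N m ks) :
    ∃ p q : A2 N m ks, a = p • (1 : A11 N m ks) + q • wel N m ks := by
  obtain ⟨p, q, hp, hq, h⟩ := exists_decomp a.2
  refine ⟨⟨p, hp⟩, ⟨q, hq⟩, Subtype.ext ?_⟩
  rw [AddMemClass.coe_add, smul_val, smul_val, wel_val, OneMemClass.coe_one, mul_one]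
  exact h

lemma comb11_zero (p q : A2 N m ks) (h : p • (1 : A11 N m ks) + q • wel N m ks = 0) :
    p = 0 ∧ q = 0 := by
  have hv : (p : Amb N m ks) + (q : Amb N m ks) * wv N m ks = 0 := by
    have hc := congrArg Subtype.val h
    rw [AddMemClass.coe_add, smul_val, smul_val, wel_val, OneMemClass.coe_one, mul_one] at hc
    exact hc
  obtain ⟨h1, h2⟩ := decomp_unique p.2 q.2 hv
  exact ⟨Subtype.ext h1, Subtype.ext h2⟩

variable (N m ks)

/-- the basis `1, w` of `A11` over `A2` -/
def bB : Module.Basis (Fin 2) (A2 N m ks) (A11 N m ks) := by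
  refine Module.Basis.mk (v := ![1, wel N m ks]) ?_ ?_
  · rw [Fintype.linearIndependent_iff]
    intro c hc
    rw [Fin.sum_univ_two] at hc
    simp only [Matrix.cons_val_zero, Matrix.cons_val_one, Matrix.head_cons] at hc
    have hz := comb11_zero _ _ hc
    intro i; fin_cases i
    · exact hz.1
    · exact hz.2
  · rintro a -
    obtain ⟨p, q, h⟩ := exists_pq a
    rw [h]
    refine add_mem (Submodule.smul_mem _ _ (Submodule.subset_span ⟨0, rfl⟩))
      (Submodule.smul_mem _ _ (Submodule.subset_span ⟨1, rfl⟩))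

lemma bB_zero : bB N m ks 0 = 1 := by rw [bB, Module.Basis.mk_apply]; rfl

lemma bB_one : bB N m ks 1 = wel N m ks := by rw [bB, Module.Basis.mk_apply]; rfl

/-- `w² ∈ A2` -/
def dd : A2 N m ks := ⟨wv N m ks ^ 2, by
  rw [mem_A2_iff]
  refine ⟨mem_A11_iff.mpr ⟨fun σ => by rw [map_pow, actT_wv],
    fun τ => by rw [map_pow, actB_wv]⟩, by rw [map_pow, sw_wv]; ring⟩⟩

lemma wel_mul_wel :
    wel N m ks * wel N m ks = dd N m ks • (1 : A11 N m ks) := by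
  apply Subtype.ext
  rw [MulMemClass.coe_mul, smul_val, OneMemClass.coe_one, mul_one, wel_val]
  show _ = (dd N m ks : Amb N m ks)
  rw [dd]
  ring

/-- tensor basis of `A11 ⊗[A2] A11` -/
def bT : Module.Basis (Fin 2 × Fin 2) (A2 N m ks) (A11 N m ks ⊗[A2 N m ks] A11 N m ks) :=
  (bB N m ks).tensorProduct (bB N m ks)

lemma bT_apply (i j : Fin 2) :
    bT N m ks (i, j) = bB N m ks i ⊗ₜ[A2 N m ks] bB N m ks j :=
  Module.Basis.tensorProduct_apply _ _ _ _

lemma sum_four (c : Fin 2 × Fin 2 → A2 N m ks) :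
    ∑ i : Fin 2 × Fin 2, c i • bT N m ks i
      = c (0,0) • bT N m ks (0,0) + c (0,1) • bT N m ks (0,1)
        + c (1,0) • bT N m ks (1,0) + c (1,1) • bT N m ks (1,1) := by
  rw [Fintype.sum_prod_type, Fin.sum_univ_two, Fin.sum_univ_two, Fin.sum_univ_two]
  abel

lemma alpha_comb (p q : A2 N m ks) :
    alphaMap N m ks (p • (1 : A11 N m ks) + q • wel N m ks)
      = (q * dd N m ks) • bT N m ks (0,0) + (-p) • bT N m ks (0,1)
        + p • bT N m ks (1,0) + (-q) • bT N m ks (1,1) := by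
  have hmul : (p • (1 : A11 N m ks) + q • wel N m ks) * wel N m ks
      = (q * dd N m ks) • (1 : A11 N m ks) + p • wel N m ks := by
    rw [add_mul, smul_mul_assoc, smul_mul_assoc, one_mul, wel_mul_wel, smul_smul, add_comm]
  show (_ * wel N m ks) ⊗ₜ[A2 N m ks] (1 : A11 N m ks)
      - _ ⊗ₜ[A2 N m ks] wel N m ks = _
  rw [hmul, bT_apply, bT_apply, bT_apply, bT_apply, bB_zero, bB_one]
  rw [add_tmul, add_tmul, ← TensorProduct.smul_tmul', ← TensorProduct.smul_tmul',
    ← TensorProduct.smul_tmul', ← TensorProduct.smul_tmul']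
  have e1 : ∀ x : A11 N m ks ⊗[A2 N m ks] A11 N m ks, (-p) • x = -(p • x) := fun x => neg_smul p x
  have e2 : ∀ x : A11 N m ks ⊗[A2 N m ks] A11 N m ks, (-q) • x = -(q • x) := fun x => neg_smul q x
  rw [e1, e2]
  abel

lemma tensor_comb_zero {c00 c01 c10 c11 : A2 N m ks}
    (h : c00 • bT N m ks (0,0) + c01 • bT N m ks (0,1) + c10 • bT N m ks (1,0)
      + c11 • bT N m ks (1,1) = 0) :
    c00 = 0 ∧ c01 = 0 ∧ c10 = 0 ∧ c11 = 0 := by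
  have hli : ∀ g : Fin 2 × Fin 2 → A2 N m ks, ∑ i, g i • bT N m ks i = 0 → ∀ i, g i = 0 :=
    fun g hg i => by simpa [Finsupp.single_apply] using congrArg (fun t => (bT N m ks).repr t i) hg
  have hsum : (∑ x : Fin 2 × Fin 2,
      (fun x : Fin 2 × Fin 2 => ![![c00, c01], ![c10, c11]] x.1 x.2) x • bT N m ks x) = 0 := by
    rw [sum_four]
    simpa using h
  have key := hli _ hsum
  exact ⟨by simpa using key (0,0), by simpa using key (0,1),
    by simpa using key (1,0), by simpa using key (1,1)⟩

set_option maxHeartbeats 20000000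
theorem stabilization_sequence_exact (hN : 1 ≤ N) (hpos : ∀ i, 0 < ks i) :
    Function.Injective (alphaMap N m ks) ∧
    Function.Surjective (muMap N m ks) ∧
    LinearMap.range (alphaMap N m ks) = LinearMap.ker (muMap N m ks) ∧
    (∀ c a : A11 N m ks, alphaMap N m ks (c * a) = c • alphaMap N m ks a) ∧
    (∀ (c : A11 N m ks) (t : A11 N m ks ⊗[A2 N m ks] A11 N m ks),
      muMap N m ks (c • t) = c * muMap N m ks t) := by
  refine ⟨?_, ?_, ?_, ?_, ?_⟩
  · -- injectivity of alpha
    have hker : ∀ a, alphaMap N m ks a = 0 → a = 0 := by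
      intro a h0
      obtain ⟨p, q, ha⟩ := exists_pq a
      rw [ha, alpha_comb] at h0
      obtain ⟨h1, h2, h3, h4⟩ := tensor_comb_zero N m ks h0
      rw [ha, h3, neg_eq_zero.mp h4]
      simp
    intro a1 a2 h
    have h0 : alphaMap N m ks (a1 - a2) = 0 := by rw [map_sub, h, sub_self]
    exact sub_eq_zero.mp (hker _ h0)
  · -- surjectivity of mu
    intro a
    exact ⟨a ⊗ₜ[A2 N m ks] 1, by simp [muMap, LinearMap.mul'_apply]⟩
  · -- range alpha = ker mu
    apply le_antisymm
    · rintro t ⟨a, rfl⟩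
      rw [LinearMap.mem_ker]
      simp only [alphaMap, LinearMap.coe_mk, AddHom.coe_mk]
      rw [map_sub]
      simp [muMap, LinearMap.mul'_apply]
    · intro t ht
      rw [LinearMap.mem_ker] at ht
      set c := (bT N m ks).repr t with hc
      have hrep : c (0,0) • bT N m ks (0,0) + c (0,1) • bT N m ks (0,1)
          + c (1,0) • bT N m ks (1,0) + c (1,1) • bT N m ks (1,1) = t := by
        rw [← sum_four]; exact Module.Basis.sum_repr _ t
      have hmu : (c (0,0) + c (1,1) * dd N m ks) • (1 : A11 N m ks)
          + (c (0,1) + c (1,0)) • wel N m ks = 0 := by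
        rw [← ht, ← hrep, map_add, map_add, map_add, map_smul, map_smul, map_smul, map_smul]
        simp only [bT_apply, bB_zero, bB_one, muMap, LinearMap.mul'_apply, one_mul, mul_one,
          wel_mul_wel]
        rw [smul_smul, add_smul, add_smul, mul_comm (c (1,1)) (dd N m ks)]
        abel
      obtain ⟨h1, h2⟩ := comb11_zero _ _ hmu
      refine ⟨c (1,0) • (1 : A11 N m ks) + (-(c (1,1))) • wel N m ks, ?_⟩
      rw [alpha_comb]
      rw [show -c (1,1) * dd N m ks = c (0,0) by linear_combination -h1]
      rw [show -c (1,0) = c (0,1) by linear_combination -h2]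
      rw [neg_neg]
      exact hrep
  · -- left A11-linearity of alpha
    intro cc a
    simp only [alphaMap, LinearMap.coe_mk, AddHom.coe_mk]
    rw [smul_sub, TensorProduct.smul_tmul', TensorProduct.smul_tmul', smul_eq_mul,
      smul_eq_mul, mul_assoc]
  · -- left A11-linearity of mu
    intro cc t
    induction t using TensorProduct.induction_on with
    | zero => simp
    | tmul x y =>
      rw [TensorProduct.smul_tmul']
      simp only [muMap, LinearMap.mul'_apply, smul_eq_mul, mul_assoc]
    | add u v hu hv =>
      rw [smul_add, map_add, hu, hv, map_add, mul_add]

end Stab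
end
end
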